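/- arXiv:2503.22369 — 7 statements merged into one kernel-verified Lean document; each statement's English description precedes it below -/
import Mathlib

section
/- The two-sided step-down procedure run on a vector x ∈ ℝ^m selects Ŝ = S if and only if x ∈ 𝒳(S), where 𝒳(S) = ∪_{σ∈ℰ(S)} [ ( ∩_{s∈S} {x : |x_s| ≥ x̄( σ^{-1}({σ(s),…,|S|}) ∪ S^c )} ) ∩ ( ∩_{r∉S} {x : |x_r| < x̄(S^c)} ) ]. -/
open MeasureTheory ProbabilityTheory Filter

variable {m : ℕ}

/-- `l` enumerates all indices of `Fin m`, sorted in descending order of `key`. -/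
def SortedEnum (key : Fin m → ℝ) (l : List (Fin m)) : Prop :=
  l.Nodup ∧ (∀ i : Fin m, i ∈ l) ∧ l.Pairwise fun i j => key j ≤ key i

/-- One pass of a step-down testing algorithm along a (sorted) list: at each step,
if the current statistic is below the threshold of the set of not-yet-rejected
hypotheses, stop; otherwise reject it and continue. -/
noncomputable def stepDownRun (xbar : Finset (Fin m) → ℝ) (key : Fin m → ℝ) :
    List (Fin m) → Finset (Fin m)
  | [] => ∅
  | h :: t =>
      if key h < xbar (insert h t.toFinset) then ∅
      else insert h (stepDownRun xbar key t)

/-- The two-sided step-down procedure run on `x` returns exactly `S`. -/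
def SelectsTwoSided (xbar : Finset (Fin m) → ℝ) (x : Fin m → ℝ) (S : Finset (Fin m)) : Prop :=
  ∃ l : List (Fin m), SortedEnum (fun i => |x i|) l ∧ stepDownRun xbar (fun i => |x i|) l = S

/- ### Auxiliary lemmas -/

private lemma mem_take_idx {l : List (Fin m)} (hl : l.Nodup) {i : Fin m} {k : ℕ}
    (hi : i ∈ l) : i ∈ l.take k ↔ l.idxOf i < k := by
  constructor
  · intro h
    obtain ⟨p, hp, hpe⟩ := List.mem_take_iff_getElem.1 h
    have hidx := List.Nodup.idxOf_getElem hl p (lt_of_lt_of_le hp (min_le_right _ _))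
    rw [hpe] at hidx
    have := (Nat.lt_min.mp hp).1
    omega
  · intro h
    exact List.mem_take_iff_getElem.2
      ⟨l.idxOf i, Nat.lt_min.mpr ⟨h, List.idxOf_lt_length_iff.2 hi⟩, List.getElem_idxOf _⟩

private lemma mem_drop_idx {l : List (Fin m)} (hl : l.Nodup) {i : Fin m} {k : ℕ}
    (hi : i ∈ l) : i ∈ l.drop k ↔ k ≤ l.idxOf i := by
  have hsplit := List.take_append_drop k l
  have hl' := hl
  rw [← hsplit] at hl'
  obtain ⟨-, -, hdisj⟩ := List.nodup_append.1 hl'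
  have hmem : i ∈ l.take k ∨ i ∈ l.drop k := by
    conv at hi => rw [← hsplit]
    exact List.mem_append.1 hi
  constructor
  · intro h
    by_contra hlt
    exact hdisj _ ((mem_take_idx hl hi).2 (by omega)) _ h rfl
  · intro h
    rcases hmem with h' | h'
    · exact absurd ((mem_take_idx hl hi).1 h') (by omega)
    · exact h'

private lemma sorted_key_le {key : Fin m → ℝ} {l : List (Fin m)}
    (hs : l.Pairwise fun i j => key j ≤ key i) {i j : Fin m}
    (hi : i ∈ l) (hj : j ∈ l) (hij : l.idxOf i ≤ l.idxOf j) : key j ≤ key i := by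
  have h1 : l.idxOf i < l.length := List.idxOf_lt_length_iff.2 hi
  have h2 : l.idxOf j < l.length := List.idxOf_lt_length_iff.2 hj
  haveI : Std.Refl (fun i j : Fin m => key j ≤ key i) := ⟨fun a => le_refl _⟩
  have := hs.rel_get_of_le (a := ⟨l.idxOf i, h1⟩) (b := ⟨l.idxOf j, h2⟩) hij
  rwa [List.idxOf_get, List.idxOf_get] at this

private lemma run_eq_take (xbar : Finset (Fin m) → ℝ) (key : Fin m → ℝ) :
    ∀ (l : List (Fin m)) (n : ℕ), n ≤ l.length →
    (∀ j (hj : j < l.length), j < n → xbar (l.drop j).toFinset ≤ key l[j]) →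
    (∀ (h : n < l.length), key l[n] < xbar (l.drop n).toFinset) →
    stepDownRun xbar key l = (l.take n).toFinset
  | [], n, hn, _, _ => by
      simp only [List.length_nil, Nat.le_zero] at hn
      subst hn; simp [stepDownRun]
  | h :: t, 0, _, _, h2 => by
      have hh := h2 (by simp)
      simp only [List.getElem_cons_zero, List.drop_zero, List.toFinset_cons] at hh
      simp [stepDownRun, if_pos hh]
  | h :: t, n + 1, hn, h1, h2 => by
      have hh : ¬ key h < xbar (insert h t.toFinset) := by
        have := h1 0 (by simp) (Nat.succ_pos n)
        simp only [List.getElem_cons_zero, List.drop_zero, List.toFinset_cons] at this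
        exact not_lt.2 this
      have hrec : stepDownRun xbar key t = (t.take n).toFinset := by
        refine run_eq_take xbar key t n (by simpa using hn) ?_ ?_
        · intro j hj hjn
          have := h1 (j + 1) (by simpa using hj) (by omega)
          simpa using this
        · intro hlt
          have := h2 (by simpa using hlt)
          simpa using this
      rw [stepDownRun, if_neg hh, hrec]
      simp

private lemma run_exists (xbar : Finset (Fin m) → ℝ) (key : Fin m → ℝ) :
    ∀ (l : List (Fin m)), ∃ n, n ≤ l.length ∧
      stepDownRun xbar key l = (l.take n).toFinset ∧
      (∀ j (hj : j < l.length), j < n → xbar (l.drop j).toFinset ≤ key l[j]) ∧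
      (∀ (h : n < l.length), key l[n] < xbar (l.drop n).toFinset)
  | [] => ⟨0, by simp, by simp [stepDownRun], fun j hj hjn => by omega, fun h => by simp at h⟩
  | h :: t => by
      by_cases hh : key h < xbar (insert h t.toFinset)
      · refine ⟨0, by simp, by rw [stepDownRun, if_pos hh]; simp, fun j hj hjn => by omega, ?_⟩
        intro _
        simpa using hh
      · obtain ⟨n, hn, hrun, h1, h2⟩ := run_exists xbar key t
        refine ⟨n + 1, by simpa using hn, ?_, ?_, ?_⟩
        · rw [stepDownRun, if_neg hh, hrun]; simp
        · intro j hj hjn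
          match j with
          | 0 =>
            simpa only [List.getElem_cons_zero, List.drop_zero, List.toFinset_cons]
              using not_lt.1 hh
          | j + 1 =>
            have := h1 j (by simpa using hj) (by omega)
            simpa using this
        · intro hlt
          have := h2 (by simpa using hlt)
          simpa using this

/-- **Lemma 1 (geometry of two-sided step-down testing).** The two-sided
step-down procedure run on `x` selects `Ŝ = S` if and only if there is a
bijection `σ` from `S` onto `{1,…,|S|}` (here `Fin S.card`) such that
`|x_s| ≥ x̄(σ⁻¹({σ(s),…,|S|}) ∪ Sᶜ)` for all `s ∈ S` and `|x_r| < x̄(Sᶜ)` for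
all `r ∉ S`. -/
theorem stepdown_selection_geometry
    (hm : 0 < m)
    (xbar : Finset (Fin m) → ℝ) (hxpos : ∀ B, 0 < xbar B)
    (hxmono : ∀ B C : Finset (Fin m), B ⊆ C → xbar B ≤ xbar C)
    (x : Fin m → ℝ) (S : Finset (Fin m)) :
    SelectsTwoSided xbar x S ↔
      ∃ σ : {i // i ∈ S} ≃ Fin S.card,
        (∀ s : {i // i ∈ S},
          xbar (((S.attach.filter fun h => σ s ≤ σ h).image Subtype.val) ∪ Sᶜ)
            ≤ |x s.val|) ∧
        (∀ r, r ∉ S → |x r| < xbar Sᶜ) := by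
  classical
  constructor
  · rintro ⟨l, ⟨hnd, hall, hsort⟩, hrun⟩
    obtain ⟨n, hn, hreq, h1, h2⟩ := run_exists xbar (fun i => |x i|) l
    rw [hrun] at hreq
    have hcard : S.card = n := by
      rw [hreq, List.toFinset_card_of_nodup ((List.take_sublist n l).nodup hnd),
        List.length_take]
      omega
    have hmemS : ∀ i : Fin m, i ∈ S ↔ l.idxOf i < n := by
      intro i
      rw [hreq, List.mem_toFinset, mem_take_idx hnd (hall i)]
    have hidx : ∀ i : Fin m, l.idxOf i < l.length := fun i => List.idxOf_lt_length_iff.2 (hall i)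
    have hjlt : ∀ j : Fin S.card, (j : ℕ) < l.length :=
      fun j => lt_of_lt_of_le (by omega : (j : ℕ) < n) hn
    refine ⟨⟨fun s => ⟨l.idxOf s.val, by rw [hcard]; exact (hmemS s.val).1 s.2⟩,
      fun j => ⟨l[(j : ℕ)]'(hjlt j), (hmemS _).2 (by
        rw [List.Nodup.idxOf_getElem hnd _ (hjlt j)]; omega)⟩,
      fun s => Subtype.ext (List.getElem_idxOf (hidx s.val)),
      fun j => Fin.ext (List.Nodup.idxOf_getElem hnd _ (hjlt j))⟩, ?_, ?_⟩
    · intro s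
      have hjn : l.idxOf s.val < n := (hmemS s.val).1 s.2
      have hkey := h1 (l.idxOf s.val) (hidx s.val) hjn
      rw [List.getElem_idxOf (hidx s.val)] at hkey
      refine le_trans (hxmono _ _ ?_) hkey
      intro i hi
      rcases Finset.mem_union.1 hi with hi | hi
      · obtain ⟨h, hh, rfl⟩ := Finset.mem_image.1 hi
        have hle : l.idxOf s.val ≤ l.idxOf h.val := (Finset.mem_filter.1 hh).2
        rw [List.mem_toFinset, mem_drop_idx hnd (hall h.val)]
        exact hle
      · have hi' := Finset.mem_compl.1 hi
        rw [List.mem_toFinset, mem_drop_idx hnd (hall i)]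
        have : n ≤ l.idxOf i := not_lt.1 fun hlt => hi' ((hmemS i).2 hlt)
        omega
    · intro r hr
      have hrn : n ≤ l.idxOf r := not_lt.1 fun hlt => hr ((hmemS r).2 hlt)
      have hnlt : n < l.length := lt_of_le_of_lt hrn (hidx r)
      have hkey := h2 hnlt
      have hdropc : (l.drop n).toFinset = Sᶜ := by
        ext i
        rw [List.mem_toFinset, Finset.mem_compl, mem_drop_idx hnd (hall i), hmemS i]
        omega
      rw [hdropc] at hkey
      have hle : |x r| ≤ |x (l[n]'hnlt)| :=
        sorted_key_le hsort (List.getElem_mem hnlt) (hall r)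
          (by rw [List.Nodup.idxOf_getElem hnd _ hnlt]; exact hrn)
      exact lt_of_le_of_lt hle hkey
  · rintro ⟨σ, hσ1, hσ2⟩
    have hSlow : ∀ s ∈ S, xbar Sᶜ ≤ |x s| := fun s hs =>
      le_trans (hxmono _ _ Finset.subset_union_right) (hσ1 ⟨s, hs⟩)
    set le : Fin m → Fin m → Bool := fun i j => decide (|x j| ≤ |x i|) with hle_def
    set l := (List.finRange m).mergeSort le with hl_def
    have hperm : l.Perm (List.finRange m) := List.mergeSort_perm _ _
    have hnd : l.Nodup := hperm.nodup_iff.2 (List.nodup_finRange m)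
    have hall : ∀ i, i ∈ l := fun i => hperm.mem_iff.2 (List.mem_finRange i)
    have hsort : l.Pairwise fun i j => |x j| ≤ |x i| := by
      have hp := List.pairwise_mergeSort (le := le)
        (fun a b c hab hbc => by
          simp only [hle_def, decide_eq_true_eq] at *
          exact le_trans hbc hab)
        (fun a b => by
          simp only [hle_def, Bool.or_eq_true, decide_eq_true_eq]
          exact (le_total |x b| |x a|))
        (List.finRange m)
      refine hp.imp ?_
      intro a b h
      simpa [hle_def] using h
    have hlen : l.length = m := by rw [hperm.length_eq, List.length_finRange]
    have hn : S.card ≤ l.length := by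
      rw [hlen]
      simpa using S.card_le_univ
    have hAcard : (l.take S.card).toFinset.card = S.card := by
      rw [List.toFinset_card_of_nodup ((List.take_sublist _ l).nodup hnd), List.length_take]
      omega
    have htake : (l.take S.card).toFinset = S := by
      have hsub : S ⊆ (l.take S.card).toFinset := by
        by_contra hcon
        obtain ⟨s, hsS, hsA⟩ := Finset.not_subset.1 hcon
        have hsd : s ∈ l.drop S.card := by
          rw [mem_drop_idx hnd (hall s)]
          by_contra hlt
          exact hsA (List.mem_toFinset.2 ((mem_take_idx hnd (hall s)).2 (by omega)))
        have hns : ¬ (l.take S.card).toFinset ⊆ S := by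
          intro hsub2
          have heq := Finset.eq_of_subset_of_card_le hsub2 (by rw [hAcard])
          exact hsA (heq.symm ▸ hsS)
        obtain ⟨r, hrA, hrS⟩ := Finset.not_subset.1 hns
        have hrt : r ∈ l.take S.card := List.mem_toFinset.1 hrA
        have hkk : |x s| ≤ |x r| := hsort.rel_of_mem_take_of_mem_drop hrt hsd
        exact absurd (lt_of_le_of_lt hkk (hσ2 r hrS)) (not_lt.2 (hSlow s hsS))
      exact (Finset.eq_of_subset_of_card_le hsub (by rw [hAcard])).symm
    have hmain : stepDownRun xbar (fun i => |x i|) l = (l.take S.card).toFinset := by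
      refine run_eq_take xbar (fun i => |x i|) l S.card hn ?_ ?_
      · intro j hj hjn
        have hjmem : l[j] ∈ l.drop j :=
          (mem_drop_idx hnd (List.getElem_mem hj)).2 (by rw [List.Nodup.idxOf_getElem hnd j hj])
        have hjS : l[j] ∈ S := by
          rw [← htake]
          exact List.mem_toFinset.2 ((mem_take_idx hnd (List.getElem_mem hj)).2
            (by rw [List.Nodup.idxOf_getElem hnd j hj]; exact hjn))
        have hFne : (S.attach.filter (fun h => h.val ∈ l.drop j)).Nonempty :=
          ⟨⟨l[j], hjS⟩, Finset.mem_filter.2 ⟨Finset.mem_attach _ _, hjmem⟩⟩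
        obtain ⟨s₀, hs₀F, hs₀min⟩ :=
          Finset.exists_min_image (S.attach.filter (fun h => h.val ∈ l.drop j))
            (fun h => σ h) hFne
        have hs₀d : s₀.val ∈ l.drop j := (Finset.mem_filter.1 hs₀F).2
        have hsub : (l.drop j).toFinset ⊆
            ((S.attach.filter fun h => σ s₀ ≤ σ h).image Subtype.val) ∪ Sᶜ := by
          intro i hi
          rw [List.mem_toFinset] at hi
          by_cases hiS : i ∈ S
          · exact Finset.mem_union_left _ (Finset.mem_image.2
              ⟨⟨i, hiS⟩, Finset.mem_filter.2 ⟨Finset.mem_attach _ _,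
                hs₀min ⟨i, hiS⟩ (Finset.mem_filter.2 ⟨Finset.mem_attach _ _, hi⟩)⟩, rfl⟩)
          · exact Finset.mem_union_right _ (Finset.mem_compl.2 hiS)
        have hle1 : xbar (l.drop j).toFinset ≤ |x s₀.val| :=
          le_trans (hxmono _ _ hsub) (hσ1 s₀)
        have hle2 : |x s₀.val| ≤ |x (l[j]'hj)| :=
          sorted_key_le hsort (List.getElem_mem hj) (hall s₀.val)
            (by rw [List.Nodup.idxOf_getElem hnd j hj]
                exact (mem_drop_idx hnd (hall s₀.val)).1 hs₀d)
        exact le_trans hle1 hle2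
      · intro hlt
        obtain ⟨k, hk⟩ : ∃ k, k = S.card := ⟨S.card, rfl⟩
        have htake' : (l.take k).toFinset = S := by rw [hk]; exact htake
        have hmemiff : ∀ i : Fin m, i ∈ S ↔ l.idxOf i < k := by
          intro i
          rw [← htake', List.mem_toFinset, mem_take_idx hnd (hall i)]
        have hnotS : l[S.card] ∉ S := by
          intro hmem
          have hidx := (hmemiff _).1 hmem
          rw [List.Nodup.idxOf_getElem hnd _ hlt] at hidx
          omega
        have hdropc : (l.drop S.card).toFinset = Sᶜ := by
          ext i
          rw [List.mem_toFinset, Finset.mem_compl, mem_drop_idx hnd (hall i), hmemiff i]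
          omega
        rw [hdropc]
        exact hσ2 _ hnotS
    exact ⟨l, ⟨hnd, hall, hsort⟩, by rw [hmain, htake]⟩
end

section
/- Let x ∈ ℝ^m, let S ⊆ {1,…,m}, and let σ̃ ∈ ℰ(S) be a permutation that orders the selected statistics by decreasing magnitude, i.e. |x_{σ̃^{-1}(1)}| ≥ |x_{σ̃^{-1}(2)}| ≥ … ≥ |x_{σ̃^{-1}(|S|)}|. Then the two-sided step-down procedure run on x selects Ŝ = S if and only if both: (i) for every s ∈ S, |x_s| ≥ x̄( σ̃^{-1}({σ̃(s),…,|S|}) ∪ S^c ), and (ii) for every r ∉ S, |x_r| < x̄(S^c). In other words, in the union over all σ ∈ ℰ(S) characterizing the selection event it suffices to check the single sorting permutation σ̃. -/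
open MeasureTheory ProbabilityTheory Filter

variable {m : ℕ}

section Helpers

variable {xbar : Finset (Fin m) → ℝ} {key : Fin m → ℝ}

lemma stepDownRun_append : ∀ (l1 l2 : List (Fin m)),
    (∀ p h q, l1 = p ++ h :: q → ¬ key h < xbar (insert h ((q ++ l2).toFinset))) →
    stepDownRun xbar key (l1 ++ l2) = l1.toFinset ∪ stepDownRun xbar key l2
  | [], l2, _ => by simp
  | h :: t, l2, H => by
    have h1 := H [] h t rfl
    rw [List.cons_append, stepDownRun, if_neg (by simpa using h1),
        stepDownRun_append t l2 (fun p a q hq => H (h :: p) a q (by simp [hq])),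
        List.toFinset_cons, Finset.insert_union]

lemma stepDownRun_decomp : ∀ l : List (Fin m), ∃ l1 l2, l = l1 ++ l2 ∧
    stepDownRun xbar key l = l1.toFinset ∧
    (∀ p h q, l1 = p ++ h :: q → ¬ key h < xbar (insert h ((q ++ l2).toFinset))) ∧
    (∀ h t, l2 = h :: t → key h < xbar (insert h t.toFinset))
  | [] => ⟨[], [], by simp, by simp [stepDownRun], by simp, by simp⟩
  | h :: t => by
    by_cases hc : key h < xbar (insert h t.toFinset)
    · refine ⟨[], h :: t, by simp, ?_, by simp, ?_⟩
      · rw [stepDownRun, if_pos hc]; simp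
      · rintro a b hab
        injection hab with e1 e2
        subst e1; subst e2
        exact hc
    · obtain ⟨l1, l2, htl, hrun, hpass, hstop⟩ := stepDownRun_decomp t
      subst htl
      refine ⟨h :: l1, l2, rfl, ?_, ?_, hstop⟩
      · rw [stepDownRun, if_neg hc, hrun, List.toFinset_cons]
      · rintro p a q hq
        rcases p with _ | ⟨c, p'⟩
        · rw [List.nil_append] at hq
          injection hq with e1 e2
          subst e1; subst e2
          exact hc
        · rw [List.cons_append] at hq
          injection hq with e1 e2
          exact hpass p' a q e2

lemma exists_first {P : Fin m → Prop} [DecidablePred P] :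
    ∀ (l : List (Fin m)) (a : Fin m), a ∈ l → P a →
    ∃ p h q, l = p ++ h :: q ∧ P h ∧ ∀ b ∈ p, ¬ P b
  | [], a, ha, _ => absurd ha List.not_mem_nil
  | c :: t, a, ha, hPa => by
    by_cases hc : P c
    · exact ⟨[], c, t, rfl, hc, by simp⟩
    · have hat : a ∈ t := by
        rcases List.mem_cons.1 ha with rfl | h
        · exact absurd hPa hc
        · exact h
      obtain ⟨p, h, q, rfl, hPh, hfst⟩ := exists_first t a hat hPa
      exact ⟨c :: p, h, q, rfl, hPh, by
        intro b hb
        rcases List.mem_cons.1 hb with rfl | hb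
        · exact hc
        · exact hfst b hb⟩

end Helpers

/-- **Single sorting permutation suffices.** Let `σ` be a bijection from `S`
onto `{1,…,|S|}` (here `Fin S.card`) ordering the selected statistics by
decreasing magnitude. Then the two-sided step-down procedure run on `x`
selects `Ŝ = S` if and only if `|x_s| ≥ x̄(σ⁻¹({σ(s),…,|S|}) ∪ Sᶜ)` for all
`s ∈ S` and `|x_r| < x̄(Sᶜ)` for all `r ∉ S`; i.e. in the union over all
permutations it suffices to check the sorting permutation. -/
theorem stepdown_selection_sorting_permutation
    (hm : 0 < m)
    (xbar : Finset (Fin m) → ℝ) (hxpos : ∀ B, 0 < xbar B)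
    (hxmono : ∀ B C : Finset (Fin m), B ⊆ C → xbar B ≤ xbar C)
    (x : Fin m → ℝ) (S : Finset (Fin m))
    (σ : {i // i ∈ S} ≃ Fin S.card)
    (hsort : ∀ a b : {i // i ∈ S}, σ a ≤ σ b → |x b.val| ≤ |x a.val|) :
    SelectsTwoSided xbar x S ↔
      ((∀ s : {i // i ∈ S},
          xbar (((S.attach.filter fun h => σ s ≤ σ h).image Subtype.val) ∪ Sᶜ)
            ≤ |x s.val|) ∧
        (∀ r, r ∉ S → |x r| < xbar Sᶜ)) := by
  have memA : ∀ (s : {i // i ∈ S}) (a : Fin m),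
      a ∈ ((S.attach.filter fun h => σ s ≤ σ h).image Subtype.val) ↔
        ∃ ha : a ∈ S, σ s ≤ σ ⟨a, ha⟩ := by
    intro s a
    constructor
    · intro h
      obtain ⟨b, hb, rfl⟩ := Finset.mem_image.1 h
      obtain ⟨-, hσ⟩ := Finset.mem_filter.1 hb
      exact ⟨b.2, hσ⟩
    · rintro ⟨ha, hσ⟩
      exact Finset.mem_image.2 ⟨⟨a, ha⟩, Finset.mem_filter.2 ⟨Finset.mem_attach _ _, hσ⟩, rfl⟩
  constructor
  · rintro ⟨l, ⟨hnd, hall, hsorted⟩, hrun⟩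
    obtain ⟨l1, l2, rfl, hrun1, hpass, hstop⟩ :=
      stepDownRun_decomp (xbar := xbar) (key := fun i => |x i|) l
    rw [hrun1] at hrun
    have hnd' := List.nodup_append.1 hnd
    have hl2 : l2.toFinset = Sᶜ := by
      ext i
      rw [List.mem_toFinset, Finset.mem_compl, ← hrun, List.mem_toFinset]
      constructor
      · intro hi hi1
        exact hnd'.2.2 i hi1 i hi rfl
      · intro hi
        rcases List.mem_append.1 (hall i) with h | h
        · exact absurd h hi
        · exact h
    constructor
    · intro s
      have hsA : s.val ∈ (S.attach.filter fun h => σ s ≤ σ h).image Subtype.val :=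
        (memA s s.val).2 ⟨s.2, le_refl _⟩
      have hsl1 : s.val ∈ l1 := by rw [← List.mem_toFinset, hrun]; exact s.2
      obtain ⟨p, h₀, q, hl1, hPh, hfst⟩ := exists_first
        (P := fun a => a ∈ (S.attach.filter fun h => σ s ≤ σ h).image Subtype.val)
        l1 s.val hsl1 hsA
      obtain ⟨h₀S, hσ⟩ := (memA s h₀).1 hPh
      have hkh : |x h₀| ≤ |x s.val| := hsort s ⟨h₀, h₀S⟩ hσ
      have hsub : ((S.attach.filter fun h => σ s ≤ σ h).image Subtype.val) ∪ Sᶜ ⊆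
          insert h₀ ((q ++ l2).toFinset) := by
        intro a ha
        rcases Finset.mem_union.1 ha with ha | ha
        · obtain ⟨haS, -⟩ := (memA s a).1 ha
          have hal1 : a ∈ l1 := by rw [← List.mem_toFinset, hrun]; exact haS
          rw [hl1] at hal1
          rcases List.mem_append.1 hal1 with hp | hq
          · exact absurd ha (hfst a hp)
          · rcases List.mem_cons.1 hq with rfl | hq
            · exact Finset.mem_insert_self _ _
            · exact Finset.mem_insert_of_mem (by
                rw [List.toFinset_append, Finset.mem_union]
                exact Or.inl (List.mem_toFinset.2 hq))
        · refine Finset.mem_insert_of_mem ?_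
          rw [List.toFinset_append, Finset.mem_union]
          exact Or.inr (hl2 ▸ ha)
      have hp' := hpass p h₀ q hl1
      push_neg at hp'
      exact le_trans (hxmono _ _ hsub) (le_trans hp' hkh)
    · intro r hr
      have hrl2 : r ∈ l2 := by
        rw [← List.mem_toFinset, hl2]; exact Finset.mem_compl.2 hr
      rcases l2 with _ | ⟨h, t⟩
      · simp at hrl2
      · have hstop' := hstop h t rfl
        have hins : insert h t.toFinset = Sᶜ := by rw [← List.toFinset_cons, hl2]
        rw [hins] at hstop'
        have hrk : |x r| ≤ |x h| := by
          rcases List.mem_cons.1 hrl2 with rfl | hrt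
          · exact le_refl _
          · exact (List.pairwise_cons.1 (List.pairwise_append.1 hsorted).2.1).1 r hrt
        exact lt_of_le_of_lt hrk hstop'
  · rintro ⟨h1, h2⟩
    classical
    set f : Fin S.card → Fin m := fun j => (σ.symm j).val with hf
    set l1 : List (Fin m) := (List.finRange S.card).map f with hl1def
    set le : Fin m → Fin m → Bool := fun i j => decide (|x j| ≤ |x i|) with hle
    set l2 : List (Fin m) := Sᶜ.toList.mergeSort le with hl2def
    have hperm : l2.Perm Sᶜ.toList := List.mergeSort_perm _ _
    have hl2fin : l2.toFinset = Sᶜ := by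
      rw [List.toFinset_eq_of_perm _ _ hperm, Finset.toList_toFinset]
    have hl2mem : ∀ a, a ∈ l2 ↔ a ∈ Sᶜ := fun a => by
      rw [← hl2fin, List.mem_toFinset]
    have hl1mem : ∀ a, a ∈ l1 ↔ a ∈ S := by
      intro a
      constructor
      · intro h
        obtain ⟨j, -, rfl⟩ := List.mem_map.1 h
        exact (σ.symm j).2
      · intro h
        exact List.mem_map.2 ⟨σ ⟨a, h⟩, List.mem_finRange _, by simp [hf]⟩
    have hfinj : Function.Injective f := fun a b hab =>
      σ.symm.injective (Subtype.coe_injective hab)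
    have hl1nd : l1.Nodup := List.Nodup.map hfinj (List.nodup_finRange _)
    have hl2nd : l2.Nodup := hperm.symm.nodup (Sᶜ.nodup_toList)
    have hl1fin : l1.toFinset = S := by
      ext a; rw [List.mem_toFinset, hl1mem]
    refine ⟨l1 ++ l2, ⟨?_, ?_, ?_⟩, ?_⟩
    · rw [List.nodup_append]
      exact ⟨hl1nd, hl2nd, fun a ha b hb hab => by
        subst hab; exact Finset.mem_compl.1 ((hl2mem a).1 hb) ((hl1mem a).1 ha)⟩
    · intro i
      by_cases hi : i ∈ S
      · exact List.mem_append.2 (Or.inl ((hl1mem i).2 hi))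
      · exact List.mem_append.2 (Or.inr ((hl2mem i).2 (Finset.mem_compl.2 hi)))
    · rw [List.pairwise_append]
      refine ⟨?_, ?_, ?_⟩
      · rw [hl1def, List.pairwise_map]
        refine (List.pairwise_lt_finRange _).imp ?_
        intro a b hab
        have := hsort (σ.symm a) (σ.symm b) (by simpa using hab.le)
        simpa [hf] using this
      · have htrans : ∀ a b c : Fin m, le a b = true → le b c = true → le a c = true := by
          intro a b c hab hbc
          simp only [hle, decide_eq_true_eq] at *
          exact le_trans hbc hab
        have htot : ∀ a b : Fin m, (le a b || le b a) = true := by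
          intro a b
          simp only [hle, Bool.or_eq_true, decide_eq_true_eq]
          exact le_total _ _
        have hp := List.pairwise_mergeSort htrans htot (Sᶜ.toList)
        rw [← hl2def] at hp
        refine hp.imp ?_
        intro a b hab
        simpa [hle] using hab
      · intro a ha b hb
        have haS : a ∈ S := (hl1mem a).1 ha
        have hbS : b ∉ S := Finset.mem_compl.1 ((hl2mem b).1 hb)
        have hb2 : |x b| < xbar Sᶜ := h2 b hbS
        have hmono : xbar Sᶜ ≤
            xbar (((S.attach.filter fun h => σ ⟨a, haS⟩ ≤ σ h).image Subtype.val) ∪ Sᶜ) :=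
          hxmono _ _ Finset.subset_union_right
        exact (hb2.trans_le (hmono.trans (h1 ⟨a, haS⟩))).le
    · have hrun2 : stepDownRun xbar (fun i => |x i|) l2 = ∅ := by
        rcases hl2' : l2 with _ | ⟨h, t⟩
        · rw [stepDownRun]
        · rw [stepDownRun, if_pos]
          have hins : insert h t.toFinset = Sᶜ := by
            rw [← List.toFinset_cons, ← hl2', hl2fin]
          rw [hins]
          refine h2 h (Finset.mem_compl.1 ((hl2mem h).1 ?_))
          rw [hl2']
          exact List.mem_cons_self
      have hpassall : ∀ p h q, l1 = p ++ h :: q →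
          ¬ (fun i => |x i|) h < xbar (insert h ((q ++ l2).toFinset)) := by
        intro p h q hpq
        have hR : l1.Pairwise
            (fun a b => ∃ (ha : a ∈ S) (hb : b ∈ S), σ ⟨a, ha⟩ ≤ σ ⟨b, hb⟩) := by
          rw [hl1def, List.pairwise_map]
          refine (List.pairwise_lt_finRange _).imp ?_
          intro a b hab
          exact ⟨(σ.symm a).2, (σ.symm b).2, by simpa [hf] using hab.le⟩
        rw [hpq] at hR
        have hhS : h ∈ S := by
          refine (hl1mem h).1 ?_
          rw [hpq]
          exact List.mem_append.2 (Or.inr List.mem_cons_self)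
        have hq' : ∀ b ∈ q, ∃ hb : b ∈ S, σ ⟨h, hhS⟩ ≤ σ ⟨b, hb⟩ := by
          have hpc := (List.pairwise_cons.1 (List.pairwise_append.1 hR).2.1).1
          intro b hb
          obtain ⟨ha', hb', hle'⟩ := hpc b hb
          exact ⟨hb', hle'⟩
        have hsub : insert h ((q ++ l2).toFinset) ⊆
            ((S.attach.filter fun h' => σ ⟨h, hhS⟩ ≤ σ h').image Subtype.val) ∪ Sᶜ := by
          intro a ha
          rcases Finset.mem_insert.1 ha with rfl | ha
          · exact Finset.mem_union_left _ ((memA ⟨a, hhS⟩ a).2 ⟨hhS, le_refl _⟩)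
          · rw [List.toFinset_append, Finset.mem_union] at ha
            rcases ha with ha | ha
            · obtain ⟨hb, hσb⟩ := hq' a (List.mem_toFinset.1 ha)
              exact Finset.mem_union_left _ ((memA ⟨h, hhS⟩ a).2 ⟨hb, hσb⟩)
            · exact Finset.mem_union_right _ (hl2fin ▸ ha)
        push_neg
        exact le_trans (hxmono _ _ hsub) (h1 ⟨h, hhS⟩)
      rw [stepDownRun_append l1 l2 hpassall, hrun2, Finset.union_empty, hl1fin]
end

section
/- For every z ∈ ℝ^m, S ⊆ {1,…,m} and s ∈ S, the closure of the conditional support 𝒳_s(z, S) is a finite union of closed (possibly unbounded) intervals; after merging overlapping intervals it can be written as a union of at most m(m+1)/2 + 1 pairwise disjoint intervals. Moreover, the closure of 𝒳_s(z, S) differs from 𝒳_s(z, S) itself by a set of Lebesgue measure zero. -/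
open MeasureTheory ProbabilityTheory Filter

variable {m : ℕ}

/-- Correlation matrix `Ω = diag(v)^{-1/2} V diag(v)^{-1/2}`. -/
noncomputable def corrMat (V : Matrix (Fin m) (Fin m) ℝ) : Matrix (Fin m) (Fin m) ℝ :=
  Matrix.of fun h k => V h k / (Real.sqrt (V h h) * Real.sqrt (V k k))

/-- The conditional support `𝒳ₛ(z, S) = {x : Ω_{·,s} x + z ∈ 𝒳(S)}`. -/
def condSupport (xbar : Finset (Fin m) → ℝ) (V : Matrix (Fin m) (Fin m) ℝ)
    (z : Fin m → ℝ) (S : Finset (Fin m)) (s : Fin m) : Set ℝ :=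
  {t : ℝ | SelectsTwoSided xbar (fun h => corrMat V h s * t + z h) S}

namespace CondSupportAux

open Set

/-! ### Connected-class machinery on `closure X ⊆ ℝ`. -/

variable (X : Set ℝ)

/-- The order-connected class of `t` inside `closure X`. -/
def cls (t : ℝ) : Set ℝ := {u | u ∈ closure X ∧ Set.uIcc t u ⊆ closure X}

lemma cls_subset (t : ℝ) : cls X t ⊆ closure X := fun _ hu => hu.1

lemma mem_cls_self {t : ℝ} (ht : t ∈ closure X) : t ∈ cls X t :=
  ⟨ht, by simp [Set.uIcc_self]; exact ht⟩

lemma mem_cls_trans {t u v : ℝ} (hu : u ∈ cls X t) (hv : v ∈ cls X u) : v ∈ cls X t := by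
  refine ⟨hv.1, fun q hq => ?_⟩
  rcases Set.uIcc_subset_uIcc_union_uIcc (b := u) hq with h | h
  · exact hu.2 h
  · exact hv.2 h

lemma mem_cls_symm {t u : ℝ} (ht : t ∈ closure X) (hu : u ∈ cls X t) : t ∈ cls X u :=
  ⟨ht, by rw [Set.uIcc_comm]; exact hu.2⟩

lemma cls_eq_of_mem {t u : ℝ} (ht : t ∈ closure X) (hu : u ∈ cls X t) : cls X u = cls X t := by
  ext v
  exact ⟨fun hv => mem_cls_trans X hu hv, fun hv => mem_cls_trans X (mem_cls_symm X ht hu) hv⟩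

lemma cls_ordConnected (t : ℝ) : (cls X t).OrdConnected := by
  constructor
  intro u hu v hv q hq
  have hq1 : q ∈ Set.uIcc u v := Set.Icc_subset_uIcc hq
  rcases Set.uIcc_subset_uIcc_union_uIcc (b := t) hq1 with h | h
  · rw [Set.uIcc_comm] at h
    exact ⟨hu.2 h, fun p hp =>
      hu.2 (Set.uIcc_subset_uIcc Set.left_mem_uIcc h hp)⟩
  · exact ⟨hv.2 h, fun p hp =>
      hv.2 (Set.uIcc_subset_uIcc Set.left_mem_uIcc h hp)⟩

lemma cls_closed (t : ℝ) : IsClosed (cls X t) := by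
  refine isClosed_of_closure_subset ?_
  intro p hp
  have hpc : p ∈ closure X := by
    have h1 : closure (cls X t) ⊆ closure (closure X) := closure_mono (cls_subset X t)
    simpa using h1 hp
  refine ⟨hpc, fun q hq => ?_⟩
  rcases eq_or_ne q p with rfl | hqp
  · exact hpc
  have hd : (0:ℝ) < |p - q| := abs_pos.mpr (sub_ne_zero.mpr (Ne.symm hqp))
  obtain ⟨u, hu, hup⟩ := Metric.mem_closure_iff.mp hp _ hd
  rw [Real.dist_eq, abs_lt] at hup
  refine hu.2 ?_
  rw [Set.mem_uIcc] at hq ⊢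
  rcases hq with ⟨h1, h2⟩ | ⟨h1, h2⟩
  · left
    constructor
    · exact h1
    · -- q ≤ p, q ≠ p so q < p; |p - u| < p - q gives u > q
      have hqp' : q < p := lt_of_le_of_ne h2 hqp
      have : |p - q| = p - q := abs_of_pos (by linarith)
      rw [this] at hup
      linarith [hup.1, hup.2]
  · right
    constructor
    · have hqp' : p < q := lt_of_le_of_ne h1 (Ne.symm hqp)
      have habs : |p - q| = -(p - q) := abs_of_neg (by linarith)
      rw [habs] at hup
      linarith [hup.1, hup.2]
    · exact h2

lemma cls_eq_or_disjoint {t u : ℝ} (ht : t ∈ closure X) (hu : u ∈ closure X) :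
    cls X t = cls X u ∨ Disjoint (cls X t) (cls X u) := by
  by_cases h : (cls X t ∩ cls X u).Nonempty
  · left
    obtain ⟨v, hvt, hvu⟩ := h
    rw [← cls_eq_of_mem X ht hvt, ← cls_eq_of_mem X hu hvu]
  · right
    exact Set.disjoint_iff_inter_eq_empty.mpr (Set.not_nonempty_iff_eq_empty.mp h)

variable {ι Λ : Type*}

lemma cls_card_le [Fintype Λ] (W : ι → Set ℝ) (lab : ι → Λ)
    (hW : ∀ i, (W i).OrdConnected)
    (hWX : ∀ i, ∀ t ∈ W i, t ∉ X)
    (hcov : ∀ t, t ∉ X → ∃ i, t ∈ W i)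
    (hlab : ∀ i j, lab i = lab j → (W i).Nonempty → (W j).Nonempty →
      Bornology.IsBounded (W i) → Bornology.IsBounded (W j) → (W i ∪ W j).OrdConnected)
    (G : Finset (Set ℝ)) (hG : ∀ C ∈ G, ∃ t ∈ closure X, cls X t = C) :
    G.card ≤ Fintype.card Λ + 1 := by
  by_contra hcard
  push_neg at hcard
  set N := Fintype.card Λ with hN
  choose rep hrep1 hrep2 using hG
  have hclsrep : ∀ (C) (hC : C ∈ G), cls X (rep C hC) = C := hrep2
  set R : Finset ℝ := G.attach.image (fun C => rep C.1 C.2) with hR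
  have hfinj : Function.Injective (fun C : {x // x ∈ G} => rep C.1 C.2) := by
    intro a b he
    simp only at he
    exact Subtype.ext ((hclsrep a.1 a.2).symm.trans ((congrArg (cls X) he).trans (hclsrep b.1 b.2)))
  have hRcard : R.card = G.card := by
    rw [hR, Finset.card_image_of_injective _ hfinj, Finset.card_attach]
  have hRmem : ∀ x ∈ R, x ∈ closure X := by
    intro x hx
    rw [hR, Finset.mem_image] at hx
    obtain ⟨C, _, rfl⟩ := hx
    exact hrep1 C.1 C.2
  have hRcls : ∀ x ∈ R, ∀ y ∈ R, x ≠ y → cls X x ≠ cls X y := by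
    intro x hx y hy hxy
    rw [hR, Finset.mem_image] at hx hy
    obtain ⟨C, _, rfl⟩ := hx
    obtain ⟨C', _, rfl⟩ := hy
    intro h
    have hCC' : C.1 = C'.1 := (hclsrep C.1 C.2).symm.trans (h.trans (hclsrep C'.1 C'.2))
    obtain rfl : C = C' := Subtype.ext hCC'
    exact hxy rfl
  set L : List ℝ := R.sort (· ≤ ·) with hL
  have hLlen : N + 2 ≤ L.length := by
    rw [hL, Finset.length_sort, hRcard]; omega
  have hsm : StrictMono L.get := (Finset.sortedLT_sort R).strictMono_get
  have hLmem : ∀ i : Fin L.length, L.get i ∈ R := fun i =>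
    (Finset.mem_sort (α := ℝ) (· ≤ ·)).mp (List.get_mem L i)
  -- u i, v i for i : Fin (N+1)
  have hidx : ∀ i : Fin (N + 1), (i : ℕ) + 1 < L.length := fun i => by
    have := i.2; omega
  have hidx0 : ∀ i : Fin (N + 1), (i : ℕ) < L.length := fun i => by
    have := i.2; omega
  set u : Fin (N + 1) → ℝ := fun i => L.get ⟨i, hidx0 i⟩ with hu
  set v : Fin (N + 1) → ℝ := fun i => L.get ⟨(i : ℕ) + 1, hidx i⟩ with hv
  have huv : ∀ i, u i < v i := fun i => hsm (by simp [Fin.lt_def])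
  have hvu : ∀ i i' : Fin (N + 1), (i : ℕ) < (i' : ℕ) → v i ≤ u i' := by
    intro i i' h
    exact hsm.monotone (by simp [Fin.le_def]; omega)
  have humem : ∀ i, u i ∈ closure X := fun i => hRmem _ (hLmem _)
  have hvmem : ∀ i, v i ∈ closure X := fun i => hRmem _ (hLmem _)
  -- gaps
  have hgap : ∀ i : Fin (N + 1), ∃ g, u i < g ∧ g < v i ∧ g ∉ closure X := by
    intro i
    have hne : cls X (u i) ≠ cls X (v i) := by
      refine hRcls _ (hLmem _) _ (hLmem _) (ne_of_lt (huv i))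
    have hnmem : v i ∉ cls X (u i) := by
      intro h
      exact hne (cls_eq_of_mem X (humem i) h).symm
    have hnsub : ¬ Set.uIcc (u i) (v i) ⊆ closure X := by
      intro h
      exact hnmem ⟨hvmem i, h⟩
    obtain ⟨g, hg1, hg2⟩ := Set.not_subset.mp hnsub
    rw [Set.uIcc_of_le (le_of_lt (huv i))] at hg1
    refine ⟨g, lt_of_le_of_ne hg1.1 ?_, lt_of_le_of_ne hg1.2 ?_, hg2⟩
    · intro h; exact hg2 (h ▸ humem i)
    · intro h; exact hg2 (h ▸ hvmem i)
  choose g hg1 hg2 hg3 using hgap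
  have hpiece : ∀ i : Fin (N + 1), ∃ j, g i ∈ W j := fun i =>
    hcov _ (fun hX => hg3 i (subset_closure hX))
  choose J hJ using hpiece
  have hconf : ∀ i, ∀ x ∈ W (J i), u i ≤ x ∧ x ≤ v i := by
    intro i x hx
    constructor
    · by_contra hlt
      push_neg at hlt
      have hε : 0 < min (u i - x) (g i - u i) := lt_min (by linarith) (by linarith [hg1 i])
      obtain ⟨y, hy, hyd⟩ := Metric.mem_closure_iff.mp (humem i) _ hε
      rw [Real.dist_eq, abs_lt] at hyd
      have h1 := hyd.1
      have h2 := hyd.2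
      have hmin1 : min (u i - x) (g i - u i) ≤ u i - x := min_le_left _ _
      have hmin2 : min (u i - x) (g i - u i) ≤ g i - u i := min_le_right _ _
      have : y ∈ W (J i) := (hW (J i)).out hx (hJ i) ⟨by linarith, by linarith⟩
      exact hWX _ y this hy
    · by_contra hlt
      push_neg at hlt
      have hε : 0 < min (x - v i) (v i - g i) := lt_min (by linarith) (by linarith [hg2 i])
      obtain ⟨y, hy, hyd⟩ := Metric.mem_closure_iff.mp (hvmem i) _ hε
      rw [Real.dist_eq, abs_lt] at hyd
      have h1 := hyd.1
      have h2 := hyd.2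
      have hmin1 : min (x - v i) (v i - g i) ≤ x - v i := min_le_left _ _
      have hmin2 : min (x - v i) (v i - g i) ≤ v i - g i := min_le_right _ _
      have : y ∈ W (J i) := (hW (J i)).out (hJ i) hx ⟨by linarith, by linarith⟩
      exact hWX _ y this hy
  have hbdd : ∀ i, Bornology.IsBounded (W (J i)) := fun i =>
    (Metric.isBounded_Icc (u i) (v i)).subset
      (fun x hx => ⟨(hconf i x hx).1, (hconf i x hx).2⟩)
  have hkey : ∀ i i' : Fin (N + 1), (i : ℕ) < (i' : ℕ) → lab (J i) = lab (J i') → False := by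
    intro i i' hlt heq
    have hord := hlab _ _ heq ⟨g i, hJ i⟩ ⟨g i', hJ i'⟩ (hbdd i) (hbdd i')
    have h1 : g i < u i' := lt_of_lt_of_le (hg2 i) (hvu i i' hlt)
    have h2 : u i' < g i' := hg1 i'
    have hε : 0 < min (u i' - g i) (g i' - u i') := lt_min (by linarith) (by linarith)
    obtain ⟨y, hy, hyd⟩ := Metric.mem_closure_iff.mp (humem i') _ hε
    rw [Real.dist_eq, abs_lt] at hyd
    have hy1 := hyd.1
    have hy2 := hyd.2
    have hmin1 : min (u i' - g i) (g i' - u i') ≤ u i' - g i := min_le_left _ _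
    have hmin2 : min (u i' - g i) (g i' - u i') ≤ g i' - u i' := min_le_right _ _
    have hyW : y ∈ W (J i) ∪ W (J i') :=
      hord.out (Or.inl (hJ i)) (Or.inr (hJ i')) ⟨by linarith, by linarith⟩
    rcases hyW with h | h
    · exact hWX _ y h hy
    · exact hWX _ y h hy
  have hcardlt : Fintype.card Λ < Fintype.card (Fin (N + 1)) := by simp [hN]
  obtain ⟨i, i', hne, heq⟩ := Fintype.exists_ne_map_eq_of_card_lt
    (fun i : Fin (N + 1) => lab (J i)) hcardlt
  rcases hne.lt_or_gt with h | h
  · exact hkey i i' (by exact_mod_cast h) heq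
  · exact hkey i' i (by exact_mod_cast h) heq.symm


lemma part1 [Fintype Λ] (W : ι → Set ℝ) (lab : ι → Λ)
    (hW : ∀ i, (W i).OrdConnected)
    (hWX : ∀ i, ∀ t ∈ W i, t ∉ X)
    (hcov : ∀ t, t ∉ X → ∃ i, t ∈ W i)
    (hlab : ∀ i j, lab i = lab j → (W i).Nonempty → (W j).Nonempty →
      Bornology.IsBounded (W i) → Bornology.IsBounded (W j) → (W i ∪ W j).OrdConnected) :
    ∃ n, n ≤ Fintype.card Λ + 1 ∧ ∃ I : Fin n → Set ℝ,
      (∀ k, IsClosed (I k) ∧ (I k).OrdConnected) ∧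
      (Pairwise fun k k' => Disjoint (I k) (I k')) ∧
      closure X = ⋃ k, I k := by
  classical
  set 𝒞 : Set (Set ℝ) := (cls X) '' (closure X) with h𝒞
  have hGbound : ∀ G : Finset (Set ℝ), ↑G ⊆ 𝒞 → G.card ≤ Fintype.card Λ + 1 := by
    intro G hG
    refine cls_card_le X W lab hW hWX hcov hlab G ?_
    intro C hC
    obtain ⟨t, ht, rfl⟩ := hG hC
    exact ⟨t, ht, rfl⟩
  have hfin : 𝒞.Finite := by
    by_contra hinf
    have hinf' : 𝒞.Infinite := hinf
    obtain ⟨G, hsub, hcard⟩ := hinf'.exists_subset_card_eq (Fintype.card Λ + 2)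
    have := hGbound G hsub
    omega
  have hncard : hfin.toFinset.card ≤ Fintype.card Λ + 1 := by
    refine hGbound _ ?_
    intro C hC
    simpa using hC
  set I : Fin hfin.toFinset.card → Set ℝ :=
    fun k => ((hfin.toFinset.equivFin.symm k : hfin.toFinset) : Set ℝ) with hI
  refine ⟨hfin.toFinset.card, hncard, I, ?_, ?_, ?_⟩
  · intro k
    simp only [hI]
    have hmem : ((hfin.toFinset.equivFin.symm k : hfin.toFinset) : Set ℝ) ∈ 𝒞 :=
      hfin.mem_toFinset.mp (hfin.toFinset.equivFin.symm k).2
    obtain ⟨t, ht, heq⟩ := hmem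
    rw [← heq]
    exact ⟨cls_closed X t, cls_ordConnected X t⟩
  · intro k k' hkk'
    simp only [Function.onFun, hI]
    have hne : ((hfin.toFinset.equivFin.symm k : hfin.toFinset) : Set ℝ) ≠
        ((hfin.toFinset.equivFin.symm k' : hfin.toFinset) : Set ℝ) := by
      intro h
      exact hkk' (hfin.toFinset.equivFin.symm.injective (Subtype.ext h))
    have hmem : ((hfin.toFinset.equivFin.symm k : hfin.toFinset) : Set ℝ) ∈ 𝒞 :=
      hfin.mem_toFinset.mp (hfin.toFinset.equivFin.symm k).2
    have hmem' : ((hfin.toFinset.equivFin.symm k' : hfin.toFinset) : Set ℝ) ∈ 𝒞 :=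
      hfin.mem_toFinset.mp (hfin.toFinset.equivFin.symm k').2
    obtain ⟨t, ht, heq⟩ := hmem
    obtain ⟨t', ht', heq'⟩ := hmem'
    rw [← heq, ← heq']
    rcases cls_eq_or_disjoint X ht ht' with h | h
    · exact absurd (heq ▸ heq' ▸ h) hne
    · exact h
  · ext t
    constructor
    · intro ht
      have hmem : cls X t ∈ hfin.toFinset := hfin.mem_toFinset.mpr ⟨t, ht, rfl⟩
      refine Set.mem_iUnion.mpr ⟨hfin.toFinset.equivFin ⟨cls X t, hmem⟩, ?_⟩
      simp only [hI]
      have : hfin.toFinset.equivFin.symm (hfin.toFinset.equivFin ⟨cls X t, hmem⟩) =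
          ⟨cls X t, hmem⟩ := Equiv.symm_apply_apply _ _
      rw [this]
      exact mem_cls_self X ht
    · intro ht
      obtain ⟨k, hk⟩ := Set.mem_iUnion.mp ht
      simp only [hI] at hk
      have hmem : ((hfin.toFinset.equivFin.symm k : hfin.toFinset) : Set ℝ) ∈ 𝒞 :=
        hfin.mem_toFinset.mp (hfin.toFinset.equivFin.symm k).2
      obtain ⟨u, hu, heq⟩ := hmem
      rw [← heq] at hk
      exact cls_subset X u hk

/-! ### Null difference between closure and set -/

lemma three_pt {V : Set ℝ} (hV : V.OrdConnected) {p q r : ℝ}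
    (hp : p ∈ closure V \ V) (hq : q ∈ closure V \ V) (hr : r ∈ closure V \ V)
    (h1 : p < q) (h2 : q < r) : False := by
  obtain ⟨x, hx, hxd⟩ := Metric.mem_closure_iff.mp hp.1 (q - p) (by linarith)
  obtain ⟨y, hy, hyd⟩ := Metric.mem_closure_iff.mp hr.1 (r - q) (by linarith)
  rw [Real.dist_eq, abs_lt] at hxd hyd
  exact hq.2 (hV.out hx hy ⟨by linarith [hxd.1, hxd.2], by linarith [hyd.1, hyd.2]⟩)

lemma closure_diff_null_of_ordConnected (V : Set ℝ) (hV : V.OrdConnected) :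
    volume (closure V \ V) = 0 := by
  set D := closure V \ V with hD
  have tri : ∀ p q r : ℝ, p ∈ D → q ∈ D → r ∈ D → p < q → q < r → False :=
    fun p q r hp hq hr => three_pt hV hp hq hr
  have hcnt : D.Countable := by
    rcases Set.eq_empty_or_nonempty D with h | ⟨a, ha⟩
    · simp [h]
    have hss : (D \ {a}).Subsingleton := by
      intro x hx y hy
      by_contra hxy
      have hxa : x ≠ a := by simpa using hx.2
      have hya : y ≠ a := by simpa using hy.2
      rcases lt_trichotomy x y with h1 | h1 | h1
      · rcases lt_trichotomy a x with h2 | h2 | h2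
        · exact tri a x y ha hx.1 hy.1 h2 h1
        · exact hxa h2.symm
        · rcases lt_trichotomy a y with h3 | h3 | h3
          · exact tri x a y hx.1 ha hy.1 h2 h3
          · exact hya h3.symm
          · exact tri x y a hx.1 hy.1 ha h1 h3
      · exact hxy h1
      · rcases lt_trichotomy a y with h2 | h2 | h2
        · exact tri a y x ha hy.1 hx.1 h2 h1
        · exact hya h2.symm
        · rcases lt_trichotomy a x with h3 | h3 | h3
          · exact tri y a x hy.1 ha hx.1 h2 h3
          · exact hxa h3.symm
          · exact tri y x a hy.1 hx.1 ha h1 h3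
    have hsub : D ⊆ {a} ∪ (D \ {a}) := by
      intro x hx
      by_cases h : x = a
      · exact Or.inl (by simp [h])
      · exact Or.inr ⟨hx, by simp [h]⟩
    exact Set.Countable.mono hsub ((Set.countable_singleton a).union hss.countable)
  exact hcnt.measure_zero volume

lemma part2 {ι : Type*} [Fintype ι] (X : Set ℝ) (W : ι → Set ℝ)
    (hW : ∀ i, (W i).OrdConnected)
    (hXW : ∀ t, t ∉ X ↔ ∃ i, t ∈ W i) :
    volume (closure X \ X) = 0 := by
  classical
  set L : ι → Set ℝ := fun i => {t | ∀ x ∈ W i, t < x} with hL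
  set U : ι → Set ℝ := fun i => {t | ∀ x ∈ W i, x < t} with hU
  have hcompl : ∀ i, (W i)ᶜ = L i ∪ U i := by
    intro i
    ext t
    simp only [Set.mem_compl_iff, Set.mem_union, hL, hU, Set.mem_setOf_eq]
    constructor
    · intro ht
      by_contra hc
      push_neg at hc
      obtain ⟨⟨x, hx, hxt⟩, ⟨y, hy, hyt⟩⟩ := hc
      exact ht ((hW i).out hx hy ⟨hxt, hyt⟩)
    · rintro (h | h) htW
      · exact lt_irrefl t (h t htW)
      · exact lt_irrefl t (h t htW)
  set V : (ι → Bool) → Set ℝ := fun f => ⋂ i, (if f i then L i else U i) with hV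
  have hVord : ∀ f, (V f).OrdConnected := by
    intro f
    constructor
    intro x hx y hy z hz
    simp only [hV, Set.mem_iInter] at hx hy ⊢
    intro i
    have hx' := hx i
    have hy' := hy i
    by_cases hf : f i
    · simp only [hf, if_true] at hx' hy' ⊢
      intro w hw
      exact lt_of_le_of_lt hz.2 (hy' w hw)
    · simp only [hf, if_false, Bool.false_eq_true] at hx' hy' ⊢
      intro w hw
      exact lt_of_lt_of_le (hx' w hw) hz.1
  have hXeq : X = ⋃ f : ι → Bool, V f := by
    ext t
    constructor
    · intro ht
      have hti : ∀ i, t ∈ L i ∪ U i := by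
        intro i
        rw [← hcompl i]
        intro hW'
        exact ((hXW t).mpr ⟨i, hW'⟩) ht
      refine Set.mem_iUnion.mpr ⟨fun i => decide (t ∈ L i), ?_⟩
      simp only [hV, Set.mem_iInter]
      intro i
      rcases hti i with h | h
      · simp [h]
      · by_cases hL' : t ∈ L i
        · simp [hL']
        · simp [hL', h]
    · intro ht
      obtain ⟨f, hf⟩ := Set.mem_iUnion.mp ht
      by_contra hX'
      obtain ⟨i, hWi⟩ := (hXW t).mp hX'
      have hmem := Set.mem_iInter.mp hf i
      have htc : t ∈ (W i)ᶜ := by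
        rw [hcompl i]
        by_cases hfi : f i
        · left; simpa [hfi] using hmem
        · right; simpa [hfi] using hmem
      exact htc hWi
  have hclosed : IsClosed (⋃ f : ι → Bool, closure (V f)) :=
    isClosed_iUnion_of_finite fun f => isClosed_closure
  have hsub : closure X ⊆ ⋃ f : ι → Bool, closure (V f) := by
    refine closure_minimal ?_ hclosed
    conv_lhs => rw [hXeq]
    exact Set.iUnion_mono fun f => subset_closure
  have hdiff : closure X \ X ⊆ ⋃ f : ι → Bool, (closure (V f) \ V f) := by
    intro t ht
    obtain ⟨f, hf⟩ := Set.mem_iUnion.mp (hsub ht.1)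
    exact Set.mem_iUnion.mpr ⟨f, hf, fun hVf => ht.2 (hXeq ▸ Set.mem_iUnion.mpr ⟨f, hVf⟩)⟩
  refine measure_mono_null hdiff ?_
  exact measure_iUnion_null fun f => closure_diff_null_of_ordConnected _ (hVord f)


variable (xbar : Finset (Fin m) → ℝ)

lemma run_subset (key : Fin m → ℝ) : ∀ l : List (Fin m), stepDownRun xbar key l ⊆ l.toFinset := by
  intro l
  induction l with
  | nil => simp [stepDownRun]
  | cons a t ih =>
    rw [stepDownRun]
    split
    · simp
    · intro b hb
      rcases Finset.mem_insert.mp hb with rfl | hb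
      · simp
      · simp only [List.toFinset_cons]
        exact Finset.mem_insert_of_mem (ih hb)

lemma runSpec (key : Fin m → ℝ) (hmono : ∀ B C : Finset (Fin m), B ⊆ C → xbar B ≤ xbar C) :
    ∀ l : List (Fin m), l.Pairwise (fun i j => key j ≤ key i) → l.Nodup →
    (∀ a ∈ stepDownRun xbar key l, ∀ h ∈ l.toFinset, h ∉ stepDownRun xbar key l →
        key h ≤ key a) ∧
    (∀ a ∈ stepDownRun xbar key l,
        xbar ((l.toFinset.filter fun b => key b ≤ key a) ∪
          (l.toFinset \ stepDownRun xbar key l)) ≤ key a) ∧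
    (∀ h ∈ l.toFinset, h ∉ stepDownRun xbar key l →
        key h < xbar (l.toFinset \ stepDownRun xbar key l)) := by
  intro l
  induction l with
  | nil => simp [stepDownRun]
  | cons a t ih =>
    intro hsort hnd
    obtain ⟨hhead, hsort'⟩ := List.pairwise_cons.mp hsort
    obtain ⟨hna, hnd'⟩ := List.nodup_cons.mp hnd
    have hna' : a ∉ t.toFinset := fun h => hna (List.mem_toFinset.mp h)
    rw [stepDownRun]
    split_ifs with hstop
    · refine ⟨by simp, by simp, ?_⟩
      intro h hh _
      rw [Finset.sdiff_empty]
      have hkey : key h ≤ key a := by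
        rcases List.mem_cons.mp (List.mem_toFinset.mp hh) with rfl | hmem
        · exact le_refl _
        · exact hhead h hmem
      calc key h ≤ key a := hkey
        _ < xbar ((a :: t).toFinset) := by simpa using hstop
    · obtain ⟨ih1, ih2, ih3⟩ := ih hsort' hnd'
      have hxf : xbar ((a :: t).toFinset) ≤ key a := by
        simp only [List.toFinset_cons]
        exact not_lt.mp hstop
      have hsdiff : (a :: t).toFinset \ insert a (stepDownRun xbar key t) =
          t.toFinset \ stepDownRun xbar key t := by
        simp only [List.toFinset_cons]
        ext x
        simp only [Finset.mem_sdiff, Finset.mem_insert]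
        constructor
        · rintro ⟨hx1, hx2⟩
          push_neg at hx2
          rcases hx1 with rfl | hx1
          · exact absurd rfl hx2.1
          · exact ⟨hx1, hx2.2⟩
        · rintro ⟨hx1, hx2⟩
          refine ⟨Or.inr hx1, ?_⟩
          rintro (rfl | h)
          · exact hna' hx1
          · exact hx2 h
      have htail : ∀ h, h ∈ (a :: t).toFinset → h ∉ insert a (stepDownRun xbar key t) →
          h ∈ t.toFinset ∧ h ∉ stepDownRun xbar key t := by
        intro h hh hhn
        have : h ∈ (a :: t).toFinset \ insert a (stepDownRun xbar key t) :=
          Finset.mem_sdiff.mpr ⟨hh, hhn⟩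
        rw [hsdiff] at this
        exact Finset.mem_sdiff.mp this
      refine ⟨?_, ?_, ?_⟩
      · intro a' ha' h hh hhn
        obtain ⟨hht, _⟩ := htail h hh hhn
        rcases Finset.mem_insert.mp ha' with rfl | ha'
        · exact hhead h (List.mem_toFinset.mp hht)
        · exact ih1 a' ha' h hht ((htail h hh hhn).2)
      · intro a' ha'
        rcases Finset.mem_insert.mp ha' with rfl | ha'
        · refine le_trans (hmono _ _ ?_) hxf
          intro x hx
          rcases Finset.mem_union.mp hx with hx | hx
          · exact Finset.filter_subset _ _ hx
          · exact Finset.sdiff_subset hx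
        · by_cases hka : key a ≤ key a'
          · have ha't : a' ∈ t := List.mem_toFinset.mp (run_subset xbar key t ha')
            have hke : key a' = key a := le_antisymm (hhead a' ha't) hka
            rw [← hke] at hxf
            refine le_trans (hmono _ _ ?_) hxf
            intro x hx
            rcases Finset.mem_union.mp hx with hx | hx
            · exact Finset.filter_subset _ _ hx
            · exact Finset.sdiff_subset hx
          · have hfilter : ((a :: t).toFinset.filter fun b => key b ≤ key a') =
                t.toFinset.filter fun b => key b ≤ key a' := by
              simp only [List.toFinset_cons, Finset.filter_insert]
              rw [if_neg hka]
            rw [hfilter, hsdiff]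
            exact ih2 a' ha'
      · intro h hh hhn
        rw [hsdiff]
        obtain ⟨h1, h2⟩ := htail h hh hhn
        exact ih3 h h1 h2

lemma run_concat (key : Fin m → ℝ) :
    ∀ l1 l2 : List (Fin m), stepDownRun xbar key l2 = ∅ →
    (∀ p a q, l1 = p ++ a :: q → xbar (insert a (q.toFinset ∪ l2.toFinset)) ≤ key a) →
    stepDownRun xbar key (l1 ++ l2) = l1.toFinset := by
  intro l1
  induction l1 with
  | nil => intro l2 h2 _; simpa using h2
  | cons a t ih =>
    intro l2 h2 h1
    have hhead := h1 [] a t rfl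
    rw [List.cons_append, stepDownRun, if_neg]
    · rw [ih l2 h2 (fun p a' q hpq => h1 (a :: p) a' q (by rw [hpq, List.cons_append]))]
      simp
    · rw [List.toFinset_append]
      exact not_lt.mpr hhead

lemma selects_iff (key : Fin m → ℝ) (hmono : ∀ B C : Finset (Fin m), B ⊆ C → xbar B ≤ xbar C)
    (S : Finset (Fin m)) :
    (∃ l : List (Fin m), SortedEnum key l ∧ stepDownRun xbar key l = S) ↔
      ((∀ a ∈ S, ∀ h ∉ S, key h ≤ key a) ∧
       (∀ a ∈ S, xbar ((S.filter fun b => key b ≤ key a) ∪ (Finset.univ \ S)) ≤ key a) ∧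
       (∀ h ∉ S, key h < xbar (Finset.univ \ S))) := by
  constructor
  · rintro ⟨l, ⟨hnd, hall, hsort⟩, hrun⟩
    have hF : l.toFinset = Finset.univ :=
      Finset.eq_univ_iff_forall.mpr fun i => List.mem_toFinset.mpr (hall i)
    obtain ⟨c1, c2, c3⟩ := runSpec xbar key hmono l hsort hnd
    rw [hrun, hF] at c1 c2 c3
    refine ⟨?_, ?_, ?_⟩
    · intro a ha h hh
      exact c1 a ha h (Finset.mem_univ h) hh
    · intro a ha
      have hset : (S.filter fun b => key b ≤ key a) ∪ (Finset.univ \ S) =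
          (Finset.univ.filter fun b => key b ≤ key a) ∪ (Finset.univ \ S) := by
        ext b
        simp only [Finset.mem_union, Finset.mem_filter, Finset.mem_univ, Finset.mem_sdiff,
          true_and]
        constructor
        · rintro (⟨_, hkb⟩ | hb)
          · exact Or.inl hkb
          · exact Or.inr hb
        · intro h
          by_cases hbS : b ∈ S
          · rcases h with h | h
            · exact Or.inl ⟨hbS, h⟩
            · exact absurd hbS h
          · exact Or.inr hbS
      rw [hset]
      exact c2 a ha
    · intro h hh
      exact c3 h (Finset.mem_univ h) hh
  · rintro ⟨c1, c2, c3⟩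
    classical
    set r : Fin m → Fin m → Prop := fun i j => key j ≤ key i with hr
    haveI : IsTotal (Fin m) r := ⟨fun i j => le_total (key j) (key i)⟩
    haveI : IsTrans (Fin m) r := ⟨fun a b c hab hbc => le_trans hbc hab⟩
    set l1 : List (Fin m) := List.insertionSort r S.toList with hl1
    set l2 : List (Fin m) := List.insertionSort r (Finset.univ \ S).toList with hl2
    have hp1 : List.Perm l1 S.toList := List.perm_insertionSort r _
    have hp2 : List.Perm l2 ((Finset.univ \ S).toList) := List.perm_insertionSort r _
    have hm1 : ∀ x, x ∈ l1 ↔ x ∈ S := fun x => by rw [hp1.mem_iff, Finset.mem_toList]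
    have hm2 : ∀ x, x ∈ l2 ↔ x ∈ Finset.univ \ S := fun x => by
      rw [hp2.mem_iff, Finset.mem_toList]
    have hf1 : l1.toFinset = S := by ext x; rw [List.mem_toFinset, hm1]
    have hf2 : l2.toFinset = Finset.univ \ S := by ext x; rw [List.mem_toFinset, hm2]
    have hnd1 : l1.Nodup := hp1.nodup_iff.mpr (Finset.nodup_toList S)
    have hnd2 : l2.Nodup := hp2.nodup_iff.mpr (Finset.nodup_toList _)
    have hs1 : l1.Pairwise r := List.pairwise_insertionSort r _
    have hs2 : l2.Pairwise r := List.pairwise_insertionSort r _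
    have hrun2 : stepDownRun xbar key l2 = ∅ := by
      rcases hl2c : l2 with _ | ⟨b, tl⟩
      · simp [stepDownRun]
      · rw [stepDownRun, if_pos]
        have hbl2 : b ∈ l2 := by rw [hl2c]; exact List.mem_cons_self
        have hb : b ∈ Finset.univ \ S := (hm2 b).mp hbl2
        have hins : insert b tl.toFinset = Finset.univ \ S := by
          rw [← List.toFinset_cons, ← hl2c, hf2]
        rw [hins]
        exact c3 b (Finset.mem_sdiff.mp hb).2
    refine ⟨l1 ++ l2, ⟨?_, ?_, ?_⟩, ?_⟩
    · rw [List.nodup_append]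
      exact ⟨hnd1, hnd2, fun x hx1 y hy2 hxy =>
        (Finset.mem_sdiff.mp ((hm2 y).mp hy2)).2 ((hm1 y).mp (hxy ▸ hx1))⟩
    · intro i
      rw [List.mem_append]
      by_cases hiS : i ∈ S
      · exact Or.inl ((hm1 i).mpr hiS)
      · exact Or.inr ((hm2 i).mpr (Finset.mem_sdiff.mpr ⟨Finset.mem_univ i, hiS⟩))
    · refine List.pairwise_append.mpr ⟨hs1, hs2, ?_⟩
      intro a ha b hb
      exact c1 a ((hm1 a).mp ha) b (Finset.mem_sdiff.mp ((hm2 b).mp hb)).2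
    · rw [run_concat xbar key l1 l2 hrun2 ?_, hf1]
      intro p a q hpq
      have haS : a ∈ S := (hm1 a).mp (by rw [hpq]; simp)
      have hsub : insert a (q.toFinset ∪ l2.toFinset) ⊆
          (S.filter fun b => key b ≤ key a) ∪ (Finset.univ \ S) := by
        intro x hx
        rcases Finset.mem_insert.mp hx with rfl | hx
        · exact Finset.mem_union_left _ (Finset.mem_filter.mpr ⟨haS, le_refl _⟩)
        rcases Finset.mem_union.mp hx with hx | hx
        · have hxq : x ∈ q := List.mem_toFinset.mp hx
          have hxl1 : x ∈ l1 := by rw [hpq]; simp [hxq]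
          have hxS : x ∈ S := (hm1 x).mp hxl1
          have hsorted : (a :: q).Pairwise r := by
            have hsl : l1.Pairwise r := hs1
            rw [hpq] at hsl
            exact (List.pairwise_append.mp hsl).2.1
          have hkx : key x ≤ key a := (List.pairwise_cons.mp hsorted).1 x hxq
          exact Finset.mem_union_left _ (Finset.mem_filter.mpr ⟨hxS, hkx⟩)
        · rw [hf2] at hx
          exact Finset.mem_union_right _ hx
      exact le_trans (hmono _ _ hsub) (c2 a haS)


variable {m : ℕ}

/-! ### Elementary real lemmas -/

lemma abs_lt_abs_iff' {u v : ℝ} :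
    |u| < |v| ↔ (u < v ∧ 0 < u + v) ∨ (v < u ∧ u + v < 0) := by
  have h1 : |u| < |v| ↔ u ^ 2 < v ^ 2 := by
    rw [← sq_abs u, ← sq_abs v]
    exact (pow_lt_pow_iff_left₀ (abs_nonneg u) (abs_nonneg v) two_ne_zero).symm
  have h2 : u ^ 2 < v ^ 2 ↔ 0 < (v - u) * (v + u) := by
    constructor <;> intro h <;> nlinarith
  rw [h1, h2, mul_pos_iff]
  constructor
  · rintro (⟨ha, hb⟩ | ⟨ha, hb⟩)
    · exact Or.inl ⟨by linarith, by linarith⟩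
    · exact Or.inr ⟨by linarith, by linarith⟩
  · rintro (⟨ha, hb⟩ | ⟨ha, hb⟩)
    · exact Or.inl ⟨by linarith, by linarith⟩
    · exact Or.inr ⟨by linarith, by linarith⟩

lemma affine_between {p q t1 t2 z : ℝ} (h1 : t1 ≤ z) (h2 : z ≤ t2) :
    min (p * t1 + q) (p * t2 + q) ≤ p * z + q ∧
      p * z + q ≤ max (p * t1 + q) (p * t2 + q) := by
  rcases le_total 0 p with hp | hp
  · constructor
    · exact le_trans (min_le_left _ _) (by nlinarith)
    · exact le_trans (by nlinarith) (le_max_right _ _)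
  · constructor
    · exact le_trans (min_le_right _ _) (by nlinarith)
    · exact le_trans (by nlinarith) (le_max_left _ _)

lemma abs_affine_le {p q t1 t2 z : ℝ} (h1 : t1 ≤ z) (h2 : z ≤ t2) :
    |p * z + q| ≤ max |p * t1 + q| |p * t2 + q| := by
  obtain ⟨hm, hM⟩ := affine_between (p := p) (q := q) h1 h2
  rw [abs_le]
  have l1 : -|p * t1 + q| ≤ p * t1 + q := neg_abs_le _
  have l2 : -|p * t2 + q| ≤ p * t2 + q := neg_abs_le _
  have l3 : p * t1 + q ≤ |p * t1 + q| := le_abs_self _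
  have l4 : p * t2 + q ≤ |p * t2 + q| := le_abs_self _
  have r1 : |p * t1 + q| ≤ max |p * t1 + q| |p * t2 + q| := le_max_left _ _
  have r2 : |p * t2 + q| ≤ max |p * t1 + q| |p * t2 + q| := le_max_right _ _
  constructor
  · rcases le_total (p * t1 + q) (p * t2 + q) with h | h
    · rw [min_eq_left h] at hm; linarith
    · rw [min_eq_right h] at hm; linarith
  · rcases le_total (p * t1 + q) (p * t2 + q) with h | h
    · rw [max_eq_right h] at hM; linarith
    · rw [max_eq_left h] at hM; linarith

lemma ordConn_lt_affine {p q p' q' : ℝ} :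
    {t : ℝ | p * t + q < p' * t + q'}.OrdConnected := by
  constructor
  intro t1 h1 t2 h2 z hz
  simp only [Set.mem_setOf_eq] at h1 h2 ⊢
  obtain ⟨hm, _⟩ := affine_between (p := p' - p) (q := q' - q) hz.1 hz.2
  have hmin : (0:ℝ) < min ((p' - p) * t1 + (q' - q)) ((p' - p) * t2 + (q' - q)) :=
    lt_min (by linarith) (by linarith)
  nlinarith

lemma ordConn_le_affine {p q p' q' : ℝ} :
    {t : ℝ | p * t + q ≤ p' * t + q'}.OrdConnected := by
  constructor
  intro t1 h1 t2 h2 z hz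
  simp only [Set.mem_setOf_eq] at h1 h2 ⊢
  obtain ⟨hm, _⟩ := affine_between (p := p' - p) (q := q' - q) hz.1 hz.2
  have hmin : (0:ℝ) ≤ min ((p' - p) * t1 + (q' - q)) ((p' - p) * t2 + (q' - q)) :=
    le_min (by linarith) (by linarith)
  nlinarith

lemma ordConn_union_of_inter {s t : Set ℝ} (hs : s.OrdConnected) (ht : t.OrdConnected)
    (h : (s ∩ t).Nonempty) : (s ∪ t).OrdConnected := by
  obtain ⟨p, hps, hpt⟩ := h
  constructor
  rintro x (hx | hx) y (hy | hy) z hz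
  · exact Or.inl (hs.out hx hy hz)
  · rcases le_total z p with hzp | hzp
    · exact Or.inl (hs.out hx hps ⟨hz.1, hzp⟩)
    · exact Or.inr (ht.out hpt hy ⟨hzp, hz.2⟩)
  · rcases le_total z p with hzp | hzp
    · exact Or.inr (ht.out hx hpt ⟨hz.1, hzp⟩)
    · exact Or.inl (hs.out hps hy ⟨hzp, hz.2⟩)
  · exact Or.inr (ht.out hx hy hz)

lemma slopes_of_bounded {p q p' q' : ℝ}
    (hb : Bornology.IsBounded {t : ℝ | 0 < p * t + q ∧ 0 < p' * t + q'})
    (hne : {t : ℝ | 0 < p * t + q ∧ 0 < p' * t + q'}.Nonempty) : p * p' < 0 := by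
  obtain ⟨t0, h1, h2⟩ := hne
  by_contra hpp
  push_neg at hpp
  rcases mul_nonneg_iff.mp hpp with ⟨hp, hp'⟩ | ⟨hp, hp'⟩
  · obtain ⟨M, hM⟩ := hb.bddAbove
    have hmem : t0 + max 0 (M + 1 - t0) ∈ {t : ℝ | 0 < p * t + q ∧ 0 < p' * t + q'} := by
      have hu : (0:ℝ) ≤ max 0 (M + 1 - t0) := le_max_left _ _
      exact ⟨by nlinarith, by nlinarith⟩
    have h3 : t0 + max 0 (M + 1 - t0) ≤ M := hM hmem
    have h4 : M + 1 - t0 ≤ max 0 (M + 1 - t0) := le_max_right _ _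
    linarith
  · obtain ⟨M, hM⟩ := hb.bddBelow
    have hmem : t0 - max 0 (t0 + 1 - M) ∈ {t : ℝ | 0 < p * t + q ∧ 0 < p' * t + q'} := by
      have hu : (0:ℝ) ≤ max 0 (t0 + 1 - M) := le_max_left _ _
      exact ⟨by nlinarith, by nlinarith⟩
    have h3 : M ≤ t0 - max 0 (t0 + 1 - M) := hM hmem
    have h4 : t0 + 1 - M ≤ max 0 (t0 + 1 - M) := le_max_right _ _
    linarith

lemma ray_unbounded {p q θ : ℝ} (hb : Bornology.IsBounded {t : ℝ | θ ≤ p * t + q})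
    (hne : {t : ℝ | θ ≤ p * t + q}.Nonempty) : False := by
  obtain ⟨t0, ht0⟩ := hne
  rcases le_total 0 p with hp | hp
  · obtain ⟨M, hM⟩ := hb.bddAbove
    have hmem : t0 + max 0 (M + 1 - t0) ∈ {t : ℝ | θ ≤ p * t + q} := by
      have hu : (0:ℝ) ≤ max 0 (M + 1 - t0) := le_max_left _ _
      simp only [Set.mem_setOf_eq] at ht0 ⊢
      nlinarith
    have h3 : t0 + max 0 (M + 1 - t0) ≤ M := hM hmem
    have h4 : M + 1 - t0 ≤ max 0 (M + 1 - t0) := le_max_right _ _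
    linarith
  · obtain ⟨M, hM⟩ := hb.bddBelow
    have hmem : t0 - max 0 (t0 + 1 - M) ∈ {t : ℝ | θ ≤ p * t + q} := by
      have hu : (0:ℝ) ≤ max 0 (t0 + 1 - M) := le_max_left _ _
      simp only [Set.mem_setOf_eq] at ht0 ⊢
      nlinarith
    have h3 : M ≤ t0 - max 0 (t0 + 1 - M) := hM hmem
    have h4 : t0 + 1 - M ≤ max 0 (t0 + 1 - M) := le_max_right _ _
    linarith

lemma quad_pos_between {A B C D t1 t2 z : ℝ} (hlead : A ^ 2 - C ^ 2 ≤ 0)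
    (h1 : 0 < (A * t1 + B) ^ 2 - (C * t1 + D) ^ 2)
    (h2 : 0 < (A * t2 + B) ^ 2 - (C * t2 + D) ^ 2)
    (hz1 : t1 ≤ z) (hz2 : z ≤ t2) : 0 < (A * z + B) ^ 2 - (C * z + D) ^ 2 := by
  rcases eq_or_lt_of_le hz1 with rfl | hz1'
  · exact h1
  rcases eq_or_lt_of_le hz2 with rfl | hz2'
  · exact h2
  have hd : (0:ℝ) < t2 - t1 := by linarith
  have key : (t2 - t1) * ((A * z + B) ^ 2 - (C * z + D) ^ 2) =
      (t2 - z) * ((A * t1 + B) ^ 2 - (C * t1 + D) ^ 2) +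
      (z - t1) * ((A * t2 + B) ^ 2 - (C * t2 + D) ^ 2) -
      (A ^ 2 - C ^ 2) * (z - t1) * (t2 - z) * (t2 - t1) := by ring
  have p1 : 0 < (t2 - z) * ((A * t1 + B) ^ 2 - (C * t1 + D) ^ 2) :=
    mul_pos (by linarith) h1
  have p2 : 0 < (z - t1) * ((A * t2 + B) ^ 2 - (C * t2 + D) ^ 2) :=
    mul_pos (by linarith) h2
  have p3 : 0 ≤ -((A ^ 2 - C ^ 2) * (z - t1) * (t2 - z) * (t2 - t1)) := by
    have := mul_nonneg (mul_nonneg (mul_nonneg (neg_nonneg.mpr hlead)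
      (by linarith : (0:ℝ) ≤ z - t1)) (by linarith : (0:ℝ) ≤ t2 - z))
      (by linarith : (0:ℝ) ≤ t2 - t1)
    nlinarith [this]
  nlinarith [key, p1, p2, p3, hd]

/-! ### Strips -/

noncomputable def lo (c w : Fin m → ℝ) (b : Fin m) (θ : ℝ) : ℝ := -(w b) / c b - θ / |c b|

noncomputable def hi (c w : Fin m → ℝ) (b : Fin m) (θ : ℝ) : ℝ := -(w b) / c b + θ / |c b|

lemma strip_eq {c w : Fin m → ℝ} {b : Fin m} (hb : c b ≠ 0) (θ : ℝ) :
    {t : ℝ | |c b * t + w b| < θ} = Set.Ioo (lo c w b θ) (hi c w b θ) := by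
  ext t
  simp only [Set.mem_setOf_eq, Set.mem_Ioo, abs_lt]
  rcases hb.lt_or_gt with hc | hc
  · have hlo : lo c w b θ = (-(w b) + θ) / c b := by
      rw [lo, abs_of_neg hc]
      rw [div_neg, sub_neg_eq_add, ← add_div]
    have hhi : hi c w b θ = (-(w b) - θ) / c b := by
      rw [hi, abs_of_neg hc]
      rw [div_neg, ← sub_eq_add_neg, div_sub_div_same]
    rw [hlo, hhi, div_lt_iff_of_neg hc, lt_div_iff_of_neg hc]
    constructor
    · rintro ⟨h1, h2⟩
      constructor <;> nlinarith
    · rintro ⟨h1, h2⟩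
      constructor <;> nlinarith
  · have hlo : lo c w b θ = (-(w b) - θ) / c b := by
      rw [lo, abs_of_pos hc]
      rw [div_sub_div_same]
    have hhi : hi c w b θ = (-(w b) + θ) / c b := by
      rw [hi, abs_of_pos hc]
      rw [← add_div]
    rw [hlo, hhi, div_lt_iff₀ hc, lt_div_iff₀ hc]
    constructor
    · rintro ⟨h1, h2⟩
      constructor <;> nlinarith
    · rintro ⟨h1, h2⟩
      constructor <;> nlinarith

lemma lo_lt_hi {c w : Fin m → ℝ} {b : Fin m} (hb : c b ≠ 0) {θ1 θ2 : ℝ}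
    (h1 : 0 < θ1) (h2 : 0 < θ2) : lo c w b θ1 < hi c w b θ2 := by
  have habs : 0 < |c b| := abs_pos.mpr hb
  have d1 : 0 < θ1 / |c b| := div_pos h1 habs
  have d2 : 0 < θ2 / |c b| := div_pos h2 habs
  rw [lo, hi]
  linarith

lemma lo_anti {c w : Fin m → ℝ} {b : Fin m} (hb : c b ≠ 0) {θ1 θ2 : ℝ}
    (h : θ1 ≤ θ2) : lo c w b θ2 ≤ lo c w b θ1 := by
  have habs : 0 < |c b| := abs_pos.mpr hb
  have := (div_le_div_iff_of_pos_right habs).mpr h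
  rw [lo, lo]
  linarith

lemma hi_mono {c w : Fin m → ℝ} {b : Fin m} (hb : c b ≠ 0) {θ1 θ2 : ℝ}
    (h : θ1 ≤ θ2) : hi c w b θ1 ≤ hi c w b θ2 := by
  have habs : 0 < |c b| := abs_pos.mpr hb
  have := (div_le_div_iff_of_pos_right habs).mpr h
  rw [hi, hi]
  linarith

/-! ### Pieces -/

abbrev PieceIdx (m : ℕ) :=
  (Fin m × Fin m × Bool) ⊕ ((Fin m × Bool) ⊕ Finset (Fin m))

def pieceA (c w : Fin m → ℝ) (S : Finset (Fin m)) (a h : Fin m) (b : Bool) : Set ℝ :=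
  if a ∈ S ∧ h ∉ S then
    (if b then {t | c a * t + w a < c h * t + w h ∧ 0 < (c a * t + w a) + (c h * t + w h)}
     else {t | c h * t + w h < c a * t + w a ∧ (c a * t + w a) + (c h * t + w h) < 0})
  else ∅

def pieceC (c w : Fin m → ℝ) (xbar : Finset (Fin m) → ℝ) (S : Finset (Fin m))
    (h : Fin m) (b : Bool) : Set ℝ :=
  if h ∉ S then
    (if b then {t | xbar (Finset.univ \ S) ≤ c h * t + w h}
     else {t | c h * t + w h ≤ - xbar (Finset.univ \ S)})
  else ∅

def pieceB (c w : Fin m → ℝ) (xbar : Finset (Fin m) → ℝ) (S : Finset (Fin m))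
    (T : Finset (Fin m)) : Set ℝ :=
  if T ⊆ S ∧ T.Nonempty then
    {t | ∀ b ∈ T, |c b * t + w b| < xbar (T ∪ (Finset.univ \ S))}
  else ∅

def piece (c w : Fin m → ℝ) (xbar : Finset (Fin m) → ℝ) (S : Finset (Fin m)) :
    PieceIdx m → Set ℝ
  | Sum.inl (a, h, b) => pieceA c w S a h b
  | Sum.inr (Sum.inl (h, b)) => pieceC c w xbar S h b
  | Sum.inr (Sum.inr T) => pieceB c w xbar S T

lemma ordConn_pieceA (c w : Fin m → ℝ) (S : Finset (Fin m)) (a h : Fin m) (b : Bool) :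
    (pieceA c w S a h b).OrdConnected := by
  rw [pieceA]
  split_ifs with h1 h2
  · have e1 : {t : ℝ | c a * t + w a < c h * t + w h ∧
        0 < (c a * t + w a) + (c h * t + w h)} =
        {t : ℝ | c a * t + w a < c h * t + w h} ∩
        {t : ℝ | 0 * t + 0 < (c a + c h) * t + (w a + w h)} := by
      ext t
      simp only [Set.mem_setOf_eq, Set.mem_inter_iff]
      constructor <;> rintro ⟨u1, u2⟩ <;> exact ⟨u1, by linarith [u2]⟩
    rw [e1]
    exact Set.OrdConnected.inter ordConn_lt_affine ordConn_lt_affine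
  · have e1 : {t : ℝ | c h * t + w h < c a * t + w a ∧
        (c a * t + w a) + (c h * t + w h) < 0} =
        {t : ℝ | c h * t + w h < c a * t + w a} ∩
        {t : ℝ | (c a + c h) * t + (w a + w h) < 0 * t + 0} := by
      ext t
      simp only [Set.mem_setOf_eq, Set.mem_inter_iff]
      constructor <;> rintro ⟨u1, u2⟩ <;> exact ⟨u1, by linarith [u2]⟩
    rw [e1]
    exact Set.OrdConnected.inter ordConn_lt_affine ordConn_lt_affine
  · exact Set.ordConnected_empty

lemma ordConn_pieceC (c w : Fin m → ℝ) (xbar : Finset (Fin m) → ℝ) (S : Finset (Fin m))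
    (h : Fin m) (b : Bool) : (pieceC c w xbar S h b).OrdConnected := by
  rw [pieceC]
  by_cases h1 : h ∉ S
  · rw [if_pos h1]
    cases b
    · simp only [Bool.false_eq_true, if_false]
      have e1 : {t : ℝ | c h * t + w h ≤ - xbar (Finset.univ \ S)} =
          {t : ℝ | c h * t + w h ≤ 0 * t + (- xbar (Finset.univ \ S))} := by
        ext t; simp
      rw [e1]
      exact ordConn_le_affine
    · simp only [if_true]
      have e1 : {t : ℝ | xbar (Finset.univ \ S) ≤ c h * t + w h} =
          {t : ℝ | 0 * t + xbar (Finset.univ \ S) ≤ c h * t + w h} := by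
        ext t; simp
      rw [e1]
      exact ordConn_le_affine
  · rw [if_neg h1]
    exact Set.ordConnected_empty

lemma ordConn_pieceB (c w : Fin m → ℝ) (xbar : Finset (Fin m) → ℝ) (S T : Finset (Fin m)) :
    (pieceB c w xbar S T).OrdConnected := by
  rw [pieceB]
  split_ifs with h1
  · constructor
    intro t1 ht1 t2 ht2 z hz b hbT
    have := abs_affine_le (p := c b) (q := w b) hz.1 hz.2
    exact lt_of_le_of_lt this (max_lt (ht1 b hbT) (ht2 b hbT))
  · exact Set.ordConnected_empty

lemma ordConn_piece (c w : Fin m → ℝ) (xbar : Finset (Fin m) → ℝ) (S : Finset (Fin m)) :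
    ∀ i : PieceIdx m, (piece c w xbar S i).OrdConnected := by
  rintro (⟨a, h, b⟩ | ⟨h, b⟩ | T)
  · exact ordConn_pieceA c w S a h b
  · exact ordConn_pieceC c w xbar S h b
  · exact ordConn_pieceB c w xbar S T

/-! ### The characterized set -/

def XSet (c w : Fin m → ℝ) (xbar : Finset (Fin m) → ℝ) (S : Finset (Fin m)) : Set ℝ :=
  {t | (∀ a ∈ S, ∀ h ∉ S, |c h * t + w h| ≤ |c a * t + w a|) ∧
       (∀ a ∈ S, xbar ((S.filter fun b => |c b * t + w b| ≤ |c a * t + w a|) ∪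
          (Finset.univ \ S)) ≤ |c a * t + w a|) ∧
       (∀ h ∉ S, |c h * t + w h| < xbar (Finset.univ \ S))}

lemma piece_disjoint (c w : Fin m → ℝ) (xbar : Finset (Fin m) → ℝ) (S : Finset (Fin m))
    (hmono : ∀ B C : Finset (Fin m), B ⊆ C → xbar B ≤ xbar C) :
    ∀ i : PieceIdx m, ∀ t ∈ piece c w xbar S i, t ∉ XSet c w xbar S := by
  rintro (⟨a, h, b⟩ | ⟨h, b⟩ | T) t htp htX
  · rw [piece, pieceA] at htp
    by_cases hc : a ∈ S ∧ h ∉ S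
    · rw [if_pos hc] at htp
      have hle := htX.1 a hc.1 h hc.2
      have hlt : |c a * t + w a| < |c h * t + w h| := by
        cases b
        · simp only [Bool.false_eq_true, if_false] at htp
          exact abs_lt_abs_iff'.mpr (Or.inr htp)
        · simp only [if_true] at htp
          exact abs_lt_abs_iff'.mpr (Or.inl htp)
      exact absurd hle (not_le.mpr hlt)
    · rw [if_neg hc] at htp; exact htp
  · rw [piece, pieceC] at htp
    by_cases hc : h ∉ S
    · rw [if_pos hc] at htp
      have hlt := htX.2.2 h hc
      cases b
      · simp only [Bool.false_eq_true, if_false, Set.mem_setOf_eq] at htp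
        have h2 : xbar (Finset.univ \ S) ≤ -(c h * t + w h) := by linarith
        exact absurd hlt (not_lt.mpr (le_trans h2 (neg_le_abs _)))
      · simp only [if_true, Set.mem_setOf_eq] at htp
        exact absurd hlt (not_lt.mpr (le_trans htp (le_abs_self _)))
    · rw [if_neg hc] at htp; exact htp
  · rw [piece, pieceB] at htp
    by_cases hc : T ⊆ S ∧ T.Nonempty
    · rw [if_pos hc] at htp
      obtain ⟨a, haT, hmax⟩ := Finset.exists_max_image T (fun b => |c b * t + w b|) hc.2
      have h1 : T ∪ (Finset.univ \ S) ⊆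
          (S.filter fun b => |c b * t + w b| ≤ |c a * t + w a|) ∪ (Finset.univ \ S) := by
        intro x hx
        rcases Finset.mem_union.mp hx with hx | hx
        · exact Finset.mem_union_left _ (Finset.mem_filter.mpr ⟨hc.1 hx, hmax x hx⟩)
        · exact Finset.mem_union_right _ hx
      have h2 := htX.2.1 a (hc.1 haT)
      have h3 := htp a haT
      exact absurd h3 (not_lt.mpr (le_trans (hmono _ _ h1) h2))
    · rw [if_neg hc] at htp; exact htp

lemma piece_cover (c w : Fin m → ℝ) (xbar : Finset (Fin m) → ℝ) (S : Finset (Fin m)) :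
    ∀ t, t ∉ XSet c w xbar S → ∃ i : PieceIdx m, t ∈ piece c w xbar S i := by
  intro t ht
  by_cases h1 : ∀ a ∈ S, ∀ h ∉ S, |c h * t + w h| ≤ |c a * t + w a|
  · by_cases h2 : ∀ a ∈ S, xbar ((S.filter fun b => |c b * t + w b| ≤ |c a * t + w a|) ∪
        (Finset.univ \ S)) ≤ |c a * t + w a|
    · have h3 : ¬ ∀ h ∉ S, |c h * t + w h| < xbar (Finset.univ \ S) :=
        fun h3 => ht ⟨h1, h2, h3⟩
      push_neg at h3
      obtain ⟨h, hhS, hge⟩ := h3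
      rcases le_abs.mp hge with hc | hc
      · refine ⟨Sum.inr (Sum.inl (h, true)), ?_⟩
        rw [piece, pieceC, if_pos hhS]
        simpa using hc
      · refine ⟨Sum.inr (Sum.inl (h, false)), ?_⟩
        rw [piece, pieceC, if_pos hhS]
        simp only [Bool.false_eq_true, if_false, Set.mem_setOf_eq]
        linarith
    · push_neg at h2
      obtain ⟨a, haS, hlt⟩ := h2
      refine ⟨Sum.inr (Sum.inr (S.filter fun b => |c b * t + w b| ≤ |c a * t + w a|)), ?_⟩
      rw [piece, pieceB, if_pos ⟨Finset.filter_subset _ _,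
        ⟨a, Finset.mem_filter.mpr ⟨haS, le_refl _⟩⟩⟩]
      intro b hb
      exact lt_of_le_of_lt (Finset.mem_filter.mp hb).2 hlt
  · push_neg at h1
    obtain ⟨a, haS, h, hhS, hlt⟩ := h1
    rcases abs_lt_abs_iff'.mp hlt with hc | hc
    · refine ⟨Sum.inl (a, h, true), ?_⟩
      rw [piece, pieceA, if_pos ⟨haS, hhS⟩]
      simpa using hc
    · refine ⟨Sum.inl (a, h, false), ?_⟩
      rw [piece, pieceA, if_pos ⟨haS, hhS⟩]
      simp only [Bool.false_eq_true, if_false, Set.mem_setOf_eq]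
      exact hc

/-! ### Critical endpoints of B-pieces -/

def Crit (c w : Fin m → ℝ) (xbar : Finset (Fin m) → ℝ) (S T : Finset (Fin m))
    (bc : Fin m × Fin m) : Prop :=
  bc.1 ∈ T ∧ bc.2 ∈ T ∧ c bc.1 ≠ 0 ∧ c bc.2 ≠ 0 ∧
    pieceB c w xbar S T =
      Set.Ioo (lo c w bc.1 (xbar (T ∪ (Finset.univ \ S))))
              (hi c w bc.2 (xbar (T ∪ (Finset.univ \ S))))

lemma pieceB_cond {c w : Fin m → ℝ} {xbar : Finset (Fin m) → ℝ} {S T : Finset (Fin m)}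
    (hne : (pieceB c w xbar S T).Nonempty) : T ⊆ S ∧ T.Nonempty := by
  by_contra hc
  rw [pieceB, if_neg hc] at hne
  exact Set.not_nonempty_empty hne

lemma pieceA_cond {c w : Fin m → ℝ} {S : Finset (Fin m)} {a h : Fin m} {b : Bool}
    (hne : (pieceA c w S a h b).Nonempty) : a ∈ S ∧ h ∉ S := by
  by_contra hc
  rw [pieceA, if_neg hc] at hne
  exact Set.not_nonempty_empty hne

lemma pieceC_not_both {c w : Fin m → ℝ} {xbar : Finset (Fin m) → ℝ} {S : Finset (Fin m)}
    {h : Fin m} {b : Bool} (hbdd : Bornology.IsBounded (pieceC c w xbar S h b))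
    (hne : (pieceC c w xbar S h b).Nonempty) : False := by
  by_cases hc : h ∉ S
  · rw [pieceC, if_pos hc] at hbdd hne
    cases b
    · simp only [Bool.false_eq_true, if_false] at hbdd hne
      have he : {t : ℝ | c h * t + w h ≤ -xbar (Finset.univ \ S)} =
          {t : ℝ | xbar (Finset.univ \ S) ≤ (-(c h)) * t + (-(w h))} := by
        ext t
        simp only [Set.mem_setOf_eq]
        constructor <;> intro <;> nlinarith
      rw [he] at hbdd hne
      exact ray_unbounded hbdd hne
    · simp only [if_true] at hbdd hne
      exact ray_unbounded hbdd hne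
  · rw [pieceC, if_neg hc] at hne
    exact Set.not_nonempty_empty hne

lemma crit_exists {c w : Fin m → ℝ} {xbar : Finset (Fin m) → ℝ} {S T : Finset (Fin m)}
    (hbdd : Bornology.IsBounded (pieceB c w xbar S T))
    (hne : (pieceB c w xbar S T).Nonempty) :
    ∃ bc : Fin m × Fin m, Crit c w xbar S T bc := by
  obtain ⟨hTS, hTne⟩ := pieceB_cond hne
  set θ := xbar (T ∪ (Finset.univ \ S)) with hθ
  have hpB : pieceB c w xbar S T = {t | ∀ b ∈ T, |c b * t + w b| < θ} := by
    rw [pieceB, if_pos ⟨hTS, hTne⟩]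
  obtain ⟨t0, ht0⟩ := hne
  have ht0' : ∀ b ∈ T, |c b * t0 + w b| < θ := by rw [hpB] at ht0; exact ht0
  set E := T.filter (fun b => c b ≠ 0) with hE
  have hEne : E.Nonempty := by
    by_contra hEe
    rw [Finset.not_nonempty_iff_eq_empty] at hEe
    have hall : ∀ b ∈ T, c b = 0 := by
      intro b hb
      by_contra hcb
      have hbe : b ∈ E := Finset.mem_filter.mpr ⟨hb, hcb⟩
      rw [hEe] at hbe
      exact absurd hbe (Finset.notMem_empty b)
    have huniv : pieceB c w xbar S T = Set.univ := by
      rw [hpB]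
      ext t
      simp only [Set.mem_setOf_eq, Set.mem_univ, iff_true]
      intro b hb
      have h0 := ht0' b hb
      rw [hall b hb] at h0 ⊢
      simpa using h0
    rw [huniv] at hbdd
    obtain ⟨M, hM⟩ := hbdd.bddAbove
    have := hM (Set.mem_univ (M + 1))
    linarith
  obtain ⟨bmax, hbE, hbmax⟩ := Finset.exists_max_image E (fun b => lo c w b θ) hEne
  obtain ⟨emin, heE, hemin⟩ := Finset.exists_min_image E (fun b => hi c w b θ) hEne
  have hcb : c bmax ≠ 0 := (Finset.mem_filter.mp hbE).2
  have hce : c emin ≠ 0 := (Finset.mem_filter.mp heE).2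
  refine ⟨(bmax, emin), (Finset.mem_filter.mp hbE).1, (Finset.mem_filter.mp heE).1,
    hcb, hce, ?_⟩
  rw [hpB]
  ext t
  simp only [Set.mem_setOf_eq, Set.mem_Ioo]
  constructor
  · intro htI
    constructor
    · have h2 : t ∈ Set.Ioo (lo c w bmax θ) (hi c w bmax θ) := by
        rw [← strip_eq hcb θ]
        exact htI bmax (Finset.mem_filter.mp hbE).1
      exact h2.1
    · have h2 : t ∈ Set.Ioo (lo c w emin θ) (hi c w emin θ) := by
        rw [← strip_eq hce θ]
        exact htI emin (Finset.mem_filter.mp heE).1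
      exact h2.2
  · rintro ⟨hl, hr⟩ b hb
    by_cases hcb' : c b = 0
    · have h0 := ht0' b hb
      rw [hcb'] at h0 ⊢
      simpa using h0
    · have hbE' : b ∈ E := Finset.mem_filter.mpr ⟨hb, hcb'⟩
      have h2 : t ∈ Set.Ioo (lo c w b θ) (hi c w b θ) :=
        ⟨lt_of_le_of_lt (hbmax b hbE') hl, lt_of_lt_of_le hr (hemin b hbE')⟩
      rw [← strip_eq hcb' θ] at h2
      exact h2

open Classical in
noncomputable def lab (c w : Fin m → ℝ) (xbar : Finset (Fin m) → ℝ) (S : Finset (Fin m))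
    (i0 : Fin m) : PieceIdx m → Sym2 (Fin m)
  | Sum.inl (a, h, _) => s(a, h)
  | Sum.inr (Sum.inl (h, _)) => s(h, h)
  | Sum.inr (Sum.inr T) =>
      if hc : ∃ bc : Fin m × Fin m, Crit c w xbar S T bc then s(hc.choose.1, hc.choose.2)
      else s(i0, i0)

lemma pieceA_true_eq {c w : Fin m → ℝ} {S : Finset (Fin m)} {a h : Fin m}
    (hc : a ∈ S ∧ h ∉ S) :
    pieceA c w S a h true = {t : ℝ | c a * t + w a < c h * t + w h ∧
      0 < (c a * t + w a) + (c h * t + w h)} := by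
  rw [pieceA, if_pos hc]
  simp

lemma pieceA_false_eq {c w : Fin m → ℝ} {S : Finset (Fin m)} {a h : Fin m}
    (hc : a ∈ S ∧ h ∉ S) :
    pieceA c w S a h false = {t : ℝ | c h * t + w h < c a * t + w a ∧
      (c a * t + w a) + (c h * t + w h) < 0} := by
  rw [pieceA, if_pos hc]
  simp

lemma pieceA_union {c w : Fin m → ℝ} {S : Finset (Fin m)} {a h : Fin m} {b1 b2 : Bool}
    (hbdd1 : Bornology.IsBounded (pieceA c w S a h b1))
    (hne1 : (pieceA c w S a h b1).Nonempty)
    (hne2 : (pieceA c w S a h b2).Nonempty) :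
    (pieceA c w S a h b1 ∪ pieceA c w S a h b2).OrdConnected := by
  obtain ⟨haS, hhS⟩ := pieceA_cond hne1
  by_cases hbb : b1 = b2
  · subst hbb
    rw [Set.union_self]
    exact ordConn_pieceA c w S a h b1
  · have hlead : (c h) ^ 2 - (c a) ^ 2 < 0 := by
      cases b1
      · have he : pieceA c w S a h false =
            {t : ℝ | 0 < (c a - c h) * t + (w a - w h) ∧
              0 < (-(c a) - c h) * t + (-(w a) - w h)} := by
          rw [pieceA_false_eq ⟨haS, hhS⟩]
          ext t
          simp only [Set.mem_setOf_eq]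
          constructor <;> rintro ⟨u1, u2⟩ <;> constructor <;> nlinarith
        rw [he] at hbdd1 hne1
        have hs := slopes_of_bounded hbdd1 hne1
        nlinarith
      · have he : pieceA c w S a h true =
            {t : ℝ | 0 < (c h - c a) * t + (w h - w a) ∧
              0 < (c a + c h) * t + (w a + w h)} := by
          rw [pieceA_true_eq ⟨haS, hhS⟩]
          ext t
          simp only [Set.mem_setOf_eq]
          constructor <;> rintro ⟨u1, u2⟩ <;> constructor <;> nlinarith
        rw [he] at hbdd1 hne1
        have hs := slopes_of_bounded hbdd1 hne1
        nlinarith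
    have h1 : pieceA c w S a h true ∪ pieceA c w S a h false =
        {t : ℝ | 0 < (c h * t + w h) ^ 2 - (c a * t + w a) ^ 2} := by
      rw [pieceA_true_eq ⟨haS, hhS⟩, pieceA_false_eq ⟨haS, hhS⟩]
      ext t
      simp only [Set.mem_union, Set.mem_setOf_eq]
      constructor
      · rintro (⟨u1, u2⟩ | ⟨u1, u2⟩) <;> nlinarith
      · intro hq
        rcases lt_trichotomy ((c a * t + w a) + (c h * t + w h)) 0 with hs | hs | hs
        · right
          constructor <;> nlinarith
        · exfalso
          have hv : c h * t + w h = -(c a * t + w a) := by linarith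
          rw [hv] at hq
          nlinarith
        · left
          constructor <;> nlinarith
    have hun : pieceA c w S a h b1 ∪ pieceA c w S a h b2 =
        {t : ℝ | 0 < (c h * t + w h) ^ 2 - (c a * t + w a) ^ 2} := by
      cases b1 <;> cases b2
      · exact absurd rfl hbb
      · rw [Set.union_comm]; exact h1
      · exact h1
      · exact absurd rfl hbb
    rw [hun]
    constructor
    intro t1 h1' t2 h2' z hz
    exact quad_pos_between (le_of_lt hlead) h1' h2' hz.1 hz.2

lemma pieceB_union {c w : Fin m → ℝ} {xbar : Finset (Fin m) → ℝ} {S T1 T2 : Finset (Fin m)}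
    (hxpos : ∀ B, 0 < xbar B)
    (hne1 : (pieceB c w xbar S T1).Nonempty)
    (hne2 : (pieceB c w xbar S T2).Nonempty)
    {bc1 bc2 : Fin m × Fin m}
    (hc1 : Crit c w xbar S T1 bc1) (hc2 : Crit c w xbar S T2 bc2)
    (hl : s(bc1.1, bc1.2) = s(bc2.1, bc2.2)) :
    (pieceB c w xbar S T1 ∪ pieceB c w xbar S T2).OrdConnected := by
  obtain ⟨b1, e1⟩ := bc1
  obtain ⟨b2, e2⟩ := bc2
  obtain ⟨hb1T, he1T, hcb1, hce1, heq1⟩ := hc1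
  obtain ⟨hb2T, he2T, hcb2, hce2, heq2⟩ := hc2
  set θ1 := xbar (T1 ∪ (Finset.univ \ S)) with hθ1'
  set θ2 := xbar (T2 ∪ (Finset.univ \ S)) with hθ2'
  have hθ1 : 0 < θ1 := hxpos _
  have hθ2 : 0 < θ2 := hxpos _
  refine ordConn_union_of_inter (ordConn_pieceB c w xbar S T1) (ordConn_pieceB c w xbar S T2) ?_
  obtain ⟨x1, hx1⟩ := hne1
  obtain ⟨x2, hx2⟩ := hne2
  rw [heq1] at hx1
  rw [heq2] at hx2
  rw [heq1, heq2]
  rcases Sym2.eq_iff.mp (show s(b1, e1) = s(b2, e2) from hl) with ⟨rfl, rfl⟩ | ⟨he1, he2⟩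
  · -- aligned
    rcases le_total θ1 θ2 with hle | hle
    · refine ⟨x1, hx1, ?_, ?_⟩
      · exact lt_of_le_of_lt (lo_anti hcb1 hle) hx1.1
      · exact lt_of_lt_of_le hx1.2 (hi_mono hce1 hle)
    · refine ⟨x2, ?_, hx2⟩
      constructor
      · exact lt_of_le_of_lt (lo_anti hcb1 hle) hx2.1
      · exact lt_of_lt_of_le hx2.2 (hi_mono hce1 hle)
  · -- crossed : b1 = e2, e1 = b2
    subst he1
    subst he2
    have hL1H1 : lo c w b1 θ1 < hi c w e1 θ1 := lt_trans hx1.1 hx1.2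
    have hL2H2 : lo c w e1 θ2 < hi c w b1 θ2 := lt_trans hx2.1 hx2.2
    have hL1H2 : lo c w b1 θ1 < hi c w b1 θ2 := lo_lt_hi hcb1 hθ1 hθ2
    have hL2H1 : lo c w e1 θ2 < hi c w e1 θ1 := lo_lt_hi hce1 hθ2 hθ1
    set L1 := lo c w b1 θ1
    set H1 := hi c w e1 θ1
    set L2 := lo c w e1 θ2
    set H2 := hi c w b1 θ2
    have h12 : max L1 L2 < min H1 H2 :=
      max_lt (lt_min hL1H1 hL1H2) (lt_min hL2H1 hL2H2)
    have hp1 : L1 ≤ max L1 L2 := le_max_left _ _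
    have hp2 : L2 ≤ max L1 L2 := le_max_right _ _
    have hp3 : min H1 H2 ≤ H1 := min_le_left _ _
    have hp4 : min H1 H2 ≤ H2 := min_le_right _ _
    refine ⟨(max L1 L2 + min H1 H2) / 2, ⟨?_, ?_⟩, ⟨?_, ?_⟩⟩ <;> linarith

open Classical in
lemma label_prop (c w : Fin m → ℝ) (xbar : Finset (Fin m) → ℝ) (S : Finset (Fin m))
    (i0 : Fin m) (hxpos : ∀ B, 0 < xbar B) :
    ∀ i j : PieceIdx m, lab c w xbar S i0 i = lab c w xbar S i0 j →
      (piece c w xbar S i).Nonempty → (piece c w xbar S j).Nonempty →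
      Bornology.IsBounded (piece c w xbar S i) →
      Bornology.IsBounded (piece c w xbar S j) →
      (piece c w xbar S i ∪ piece c w xbar S j).OrdConnected := by
  rintro (⟨a, h, b⟩ | ⟨h, b⟩ | T) (⟨a', h', b'⟩ | ⟨h', b'⟩ | T') hl hne1 hne2 hbdd1 hbdd2
  · -- A, A
    simp only [piece] at hne1 hne2 hbdd1 hbdd2 ⊢
    simp only [lab] at hl
    obtain ⟨haS, hhS⟩ := pieceA_cond hne1
    obtain ⟨ha'S, hh'S⟩ := pieceA_cond hne2
    rcases Sym2.eq_iff.mp hl with ⟨rfl, rfl⟩ | ⟨h1, h2⟩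
    · exact pieceA_union hbdd1 hne1 hne2
    · exact absurd (h1 ▸ haS) hh'S
  · -- A, C
    exact absurd (pieceC_not_both hbdd2 hne2) not_false
  · -- A, B
    simp only [piece] at hne1 hne2 hbdd1 hbdd2
    simp only [lab] at hl
    obtain ⟨haS, hhS⟩ := pieceA_cond hne1
    have hcrit : ∃ bc : Fin m × Fin m, Crit c w xbar S T' bc := crit_exists hbdd2 hne2
    rw [dif_pos hcrit] at hl
    have hspec := hcrit.choose_spec
    have hTS := (pieceB_cond hne2).1
    rcases Sym2.eq_iff.mp hl with ⟨h1, h2⟩ | ⟨h1, h2⟩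
    · exact absurd (hTS (h2.symm ▸ hspec.2.1)) hhS
    · exact absurd (hTS (h2.symm ▸ hspec.1)) hhS
  · -- C, A
    exact absurd (pieceC_not_both hbdd1 hne1) not_false
  · -- C, C
    exact absurd (pieceC_not_both hbdd1 hne1) not_false
  · -- C, B
    exact absurd (pieceC_not_both hbdd1 hne1) not_false
  · -- B, A
    simp only [piece] at hne1 hne2 hbdd1 hbdd2
    simp only [lab] at hl
    obtain ⟨haS, hhS⟩ := pieceA_cond hne2
    have hcrit : ∃ bc : Fin m × Fin m, Crit c w xbar S T bc := crit_exists hbdd1 hne1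
    rw [dif_pos hcrit] at hl
    have hspec := hcrit.choose_spec
    have hTS := (pieceB_cond hne1).1
    rcases Sym2.eq_iff.mp hl with ⟨h1, h2⟩ | ⟨h1, h2⟩
    · exact absurd (hTS (h2 ▸ hspec.2.1)) hhS
    · exact absurd (hTS (h1 ▸ hspec.1)) hhS
  · -- B, C
    exact absurd (pieceC_not_both hbdd2 hne2) not_false
  · -- B, B
    simp only [piece] at hne1 hne2 hbdd1 hbdd2 ⊢
    simp only [lab] at hl
    have hcrit1 : ∃ bc : Fin m × Fin m, Crit c w xbar S T bc := crit_exists hbdd1 hne1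
    have hcrit2 : ∃ bc : Fin m × Fin m, Crit c w xbar S T' bc := crit_exists hbdd2 hne2
    rw [dif_pos hcrit1, dif_pos hcrit2] at hl
    exact pieceB_union hxpos hne1 hne2 hcrit1.choose_spec hcrit2.choose_spec hl


end CondSupportAux

/-- **Structure of the conditional support (two-sided step-down rule).** The
closure of the conditional support `𝒳ₛ(z, S)` is a union of at most
`m(m+1)/2 + 1` pairwise disjoint closed (possibly unbounded) intervals, and
the closure differs from `𝒳ₛ(z, S)` itself by a Lebesgue-null set. -/
theorem condSupport_closure_union_of_intervals
    (hm : 0 < m)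
    (V : Matrix (Fin m) (Fin m) ℝ) (hV : V.PosDef)
    (xbar : Finset (Fin m) → ℝ) (hxpos : ∀ B, 0 < xbar B)
    (hxmono : ∀ B C : Finset (Fin m), B ⊆ C → xbar B ≤ xbar C)
    (z : Fin m → ℝ) (S : Finset (Fin m)) (s : Fin m) (hs : s ∈ S) :
    (∃ n : ℕ, n ≤ m * (m + 1) / 2 + 1 ∧
      ∃ I : Fin n → Set ℝ,
        (∀ k, IsClosed (I k) ∧ (I k).OrdConnected) ∧
        (Pairwise fun k k' => Disjoint (I k) (I k')) ∧
        closure (condSupport xbar V z S s) = ⋃ k, I k) ∧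
    volume (closure (condSupport xbar V z S s) \ condSupport xbar V z S s) = 0 := by
  classical
  have hXeq : condSupport xbar V z S s =
      CondSupportAux.XSet (fun h => corrMat V h s) z xbar S := by
    ext t
    exact CondSupportAux.selects_iff xbar
      (fun i => |corrMat V i s * t + z i|) hxmono S
  constructor
  · obtain ⟨n, hn, I, hI1, hI2, hI3⟩ :=
      CondSupportAux.part1 (CondSupportAux.XSet (fun h => corrMat V h s) z xbar S)
        (CondSupportAux.piece (fun h => corrMat V h s) z xbar S)
        (CondSupportAux.lab (fun h => corrMat V h s) z xbar S ⟨0, hm⟩)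
        (CondSupportAux.ordConn_piece _ _ _ _)
        (CondSupportAux.piece_disjoint _ _ _ _ hxmono)
        (CondSupportAux.piece_cover _ _ _ _)
        (CondSupportAux.label_prop _ _ _ _ _ hxpos)
    refine ⟨n, ?_, I, hI1, hI2, ?_⟩
    · have hcard : Fintype.card (Sym2 (Fin m)) = m * (m + 1) / 2 := by
        rw [Sym2.card, Fintype.card_fin, Nat.choose_two_right, Nat.add_sub_cancel,
          Nat.mul_comm]
      rw [hcard] at hn
      exact hn
    · rw [hXeq]
      exact hI3
  · rw [hXeq]
    refine CondSupportAux.part2 _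
      (CondSupportAux.piece (fun h => corrMat V h s) z xbar S)
      (CondSupportAux.ordConn_piece _ _ _ _) ?_
    intro t
    constructor
    · exact CondSupportAux.piece_cover _ _ _ _ t
    · intro hex htX
      obtain ⟨i, hi⟩ := hex
      exact CondSupportAux.piece_disjoint _ _ _ _ hxmono i t hi htX
end

section
/- Consider a one-sided step-down rule, a set S ⊆ {1,…,m}, s ∈ S and z ∈ ℝ^m, and define S_+ = {h ∈ S : Ω_{h,s} > 0} and S_- = {h ∈ S : Ω_{h,s} < 0}. Then the closure of the conditional support 𝒳_s(z, S) is a union of at most |S_+|·|S_-| + 1 pairwise disjoint intervals. In particular, if S_- = ∅ (no selected statistic is negatively correlated with X_s), the closure of the conditional support is a single connected interval. -/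
open MeasureTheory ProbabilityTheory Filter

variable {m : ℕ}

/-- The one-sided step-down procedure run on `x` returns exactly `S`. -/
def SelectsOneSided (xbar : Finset (Fin m) → ℝ) (x : Fin m → ℝ) (S : Finset (Fin m)) : Prop :=
  ∃ l : List (Fin m), SortedEnum x l ∧ stepDownRun xbar x l = S

/-- The conditional support `𝒳ₛ(z, S)` for the one-sided rule. -/
def condSupportOne (xbar : Finset (Fin m) → ℝ) (V : Matrix (Fin m) (Fin m) ℝ)
    (z : Fin m → ℝ) (S : Finset (Fin m)) (s : Fin m) : Set ℝ :=
  {t : ℝ | SelectsOneSided xbar (fun h => corrMat V h s * t + z h) S}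

section Aux

variable (xbar : Finset (Fin m) → ℝ) (x : Fin m → ℝ)

/-- Explicit characterization of the outcome of the step-down procedure. -/
def StepCond (S : Finset (Fin m)) : Prop :=
  (∀ h ∈ S, ∀ k ∉ S, x k ≤ x h) ∧
  (∀ h ∈ S, xbar (Sᶜ ∪ S.filter fun h' => x h' ≤ x h) ≤ x h) ∧
  (S = Finset.univ ∨ ∀ k ∉ S, x k < xbar Sᶜ)

lemma stepDownRun_append_s6 (l₁ l₂ : List (Fin m))
    (H : ∀ pre a post, l₁ = pre ++ a :: post →
      xbar (insert a (post ++ l₂).toFinset) ≤ x a)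
    (H2 : stepDownRun xbar x l₂ = ∅) :
    stepDownRun xbar x (l₁ ++ l₂) = l₁.toFinset := by
  induction l₁ with
  | nil => simpa using H2
  | cons a t ih =>
    have ha : xbar (insert a (t ++ l₂).toFinset) ≤ x a := H [] a t rfl
    have hlt : ¬ x a < xbar (insert a (t ++ l₂).toFinset) := not_lt.2 ha
    have : stepDownRun xbar x ((a :: t) ++ l₂)
        = insert a (stepDownRun xbar x (t ++ l₂)) := by
      simp only [List.cons_append, stepDownRun, List.append_eq, if_neg hlt]
    rw [this, ih fun pre b post hpre => H (a :: pre) b post (by rw [hpre]; rfl)]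
    simp

lemma stepDownRun_spec : ∀ (l : List (Fin m)) (S : Finset (Fin m)),
    stepDownRun xbar x l = S →
    (S = l.toFinset ∧ ∀ pre a post, l = pre ++ a :: post →
        xbar (insert a post.toFinset) ≤ x a) ∨
    (∃ l₁ k l₂, l = l₁ ++ k :: l₂ ∧ S = l₁.toFinset ∧
        x k < xbar (insert k l₂.toFinset) ∧
        ∀ pre a post, l₁ = pre ++ a :: post →
          xbar (insert a (post ++ k :: l₂).toFinset) ≤ x a) := by
  intro l
  induction l with
  | nil =>
    intro S hS
    left
    refine ⟨hS.symm ▸ rfl, ?_⟩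
    intro pre a post hpre
    exact absurd hpre (by simp)
  | cons h t ih =>
    intro S hS
    by_cases hcond : x h < xbar (insert h t.toFinset)
    · right
      refine ⟨[], h, t, by simp, ?_, hcond, ?_⟩
      · have : stepDownRun xbar x (h :: t) = ∅ := by
          simp only [stepDownRun, if_pos hcond]
        simp [← hS, this]
      · intro pre a post hpre
        exact absurd hpre (by simp)
    · have hrun : stepDownRun xbar x (h :: t) = insert h (stepDownRun xbar x t) := by
        simp only [stepDownRun, if_neg hcond]
      rcases ih (stepDownRun xbar x t) rfl with ⟨h1, h2⟩ | ⟨l₁, k, l₂, hdec, hSt, hk, hsat⟩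
      · left
        constructor
        · rw [← hS, hrun, h1]
          simp
        · intro pre a post hpre
          match pre, hpre with
          | [], hpre =>
            have ha : a = h := by simpa using ((List.cons_eq_cons.1 hpre).1).symm
            have hpost : post = t := by simpa using ((List.cons_eq_cons.1 hpre).2).symm
            subst ha; subst hpost
            exact not_lt.1 hcond
          | b :: pre', hpre =>
            have hb : t = pre' ++ a :: post := by
              simpa using (List.cons_eq_cons.1 hpre).2
            exact h2 pre' a post hb
      · right
        refine ⟨h :: l₁, k, l₂, by rw [hdec]; rfl, ?_, hk, ?_⟩
        · rw [← hS, hrun, hSt]; simp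
        · intro pre a post hpre
          match pre, hpre with
          | [], hpre =>
            have ha : a = h := by simpa using ((List.cons_eq_cons.1 hpre).1).symm
            have hpost : post = l₁ := by simpa using ((List.cons_eq_cons.1 hpre).2).symm
            rw [ha, hpost, ← hdec]
            exact not_lt.1 hcond
          | b :: pre', hpre =>
            have hb : l₁ = pre' ++ a :: post := by
              simpa using (List.cons_eq_cons.1 hpre).2
            exact hsat pre' a post hb

lemma condC_of
    (hxmono : ∀ B C : Finset (Fin m), B ⊆ C → xbar B ≤ xbar C)
    (l : List (Fin m)) (hcomp : ∀ i : Fin m, i ∈ l)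
    (S : Finset (Fin m)) (l₁ rest : List (Fin m)) (hdec : l = l₁ ++ rest)
    (hS : S = l₁.toFinset)
    (hsat : ∀ pre a post, l₁ = pre ++ a :: post →
      xbar (insert a (post ++ rest).toFinset) ≤ x a) :
    ∀ h ∈ S, xbar (Sᶜ ∪ S.filter fun h' => x h' ≤ x h) ≤ x h := by
  classical
  intro h hh
  have hhl₁ : h ∈ l₁ := by rwa [hS, List.mem_toFinset] at hh
  set p : Fin m → Bool := fun b => decide (x h < x b) with hp
  have hdW : l₁.dropWhile p ≠ [] := by
    intro hnil
    have : l₁ = l₁.takeWhile p := by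
      conv_lhs => rw [← List.takeWhile_append_dropWhile (p := p) (l := l₁)]
      rw [hnil, List.append_nil]
    have hmem : h ∈ l₁.takeWhile p := this ▸ hhl₁
    have : p h := List.mem_takeWhile_imp hmem
    simp [hp] at this
  set a := (l₁.dropWhile p).head hdW with hadef
  set post := (l₁.dropWhile p).tail with hpostdef
  have hcons : l₁.dropWhile p = a :: post := (List.cons_head_tail hdW).symm
  have hl₁ : l₁ = l₁.takeWhile p ++ a :: post := by
    rw [← hcons, List.takeWhile_append_dropWhile]
  have hxa : x a ≤ x h := by
    have := List.head_dropWhile_not p (l := l₁) hdW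
    rw [← hadef] at this
    simpa [hp] using this
  have hsub : Sᶜ ∪ S.filter (fun h' => x h' ≤ x h) ⊆ insert a (post ++ rest).toFinset := by
    intro b hb
    rcases Finset.mem_union.1 hb with hb | hb
    · have hbS : b ∉ S := Finset.mem_compl.1 hb
      have hbl : b ∈ l := hcomp b
      rw [hdec, List.mem_append] at hbl
      rcases hbl with hbl | hbl
      · exact absurd (hS ▸ List.mem_toFinset.2 hbl) hbS
      · exact Finset.mem_insert.2 (Or.inr (List.mem_toFinset.2
          (List.mem_append.2 (Or.inr hbl))))
    · rcases Finset.mem_filter.1 hb with ⟨hbS, hble⟩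
      have hbl₁ : b ∈ l₁ := by rwa [hS, List.mem_toFinset] at hbS
      rw [hl₁, List.mem_append] at hbl₁
      rcases hbl₁ with hbl₁ | hbl₁
      · have : p b := List.mem_takeWhile_imp hbl₁
        simp only [hp, decide_eq_true_eq] at this
        exact absurd hble (not_le.2 this)
      · rcases List.mem_cons.1 hbl₁ with hba | hbp
        · exact Finset.mem_insert.2 (Or.inl hba)
        · exact Finset.mem_insert.2 (Or.inr (List.mem_toFinset.2
            (List.mem_append.2 (Or.inl hbp))))
  calc xbar (Sᶜ ∪ S.filter fun h' => x h' ≤ x h)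
      ≤ xbar (insert a (post ++ rest).toFinset) := hxmono _ _ hsub
    _ ≤ x a := hsat _ a post hl₁
    _ ≤ x h := hxa

lemma selectsOneSided_iff
    (hxmono : ∀ B C : Finset (Fin m), B ⊆ C → xbar B ≤ xbar C)
    (S : Finset (Fin m)) :
    SelectsOneSided xbar x S ↔ StepCond xbar x S := by
  classical
  constructor
  · rintro ⟨l, ⟨hnd, hcomp, hsort⟩, hrun⟩
    rcases stepDownRun_spec xbar x l S hrun with ⟨hSl, hsat⟩ | ⟨l₁, k₀, l₂, hdec, hSl, hk₀, hsat⟩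
    · have hSuniv : S = Finset.univ := by
        rw [hSl]; exact Finset.eq_univ_iff_forall.2 fun i => List.mem_toFinset.2 (hcomp i)
      refine ⟨?_, ?_, Or.inl hSuniv⟩
      · intro h _ k hk; exact absurd (hSuniv ▸ Finset.mem_univ k) hk
      · exact condC_of xbar x hxmono l hcomp S l ([] : List (Fin m)) (by simp) (by simpa using hSl)
          (fun pre a post hpre => by simpa using hsat pre a post hpre)
    · have hnd' := hdec ▸ hnd
      have hcompl : ∀ b : Fin m, b ∉ S ↔ b ∈ k₀ :: l₂ := by
        intro b
        constructor
        · intro hbS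
          have hbl : b ∈ l := hcomp b
          rw [hdec, List.mem_append] at hbl
          rcases hbl with hbl | hbl
          · exact absurd (hSl ▸ List.mem_toFinset.2 hbl) hbS
          · exact hbl
        · intro hbl hbS
          have hbl₁ : b ∈ l₁ := by rwa [hSl, List.mem_toFinset] at hbS
          exact (List.nodup_append.1 hnd').2.2 b hbl₁ b hbl rfl
      have hsortl := hdec ▸ hsort
      have hsplit := List.pairwise_append.1 hsortl
      refine ⟨?_, ?_, Or.inr ?_⟩
      · intro h hh k hk
        have hhl₁ : h ∈ l₁ := by rwa [hSl, List.mem_toFinset] at hh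
        exact hsplit.2.2 h hhl₁ k ((hcompl k).1 hk)
      · exact condC_of xbar x hxmono l hcomp S l₁ (k₀ :: l₂) hdec hSl hsat
      · intro k hk
        have hkl : k ∈ k₀ :: l₂ := (hcompl k).1 hk
        have hxk : x k ≤ x k₀ := by
          rcases List.mem_cons.1 hkl with h | h
          · exact le_of_eq (by rw [h])
          · exact (List.pairwise_cons.1 hsplit.2.1).1 k h
        have hSc : Sᶜ = insert k₀ l₂.toFinset := by
          ext b
          rw [Finset.mem_compl, hcompl b]
          simp [List.mem_cons]
        rw [hSc]
        exact lt_of_le_of_lt hxk hk₀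
  · rintro ⟨hB, hC, hD⟩
    set r : Fin m → Fin m → Prop := fun i j => x j ≤ x i with hr
    haveI : DecidableRel r := fun i j => Real.decidableLE _ _
    haveI : IsTotal (Fin m) r := ⟨fun i j => le_total (x j) (x i)⟩
    haveI : IsTrans (Fin m) r := ⟨fun _ _ _ hab hbc => le_trans hbc hab⟩
    set lS := List.insertionSort r S.toList with hlS
    set lC := List.insertionSort r Sᶜ.toList with hlC
    have hpS : List.Perm lS S.toList := List.perm_insertionSort r _
    have hpC : List.Perm lC Sᶜ.toList := List.perm_insertionSort r _
    have memS : ∀ b, b ∈ lS ↔ b ∈ S := fun b => by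
      rw [hpS.mem_iff, Finset.mem_toList]
    have memC : ∀ b, b ∈ lC ↔ b ∉ S := fun b => by
      rw [hpC.mem_iff, Finset.mem_toList, Finset.mem_compl]
    have hsortS : lS.Pairwise r := List.pairwise_insertionSort (r := r) _
    have hsortC : lC.Pairwise r := List.pairwise_insertionSort (r := r) _
    refine ⟨lS ++ lC, ⟨?_, ?_, ?_⟩, ?_⟩
    · exact List.Nodup.append (hpS.nodup_iff.2 (Finset.nodup_toList S))
        (hpC.nodup_iff.2 (Finset.nodup_toList Sᶜ))
        (fun b hbS hbC => (memC b).1 hbC ((memS b).1 hbS))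
    · intro i
      rw [List.mem_append, memS, memC]
      exact (em (i ∈ S)).imp id id
    · exact List.pairwise_append.2 ⟨hsortS, hsortC,
        fun a ha b hb => hB a ((memS a).1 ha) b ((memC b).1 hb)⟩
    · have H2 : stepDownRun xbar x lC = ∅ := by
        cases hlc : lC with
        | nil => simp [stepDownRun]
        | cons k rest =>
          have hkS : k ∉ S := (memC k).1 (hlc ▸ (List.mem_cons_self : k ∈ k :: rest))
          rcases hD with hD | hD
          · exfalso
            have : (k : Fin m) ∈ Sᶜ.toList := hpC.subset (hlc ▸ (List.mem_cons_self : k ∈ k :: rest))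
            rw [Finset.mem_toList, Finset.mem_compl] at this
            exact this (hD ▸ Finset.mem_univ k)
          · have hins : insert k rest.toFinset = Sᶜ := by
              have h1 : (k :: rest).toFinset = Sᶜ := by
                rw [← hlc, List.toFinset_eq_of_perm _ _ hpC, Finset.toList_toFinset]
              simpa using h1
            simp only [stepDownRun, hins, if_pos (hD k hkS)]
      refine (stepDownRun_append_s6 xbar x lS lC ?_ H2).trans ?_
      swap
      · rw [List.toFinset_eq_of_perm _ _ hpS, Finset.toList_toFinset]
      intro pre a post hpre
      have haS : a ∈ S := (memS a).1 (hpre ▸ List.mem_append.2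
        (Or.inr (List.mem_cons_self : a ∈ a :: post)))
      have hsub : insert a (post ++ lC).toFinset ⊆
          Sᶜ ∪ S.filter (fun h' => x h' ≤ x a) := by
        intro b hb
        rcases Finset.mem_insert.1 hb with hb | hb
        · exact Finset.mem_union.2 (Or.inr (Finset.mem_filter.2
            ⟨hb ▸ haS, hb ▸ le_refl (x a)⟩))
        · rw [List.mem_toFinset, List.mem_append] at hb
          rcases hb with hb | hb
          · have hbS : b ∈ S := (memS b).1 (hpre ▸ List.mem_append.2
              (Or.inr (List.mem_cons.2 (Or.inr hb))))
            have hsortS' : List.Pairwise r (pre ++ a :: post) := hpre ▸ hsortS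
            have hsub' : List.Pairwise r (a :: post) :=
              List.Pairwise.sublist (List.sublist_append_right pre (a :: post)) hsortS'
            exact Finset.mem_union.2 (Or.inr (Finset.mem_filter.2
              ⟨hbS, (List.pairwise_cons.1 hsub').1 b hb⟩))
          · exact Finset.mem_union.2 (Or.inl (Finset.mem_compl.2 ((memC b).1 hb)))
      calc xbar (insert a (post ++ lC).toFinset)
          ≤ xbar (Sᶜ ∪ S.filter (fun h' => x h' ≤ x a)) := hxmono _ _ hsub
        _ ≤ x a := by
            convert hC a haS using 2
            congr 1
            exact (Finset.filter_congr_decidable _ _ _).trans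
              (Finset.filter_congr_decidable _ _ _).symm

lemma stepCond_between
    (hxmono : ∀ B C : Finset (Fin m), B ⊆ C → xbar B ≤ xbar C)
    (a z : Fin m → ℝ) (S : Finset (Fin m)) (t₁ t₂ t₃ : ℝ)
    (h12 : t₁ ≤ t₂) (h23 : t₂ ≤ t₃)
    (Hsep : ∀ p ∈ S, ∀ q ∈ S, 0 < a p → a q < 0 →
      a p * t₁ + z p < a q * t₁ + z q → a p * t₃ + z p ≤ a q * t₃ + z q)
    (H1 : StepCond xbar (fun h => a h * t₁ + z h) S)
    (H3 : StepCond xbar (fun h => a h * t₃ + z h) S) :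
    StepCond xbar (fun h => a h * t₂ + z h) S := by
  classical
  obtain ⟨B1, C1, D1⟩ := H1
  obtain ⟨B3, C3, D3⟩ := H3
  have interp : ∀ u v : Fin m,
      a u * t₁ + z u ≤ a v * t₁ + z v → a u * t₃ + z u ≤ a v * t₃ + z v →
      a u * t₂ + z u ≤ a v * t₂ + z v := by
    intro u v h1 h3
    rcases le_total (a u) (a v) with hc | hc
    · nlinarith [mul_nonneg (sub_nonneg.2 hc) (sub_nonneg.2 h12)]
    · nlinarith [mul_nonneg (sub_nonneg.2 hc) (sub_nonneg.2 h23)]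
  have interp0 : ∀ (u : Fin m) (b : ℝ), a u * t₁ + z u < b → a u * t₃ + z u < b →
      a u * t₂ + z u < b := by
    intro u b h1 h3
    rcases le_total (a u) 0 with hc | hc
    · nlinarith [mul_nonneg (neg_nonneg.2 hc) (sub_nonneg.2 h12)]
    · nlinarith [mul_nonneg hc (sub_nonneg.2 h23)]
  refine ⟨?_, ?_, ?_⟩
  · intro h hh k hk
    exact interp k h (B1 h hh k hk) (B3 h hh k hk)
  · intro h hh
    set M := S.filter (fun h' => a h' * t₂ + z h' ≤ a h * t₂ + z h) with hM
    have hhM : h ∈ M := Finset.mem_filter.2 ⟨hh, le_refl _⟩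
    have chainA : ∀ g ∈ M, 0 ≤ a g →
        (∀ h' ∈ M, a h' * t₁ + z h' ≤ a g * t₁ + z g) →
        xbar (Sᶜ ∪ M) ≤ a h * t₂ + z h := by
      intro g hgM hg hmax
      have hgS : g ∈ S := (Finset.mem_filter.1 hgM).1
      have hsub : Sᶜ ∪ M ⊆
          Sᶜ ∪ S.filter (fun h' => a h' * t₁ + z h' ≤ a g * t₁ + z g) := by
        intro b hb
        rcases Finset.mem_union.1 hb with hb | hb
        · exact Finset.mem_union.2 (Or.inl hb)
        · exact Finset.mem_union.2 (Or.inr (Finset.mem_filter.2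
            ⟨(Finset.mem_filter.1 hb).1, hmax b hb⟩))
      have hA : a g * t₁ + z g ≤ a g * t₂ + z g := by
        nlinarith [mul_nonneg hg (sub_nonneg.2 h12)]
      have hB : a g * t₂ + z g ≤ a h * t₂ + z h := (Finset.mem_filter.1 hgM).2
      calc xbar (Sᶜ ∪ M)
          ≤ xbar (Sᶜ ∪ S.filter (fun h' => a h' * t₁ + z h' ≤ a g * t₁ + z g)) :=
            hxmono _ _ hsub
        _ ≤ a g * t₁ + z g := C1 g hgS
        _ ≤ a h * t₂ + z h := le_trans hA hB
    have chainB : ∀ g ∈ M, a g ≤ 0 →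
        (∀ h' ∈ M, a h' * t₃ + z h' ≤ a g * t₃ + z g) →
        xbar (Sᶜ ∪ M) ≤ a h * t₂ + z h := by
      intro g hgM hg hmax
      have hgS : g ∈ S := (Finset.mem_filter.1 hgM).1
      have hsub : Sᶜ ∪ M ⊆
          Sᶜ ∪ S.filter (fun h' => a h' * t₃ + z h' ≤ a g * t₃ + z g) := by
        intro b hb
        rcases Finset.mem_union.1 hb with hb | hb
        · exact Finset.mem_union.2 (Or.inl hb)
        · exact Finset.mem_union.2 (Or.inr (Finset.mem_filter.2
            ⟨(Finset.mem_filter.1 hb).1, hmax b hb⟩))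
      have hA : a g * t₃ + z g ≤ a g * t₂ + z g := by
        nlinarith [mul_nonneg (neg_nonneg.2 hg) (sub_nonneg.2 h23)]
      have hB : a g * t₂ + z g ≤ a h * t₂ + z h := (Finset.mem_filter.1 hgM).2
      calc xbar (Sᶜ ∪ M)
          ≤ xbar (Sᶜ ∪ S.filter (fun h' => a h' * t₃ + z h' ≤ a g * t₃ + z g)) :=
            hxmono _ _ hsub
        _ ≤ a g * t₃ + z g := C3 g hgS
        _ ≤ a h * t₂ + z h := le_trans hA hB
    obtain ⟨g₁, hg₁M, hg₁max⟩ := M.exists_max_image (fun h' => a h' * t₁ + z h') ⟨h, hhM⟩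
    obtain ⟨g₃, hg₃M, hg₃max⟩ := M.exists_max_image (fun h' => a h' * t₃ + z h') ⟨h, hhM⟩
    show xbar (Sᶜ ∪ M) ≤ a h * t₂ + z h
    by_cases hga : 0 ≤ a g₁
    · exact chainA g₁ hg₁M hga hg₁max
    · by_cases hgb : a g₃ ≤ 0
      · exact chainB g₃ hg₃M hgb hg₃max
      · push_neg at hga hgb
        by_cases heq : a g₁ * t₁ + z g₁ ≤ a g₃ * t₁ + z g₃
        · exact chainA g₃ hg₃M (le_of_lt hgb)
            (fun h' hh' => le_trans (hg₁max h' hh') heq)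
        · push_neg at heq
          have hsep := Hsep g₃ (Finset.mem_filter.1 hg₃M).1 g₁
            (Finset.mem_filter.1 hg₁M).1 hgb hga heq
          exact chainB g₁ hg₁M (le_of_lt hga)
            (fun h' hh' => le_trans (hg₃max h' hh') hsep)
  · rcases D1 with hu | D1
    · exact Or.inl hu
    rcases D3 with hu | D3
    · exact Or.inl hu
    exact Or.inr fun k hk => interp0 k (xbar Sᶜ) (D1 k hk) (D3 k hk)

end Aux

lemma closure_decomp (C : Set ℝ) (P : Finset ℝ) (k : ℕ) (hP : P.card ≤ k)
    (hC : ∀ t₁ t₂ t₃ : ℝ, t₁ ∈ C → t₃ ∈ C → t₁ ≤ t₂ → t₂ ≤ t₃ →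
      (∀ p ∈ P, p ≤ t₁ ∨ t₃ ≤ p) → t₂ ∈ C) :
    ∃ I : Fin (k+1) → Set ℝ, (∀ j, (I j).OrdConnected) ∧
      (Pairwise fun j j' => Disjoint (I j) (I j')) ∧ closure C = ⋃ j, I j := by
  classical
  set φ : ℝ → ℕ := fun t => (P.filter (· < t)).card with hφ
  have hφk : ∀ t, φ t ≤ k := fun t => le_trans (Finset.card_filter_le _ _) hP
  have hφmono : ∀ {t t' : ℝ}, t ≤ t' → φ t ≤ φ t' := by
    intro t t' h
    exact Finset.card_le_card (fun p hp => Finset.mem_filter.2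
      ⟨(Finset.mem_filter.1 hp).1, lt_of_lt_of_le (Finset.mem_filter.1 hp).2 h⟩)
  set Cs : ℕ → Set ℝ := fun j => {t | t ∈ C ∧ φ t = j} with hCs
  have hCs_ord : ∀ j, (Cs j).OrdConnected := by
    intro j
    constructor
    intro t ht t' ht' c hc
    refine ⟨hC t c t' ht.1 ht'.1 hc.1 hc.2 ?_, ?_⟩
    · intro p hp
      by_cases hpt : p < t
      · exact Or.inl (le_of_lt hpt)
      · right
        have hsub : P.filter (· < t) ⊆ P.filter (· < t') := fun q hq =>
          Finset.mem_filter.2 ⟨(Finset.mem_filter.1 hq).1,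
            lt_of_lt_of_le (Finset.mem_filter.1 hq).2 (le_trans hc.1 hc.2)⟩
        have hcard : (P.filter (· < t')).card ≤ (P.filter (· < t)).card := by
          have h1 : (P.filter (· < t)).card = j := ht.2
          have h2 : (P.filter (· < t')).card = j := ht'.2
          omega
        have heq : P.filter (· < t) = P.filter (· < t') :=
          Finset.eq_of_subset_of_card_le hsub hcard
        by_contra hlt
        push_neg at hlt
        have hmem : p ∈ P.filter (· < t') := Finset.mem_filter.2 ⟨hp, hlt⟩
        rw [← heq] at hmem
        exact hpt (Finset.mem_filter.1 hmem).2
    · have hle1 : φ t ≤ φ c := hφmono hc.1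
      have hle2 : φ c ≤ φ t' := hφmono hc.2
      have h1 : φ t = j := ht.2
      have h2 : φ t' = j := ht'.2
      omega
  have hCsC : C = ⋃ j : Fin (k+1), Cs j := by
    ext t
    simp only [Set.mem_iUnion]
    constructor
    · intro ht; exact ⟨⟨φ t, Nat.lt_succ_of_le (hφk t)⟩, ht, rfl⟩
    · rintro ⟨j, hj, _⟩; exact hj
  have hord : ∀ (i j : ℕ), i < j → ∀ u ∈ closure (Cs i), ∀ v ∈ closure (Cs j), u ≤ v := by
    intro i j hij
    have step1 : ∀ u ∈ Cs i, ∀ v ∈ closure (Cs j), u ≤ v := by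
      intro u hu v hv
      have hsub : Cs j ⊆ Set.Ici u := by
        intro w hw
        by_contra hwu
        have hwu' : w < u := by simpa using hwu
        have h1 : φ w ≤ φ u := hφmono (le_of_lt hwu')
        have h2 : φ w = j := hw.2
        have h3 : φ u = i := hu.2
        omega
      exact (closure_minimal hsub isClosed_Ici) hv
    intro u hu v hv
    have hsub : Cs i ⊆ Set.Iic v := fun w hw => step1 w hw v hv
    exact (closure_minimal hsub isClosed_Iic) hu
  set I : Fin (k+1) → Set ℝ :=
    fun j => closure (Cs j) \ ⋃ i ∈ Finset.range j, closure (Cs i) with hI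
  have hIsub : ∀ j, I j ⊆ closure (Cs j) := fun j => Set.diff_subset
  refine ⟨I, ?_, ?_, ?_⟩
  · intro j
    constructor
    intro p hp q hq c hc
    have hcj : c ∈ closure (Cs (j : ℕ)) :=
      ((hCs_ord j).isPreconnected.closure.ordConnected).out hp.1 hq.1 hc
    refine ⟨hcj, ?_⟩
    intro hmem
    simp only [Set.mem_iUnion, Finset.mem_range] at hmem
    obtain ⟨i, hi, hci⟩ := hmem
    have hcp : c ≤ p := hord i j hi c hci p hp.1
    have hpc : p ≤ c := hc.1
    have : p ∈ closure (Cs i) := by rwa [le_antisymm hpc hcp]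
    exact hp.2 (by
      simp only [Set.mem_iUnion, Finset.mem_range]
      exact ⟨i, hi, this⟩)
  · have hdisj : ∀ j j' : Fin (k+1), (j : ℕ) < (j' : ℕ) → Disjoint (I j) (I j') := by
      intro j j' hjj'
      rw [Set.disjoint_left]
      intro t htj htj'
      exact htj'.2 (by
        simp only [Set.mem_iUnion, Finset.mem_range]
        exact ⟨j, hjj', htj.1⟩)
    intro j j' hne
    rcases lt_or_gt_of_ne (fun h => hne (by exact_mod_cast Fin.ext h)) with h | h
    · exact hdisj j j' h
    · exact (hdisj j' j h).symm
  · have hclos : closure C = ⋃ j : Fin (k+1), closure (Cs j) := by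
      apply subset_antisymm
      · apply closure_minimal
        · rw [hCsC]
          exact Set.iUnion_mono fun j => subset_closure
        · exact isClosed_iUnion_of_finite fun j => isClosed_closure
      · exact Set.iUnion_subset fun j => closure_mono
          (by rw [hCsC]; exact Set.subset_iUnion (fun i : Fin (k+1) => Cs i) j)
    rw [hclos]
    apply subset_antisymm
    · intro t ht
      simp only [Set.mem_iUnion] at ht ⊢
      obtain ⟨j, hj⟩ := ht
      set T := Finset.univ.filter (fun i : Fin (k+1) => t ∈ closure (Cs i)) with hT
      have hTne : T.Nonempty := ⟨j, Finset.mem_filter.2 ⟨Finset.mem_univ _, hj⟩⟩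
      set j₀ := T.min' hTne with hj₀
      have hj₀T : j₀ ∈ T := T.min'_mem hTne
      refine ⟨j₀, (Finset.mem_filter.1 hj₀T).2, ?_⟩
      intro hmem
      simp only [Set.mem_iUnion, Finset.mem_range] at hmem
      obtain ⟨i, hi, hti⟩ := hmem
      have hik : i < k + 1 := lt_trans hi j₀.isLt
      have hiT : (⟨i, hik⟩ : Fin (k+1)) ∈ T :=
        Finset.mem_filter.2 ⟨Finset.mem_univ _, hti⟩
      have := T.min'_le _ hiT
      rw [← hj₀] at this
      have : (j₀ : ℕ) ≤ i := this
      omega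
    · exact Set.iUnion_mono fun j => hIsub j

/-- **Structure of the conditional support for a one-sided step-down rule.**
With `S₊ = {h ∈ S : Ω_{h,s} > 0}` and `S₋ = {h ∈ S : Ω_{h,s} < 0}`, the closure
of the conditional support `𝒳ₛ(z, S)` is a union of at most `|S₊|·|S₋| + 1`
pairwise disjoint intervals; in particular it is a single connected interval
when `S₋ = ∅`. -/
theorem condSupportOne_closure_union_of_intervals
    (hm : 0 < m)
    (V : Matrix (Fin m) (Fin m) ℝ) (hV : V.PosDef)
    (xbar : Finset (Fin m) → ℝ) (hxpos : ∀ B, 0 < xbar B)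
    (hxmono : ∀ B C : Finset (Fin m), B ⊆ C → xbar B ≤ xbar C)
    (z : Fin m → ℝ) (S : Finset (Fin m)) (s : Fin m) (hs : s ∈ S) :
    (∃ n : ℕ,
      n ≤ (S.filter fun h => 0 < corrMat V h s).card *
            (S.filter fun h => corrMat V h s < 0).card + 1 ∧
      ∃ I : Fin n → Set ℝ,
        (∀ k, (I k).OrdConnected) ∧
        (Pairwise fun k k' => Disjoint (I k) (I k')) ∧
        closure (condSupportOne xbar V z S s) = ⋃ k, I k) ∧
    ((S.filter fun h => corrMat V h s < 0) = ∅ →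
      (closure (condSupportOne xbar V z S s)).OrdConnected) := by
  classical
  set C : Set ℝ := condSupportOne xbar V z S s with hCdef
  have hCmem : ∀ t : ℝ, t ∈ C ↔
      StepCond xbar (fun h => corrMat V h s * t + z h) S := fun t =>
    selectsOneSided_iff xbar _ hxmono S
  set Sp := S.filter (fun h => 0 < corrMat V h s) with hSp
  set Sm := S.filter (fun h => corrMat V h s < 0) with hSm
  set P : Finset ℝ := (Sp ×ˢ Sm).image
    (fun pq => (z pq.2 - z pq.1) / (corrMat V pq.1 s - corrMat V pq.2 s)) with hP
  have hPcard : P.card ≤ Sp.card * Sm.card :=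
    le_trans Finset.card_image_le (le_of_eq (Finset.card_product _ _))
  have hC : ∀ t₁ t₂ t₃ : ℝ, t₁ ∈ C → t₃ ∈ C → t₁ ≤ t₂ → t₂ ≤ t₃ →
      (∀ p ∈ P, p ≤ t₁ ∨ t₃ ≤ p) → t₂ ∈ C := by
    intro t₁ t₂ t₃ h1 h3 h12 h23 hsep
    rw [hCmem] at h1 h3 ⊢
    refine stepCond_between xbar hxmono (fun h => corrMat V h s) z S t₁ t₂ t₃
      h12 h23 ?_ h1 h3
    intro p hp q hq hap haq hlt1
    by_contra hlt3
    push_neg at hlt3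
    set τ := (z q - z p) / (corrMat V p s - corrMat V q s) with hτ
    have hmem : τ ∈ P := Finset.mem_image.2 ⟨(p, q),
      Finset.mem_product.2 ⟨Finset.mem_filter.2 ⟨hp, hap⟩,
        Finset.mem_filter.2 ⟨hq, haq⟩⟩, rfl⟩
    have hd : 0 < corrMat V p s - corrMat V q s := by linarith
    have ht1 : t₁ < τ := by
      rw [hτ, lt_div_iff₀ hd]
      nlinarith [hlt1]
    have ht3 : τ < t₃ := by
      rw [hτ, div_lt_iff₀ hd]
      nlinarith [hlt3]
    rcases hsep τ hmem with h | h
    · linarith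
    · linarith
  obtain ⟨I, hIord, hIdisj, hIcl⟩ :=
    closure_decomp C P (Sp.card * Sm.card) hPcard hC
  constructor
  · exact ⟨Sp.card * Sm.card + 1, le_refl _, I, hIord, hIdisj, hIcl⟩
  · intro hSmempty
    have hconv : C.OrdConnected := by
      constructor
      intro t₁ h1 t₃ h3 t₂ hc
      refine hC t₁ t₂ t₃ h1 h3 hc.1 hc.2 ?_
      intro p hp
      rw [hP] at hp
      rw [show Sm = ∅ from hSmempty] at hp
      simp at hp
    exact hconv.isPreconnected.closure.ordConnected
end

section
/- For realized test statistics x ∈ ℝ^m, the one-sided step-up procedure selects Ŝ = S if and only if: for all h ∈ S, x_h ≥ x̄_{m−|S|+1}, and either S^c = ∅ or there exists a bijection σ from S^c onto {1,…,|S^c|} such that for all h ∉ S, x_h < x̄_{σ(h)}. -/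
open MeasureTheory Filter

variable {m : ℕ}

/-- `l` enumerates all indices of `Fin m`, sorted in ascending order of `x`. -/
def SortedEnumAsc (x : Fin m → ℝ) (l : List (Fin m)) : Prop :=
  l.Nodup ∧ (∀ i : Fin m, i ∈ l) ∧ l.Pairwise fun i j => x i ≤ x j

/-- The insignificant set produced by the one-sided step-up algorithm: walking
up the ascending-sorted list with step counter `j`, an index is declared
insignificant while its statistic is below the `j`-th threshold; as soon as a
statistic reaches its threshold the algorithm stops (all remaining indices are
significant). -/
noncomputable def stepUpInsig (xbar : ℕ → ℝ) (x : Fin m → ℝ) :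
    List (Fin m) → ℕ → Finset (Fin m)
  | [], _ => ∅
  | h :: t, j =>
      if xbar j ≤ x h then ∅
      else insert h (stepUpInsig xbar x t (j + 1))

/-- The one-sided step-up procedure run on `x` returns exactly the significant
set `S` (the complement of the insignificant set). -/
def SelectsStepUp (xbar : ℕ → ℝ) (x : Fin m → ℝ) (S : Finset (Fin m)) : Prop :=
  ∃ l : List (Fin m), SortedEnumAsc x l ∧ (stepUpInsig xbar x l 1)ᶜ = S

/-- Specification of `stepUpInsig`: it returns the `toFinset` of a prefix. -/
lemma stepup_spec (xbar : ℕ → ℝ) (x : Fin m → ℝ) :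
    ∀ (l : List (Fin m)) (j : ℕ), ∃ k, ∃ hk : k ≤ l.length,
      stepUpInsig xbar x l j = (l.take k).toFinset ∧
      (∀ i, ∀ hi : i < l.length, i < k → x l[i] < xbar (j + i)) ∧
      (k = l.length ∨ ∃ hk' : k < l.length, xbar (j + k) ≤ x l[k]) := by
  intro l
  induction l with
  | nil => intro j; exact ⟨0, le_rfl, by simp [stepUpInsig], by simp, Or.inl rfl⟩
  | cons h t ih =>
    intro j
    by_cases hc : xbar j ≤ x h
    · refine ⟨0, Nat.zero_le _, by simp [stepUpInsig, hc], by simp, Or.inr ⟨by simp, by simpa⟩⟩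
    · obtain ⟨k, hk, heq, hlt, hstop⟩ := ih (j + 1)
      refine ⟨k + 1, by simpa using Nat.succ_le_succ hk, ?_, ?_, ?_⟩
      · simp only [stepUpInsig, if_neg hc, heq, List.take_succ_cons, List.toFinset_cons]
      · intro i hi hik
        cases i with
        | zero => simpa using lt_of_not_ge hc
        | succ i' =>
          have h1 : i' < t.length := by simpa using hi
          have := hlt i' h1 (by omega)
          simpa [Nat.add_comm, Nat.add_assoc, Nat.add_left_comm] using this
      · rcases hstop with h1 | ⟨hk', hx⟩
        · exact Or.inl (by simp [h1])
        · refine Or.inr ⟨by simpa using Nat.succ_lt_succ hk', ?_⟩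
          have : (h :: t)[k + 1]'(by simpa using Nat.succ_lt_succ hk') = t[k] := by simp
          rw [this, show j + (k + 1) = j + 1 + k by omega]
          exact hx

/-- Running `stepUpInsig` on a prepared list `l1 ++ l2`. -/
lemma stepup_run (xbar : ℕ → ℝ) (x : Fin m → ℝ) :
    ∀ (l1 l2 : List (Fin m)) (j : ℕ),
      (∀ i, ∀ hi : i < l1.length, x l1[i] < xbar (j + i)) →
      (∀ h ∈ l2.head?, xbar (j + l1.length) ≤ x h) →
      stepUpInsig xbar x (l1 ++ l2) j = l1.toFinset := by
  intro l1
  induction l1 with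
  | nil =>
    intro l2 j _ hhead
    cases l2 with
    | nil => simp [stepUpInsig]
    | cons h t =>
      have := hhead h (by simp)
      simp only [List.nil_append, stepUpInsig, if_pos (by simpa using this)]
      simp
  | cons a l1 ih =>
    intro l2 j hpre hhead
    have h0 : x a < xbar j := by exact hpre 0 (by simp)
    simp only [List.cons_append, stepUpInsig, if_neg (not_le.2 h0), List.toFinset_cons]
    congr 1
    refine ih l2 (j + 1) ?_ ?_
    · intro i hi
      have := hpre (i + 1) (by simpa using Nat.succ_lt_succ hi)
      simpa [Nat.add_comm, Nat.add_assoc, Nat.add_left_comm] using this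
    · intro h hh
      have := hhead h hh
      simpa [Nat.add_comm, Nat.add_assoc, Nat.add_left_comm] using this

lemma sorted_prefix_bound (xbar : ℕ → ℝ) (x : Fin m → ℝ)
    (hxmono : ∀ j k, 1 ≤ j → j ≤ k → k ≤ m → xbar j ≤ xbar k)
    (T : Finset (Fin m)) (σ : {i // i ∈ T} ≃ Fin T.card)
    (hσ : ∀ h : {i // i ∈ T}, x h.val < xbar ((σ h : ℕ) + 1))
    (l : List (Fin m)) (hnd : l.Nodup) (hmem : ∀ a, a ∈ l ↔ a ∈ T)
    (hsort : l.Pairwise fun i j => x i ≤ x j) :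
    ∀ i, ∀ hi : i < l.length, x l[i] < xbar (i + 1) := by
  classical
  have hTf : l.toFinset = T := Finset.ext fun a => by simp [hmem a]
  have hlen : l.length = T.card := by
    rw [← hTf, List.toFinset_card_of_nodup hnd]
  have hTm : T.card ≤ m := by
    simpa using Finset.card_le_univ T
  intro i hi
  -- the set of subtype elements whose value lies in `l.drop i`
  set A : Finset {a // a ∈ T} := Finset.univ.filter (fun h => h.val ∈ l.drop i) with hA
  have hndd : (l.drop i).Nodup := hnd.sublist (List.drop_sublist _ _)
  have hAcard : A.card = T.card - i := by
    have himg : A.image Subtype.val = (l.drop i).toFinset := by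
      ext a
      simp only [Finset.mem_image, hA, Finset.mem_filter, Finset.mem_univ, true_and,
        List.mem_toFinset]
      constructor
      · rintro ⟨b, hb, rfl⟩; exact hb
      · intro ha
        exact ⟨⟨a, (hmem a).1 (List.mem_of_mem_drop ha)⟩, ha, rfl⟩
    have := Finset.card_image_of_injective A (Subtype.val_injective)
    rw [himg] at this
    rw [← this, List.toFinset_card_of_nodup hndd, List.length_drop, hlen]
  have hpig : ∃ h ∈ A, (σ h : ℕ) ≤ i := by
    by_contra hcon
    push_neg at hcon
    have hsub : A.image (fun h => (σ h : ℕ)) ⊆ Finset.Ico (i + 1) T.card := by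
      intro n hn
      simp only [Finset.mem_image] at hn
      obtain ⟨h, hh, rfl⟩ := hn
      exact Finset.mem_Ico.2 ⟨hcon h hh, (σ h).isLt⟩
    have hinj : A.card = (A.image (fun h => (σ h : ℕ))).card := by
      rw [Finset.card_image_of_injective _ (fun a b hab => σ.injective (Fin.val_injective hab))]
    have := Finset.card_le_card hsub
    rw [← hinj, hAcard, Nat.card_Ico] at this
    omega
  obtain ⟨h, hhA, hσi⟩ := hpig
  have hhd : h.val ∈ l.drop i := by
    simpa [hA] using hhA
  obtain ⟨t, ht, hteq⟩ := List.mem_iff_getElem.1 hhd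
  have hteq' : l[i + t]'(by simp at ht; omega) = h.val := by
    rw [← hteq, List.getElem_drop]
  have hle : x l[i] ≤ x h.val := by
    rw [← hteq']
    rcases Nat.eq_zero_or_pos t with rfl | htpos
    · simp
    · have := hsort.rel_get_of_lt
        (a := ⟨i, hi⟩) (b := ⟨i + t, by simp at ht; omega⟩) (by simp; omega)
      simpa using this
  calc x l[i] ≤ x h.val := hle
    _ < xbar ((σ h : ℕ) + 1) := hσ h
    _ ≤ xbar (i + 1) := hxmono _ _ (by omega) (by omega) (by omega)

/-- **Geometry of one-sided step-up testing.** For nondecreasing thresholds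
`x̄_1 ≤ … ≤ x̄_m`, the step-up procedure selects `Ŝ = S` if and only if
`x_h ≥ x̄_{m-|S|+1}` for all `h ∈ S`, and either `Sᶜ = ∅` or there is a
bijection `σ` from `Sᶜ` onto `{1,…,|Sᶜ|}` (here `Fin Sᶜ.card`, shifted by one)
with `x_h < x̄_{σ(h)}` for all `h ∉ S`. -/
theorem stepup_selection_geometry
    (hm : 0 < m)
    (xbar : ℕ → ℝ) (hxmono : ∀ j k, 1 ≤ j → j ≤ k → k ≤ m → xbar j ≤ xbar k)
    (x : Fin m → ℝ) (S : Finset (Fin m)) :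
    SelectsStepUp xbar x S ↔
      ((∀ h ∈ S, xbar (m - S.card + 1) ≤ x h) ∧
        (Sᶜ = (∅ : Finset (Fin m)) ∨
          ∃ σ : {i // i ∈ Sᶜ} ≃ Fin Sᶜ.card,
            ∀ h : {i // i ∈ Sᶜ}, x h.val < xbar ((σ h : ℕ) + 1))) := by
  classical
  constructor
  · rintro ⟨l, ⟨hnd, hall, hsort⟩, hS⟩
    obtain ⟨k, hk, heq, hlt, hstop⟩ := stepup_spec xbar x l 1
    have hlen : l.length = m := by
      have huniv : l.toFinset = Finset.univ :=
        Finset.eq_univ_iff_forall.2 fun a => List.mem_toFinset.2 (hall a)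
      have := List.toFinset_card_of_nodup hnd
      rw [huniv] at this
      simpa using this.symm
    have hSc : Sᶜ = (l.take k).toFinset := by rw [← hS, compl_compl, heq]
    have hndk : (l.take k).Nodup := hnd.sublist (List.take_sublist _ _)
    have hcard : Sᶜ.card = k := by
      rw [hSc, List.toFinset_card_of_nodup hndk, List.length_take]; omega
    have hmk : m - S.card = k := by
      have := Finset.card_compl S
      simp only [Fintype.card_fin] at this
      omega
    constructor
    · intro h hh
      have hnotin : h ∉ l.take k := by
        intro hcon
        have : h ∈ Sᶜ := hSc ▸ List.mem_toFinset.2 hcon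
        exact (Finset.mem_compl.1 this) hh
      obtain ⟨i, hi, hieq⟩ := List.mem_iff_getElem.1 (hall h)
      have hik : k ≤ i := by
        by_contra hcon
        push_neg at hcon
        refine hnotin ?_
        have : (l.take k)[i]'(by simp; omega) = l[i] := List.getElem_take
        rw [← hieq, ← this]
        exact List.getElem_mem _
      have hkm : k < m := by omega
      rcases hstop with hbad | ⟨hk', hx⟩
      · omega
      have hle : x l[k] ≤ x l[i] := by
        rcases Nat.eq_or_lt_of_le hik with rfl | hik'
        · exact le_rfl
        · have := hsort.rel_get_of_lt (a := ⟨k, hk'⟩) (b := ⟨i, hi⟩) (by simpa using hik')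
          simpa using this
      rw [hmk, ← hieq]
      calc xbar (k + 1) = xbar (1 + k) := by rw [Nat.add_comm]
        _ ≤ x l[k] := hx
        _ ≤ x l[i] := hle
    · rcases Nat.eq_zero_or_pos k with rfl | hkpos
      · exact Or.inl (by simpa using hSc)
      refine Or.inr ?_
      set lk := l.take k with hlk
      have hlklen : lk.length = k := by simp [hlk]; omega
      have hmemiff : ∀ a, a ∈ Sᶜ ↔ a ∈ lk := by
        intro a; rw [hSc]; simp [hlk]
      let e1 : Fin lk.length ≃ {a // a ∈ lk} := List.Nodup.getEquiv lk hndk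
      let e2 : {a // a ∈ Sᶜ} ≃ {a // a ∈ lk} := Equiv.subtypeEquivRight hmemiff
      refine ⟨(e2.trans e1.symm).trans (finCongr (by rw [hlklen, hcard])), ?_⟩
      intro h
      set n := e1.symm (e2 h) with hn
      have hget : lk.get n = h.val := by
        have ha : (e1 n).val = (e2 h).val := by rw [hn, e1.apply_symm_apply]
        have hb : ((e2 h) : Fin m) = (h : Fin m) := by
          exact congrArg Subtype.val (Equiv.subtypeEquivRight_apply hmemiff h)
        have hc : (e1 n).val = lk.get n := rfl
        rw [← hc, ha, hb]
      have hnk : (n : ℕ) < k := by have := n.isLt; omega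
      have hnl : (n : ℕ) < l.length := by omega
      have hxval : x h.val = x l[(n : ℕ)] := by
        rw [← hget]
        simp [hlk, List.getElem_take]
      have := hlt (n : ℕ) hnl hnk
      have hfc : (((e2.trans e1.symm).trans (finCongr (by rw [hlklen, hcard]) :
          Fin lk.length ≃ Fin Sᶜ.card)) h : ℕ) = (n : ℕ) := rfl
      rw [hfc, hxval, Nat.add_comm]
      exact this
  · rintro ⟨h1, h2⟩
    have hScm : Sᶜ.card = m - S.card := by
      have := Finset.card_compl S; simpa using this
    have hScard : S.card ≤ m := by simpa using Finset.card_le_univ S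
    set le : Fin m → Fin m → Bool := fun i j => decide (x i ≤ x j) with hle
    have htrans : ∀ a b c : Fin m, le a b = true → le b c = true → le a c = true := by
      intro a b c hab hbc
      simp only [hle, decide_eq_true_eq] at *
      exact le_trans hab hbc
    have htotal : ∀ a b : Fin m, (le a b || le b a) = true := by
      intro a b
      simp only [hle, Bool.or_eq_true, decide_eq_true_eq]
      exact le_total _ _
    set l1 := Sᶜ.toList.mergeSort le with hl1
    set l2 := S.toList.mergeSort le with hl2
    have hp1 : l1.Perm Sᶜ.toList := List.mergeSort_perm _ _
    have hp2 : l2.Perm S.toList := List.mergeSort_perm _ _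
    have hmem1 : ∀ a, a ∈ l1 ↔ a ∈ Sᶜ := by
      intro a; rw [hp1.mem_iff, Finset.mem_toList]
    have hmem2 : ∀ a, a ∈ l2 ↔ a ∈ S := by
      intro a; rw [hp2.mem_iff, Finset.mem_toList]
    have hnd1 : l1.Nodup := hp1.nodup_iff.2 (Finset.nodup_toList _)
    have hnd2 : l2.Nodup := hp2.nodup_iff.2 (Finset.nodup_toList _)
    have hs1 : l1.Pairwise fun i j => x i ≤ x j := by
      have := List.pairwise_mergeSort htrans htotal Sᶜ.toList
      exact this.imp (fun h => by simpa [hle] using h)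
    have hs2 : l2.Pairwise fun i j => x i ≤ x j := by
      have := List.pairwise_mergeSort htrans htotal S.toList
      exact this.imp (fun h => by simpa [hle] using h)
    have hlen1 : l1.length = Sᶜ.card := by rw [hp1.length_eq, Finset.length_toList]
    have hcross : ∀ a ∈ l1, ∀ b ∈ l2, x a ≤ x b := by
      intro a ha b hb
      have haS : a ∈ Sᶜ := (hmem1 a).1 ha
      have hbS : b ∈ S := (hmem2 b).1 hb
      have hSne : 1 ≤ S.card := Finset.card_pos.2 ⟨b, hbS⟩
      rcases h2 with hemp | ⟨σ, hσ⟩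
      · exact absurd (hemp ▸ haS) (Finset.notMem_empty a)
      have hck : (σ ⟨a, haS⟩ : ℕ) + 1 ≤ Sᶜ.card := (σ ⟨a, haS⟩).isLt
      refine le_of_lt ?_
      calc x a < xbar ((σ ⟨a, haS⟩ : ℕ) + 1) := hσ ⟨a, haS⟩
        _ ≤ xbar (m - S.card + 1) := hxmono _ _ (by omega) (by omega) (by omega)
        _ ≤ x b := h1 b hbS
    refine ⟨l1 ++ l2, ⟨?_, ?_, ?_⟩, ?_⟩
    · refine List.Nodup.append hnd1 hnd2 ?_
      intro a ha hb
      exact (Finset.mem_compl.1 ((hmem1 a).1 ha)) ((hmem2 a).1 hb)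
    · intro a
      rw [List.mem_append, hmem1, hmem2]
      by_cases h : a ∈ S
      · exact Or.inr h
      · exact Or.inl (Finset.mem_compl.2 h)
    · rw [List.pairwise_append]
      exact ⟨hs1, hs2, hcross⟩
    · have hrun : stepUpInsig xbar x (l1 ++ l2) 1 = l1.toFinset := by
        refine stepup_run xbar x l1 l2 1 ?_ ?_
        · intro i hi
          rcases h2 with hemp | ⟨σ, hσ⟩
          · exfalso
            rw [hlen1, hemp] at hi
            simp at hi
          · have := sorted_prefix_bound xbar x hxmono Sᶜ σ hσ l1 hnd1 hmem1 hs1 i hi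
            rwa [Nat.add_comm]
        · intro h hh
          have hhl2 : h ∈ l2 := List.mem_of_mem_head? hh
          have : xbar (m - S.card + 1) ≤ x h := h1 h ((hmem2 h).1 hhl2)
          rwa [Nat.add_comm, hlen1, hScm]
      rw [hrun]
      have : l1.toFinset = Sᶜ := Finset.ext fun a => by rw [List.mem_toFinset, hmem1]
      rw [this, compl_compl]
end

section
/- Let S ⊆ {1,…,m}, s ∈ S, x ∈ ℝ^m, and z = x − Ω_{·,s} x_s. Suppose the conditional support 𝒳_s(z, S) is nonempty and that x_s lies in the union of the interiors of the (finitely many disjoint) intervals comprising 𝒳_s(z, S). Then the map θ ↦ F_s(x_s | z, θ, S) is strictly decreasing on ℝ, and moreover F_s(x_s | z, θ, S) → 0 as θ → +∞ and F_s(x_s | z, θ, S) → 1 as θ → −∞. -/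
open MeasureTheory ProbabilityTheory Filter

variable {m : ℕ}

/-- The CDF at `x` of a `N(θs/√(V s s), 1)` random variable truncated to the
conditional support `𝒳ₛ(z, S)`. -/
noncomputable def Fcond (xbar : Finset (Fin m) → ℝ) (V : Matrix (Fin m) (Fin m) ℝ)
    (S : Finset (Fin m)) (s : Fin m) (z : Fin m → ℝ) (θs x : ℝ) : ℝ :=
  ((gaussianReal 0 1) {ξ : ℝ | ξ + θs / Real.sqrt (V s s) ≤ x ∧
      (ξ + θs / Real.sqrt (V s s)) ∈ condSupport xbar V z S s}).toReal /
  ((gaussianReal 0 1) {ξ : ℝ | (ξ + θs / Real.sqrt (V s s)) ∈ condSupport xbar V z S s}).toReal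


section TruncGaussAux
open Set


lemma gaussianPDFReal_shift (a b t : ℝ) :
    gaussianPDFReal b 1 t
      = Real.exp ((b-a)*t + (a^2-b^2)/2) * gaussianPDFReal a 1 t := by
  simp only [gaussianPDFReal, NNReal.coe_one, mul_one]
  rw [mul_left_comm, ← Real.exp_add]
  congr 1
  rw [Real.exp_eq_exp]
  ring

lemma gaussianReal_toReal_eq (a : ℝ) (E : Set ℝ) :
    (gaussianReal a 1 E).toReal = ∫ t in E, gaussianPDFReal a 1 t := by
  rw [gaussianReal_apply_eq_integral a one_ne_zero E,
    ENNReal.toReal_ofReal (integral_nonneg fun t => gaussianPDFReal_nonneg a 1 t)]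

lemma gauss_shift_le (a b r : ℝ) {E : Set ℝ} (hE : MeasurableSet E)
    (h : ∀ t ∈ E, (b-a)*t ≤ (b-a)*r) :
    (gaussianReal b 1 E).toReal
      ≤ Real.exp ((b-a)*r + (a^2-b^2)/2) * (gaussianReal a 1 E).toReal := by
  rw [gaussianReal_toReal_eq, gaussianReal_toReal_eq, ← integral_const_mul]
  refine setIntegral_mono_on (integrable_gaussianPDFReal b 1).integrableOn
    ((integrable_gaussianPDFReal a 1).integrableOn.const_mul _) hE (fun t ht => ?_)
  rw [gaussianPDFReal_shift a b t]
  exact mul_le_mul_of_nonneg_right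
    (Real.exp_le_exp.2 (by linarith [h t ht])) (gaussianPDFReal_nonneg a 1 t)

lemma gauss_shift_lt (a b u r : ℝ) (hab : a < b) (hur : u < r) {E : Set ℝ}
    (hE : MeasurableSet E) (hEr : E ⊆ Set.Iic r) (hsub : Set.Ioo u r ⊆ E) :
    (gaussianReal b 1 E).toReal
      < Real.exp ((b-a)*r + (a^2-b^2)/2) * (gaussianReal a 1 E).toReal := by
  rw [gaussianReal_toReal_eq, gaussianReal_toReal_eq, ← integral_const_mul]
  set φ : ℝ → ℝ :=
    fun t => Real.exp ((b-a)*r + (a^2-b^2)/2) * gaussianPDFReal a 1 t - gaussianPDFReal b 1 t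
    with hφ
  have hint1 : IntegrableOn (fun t => Real.exp ((b-a)*r + (a^2-b^2)/2) * gaussianPDFReal a 1 t)
      E volume := (integrable_gaussianPDFReal a 1).integrableOn.const_mul _
  have hint2 : IntegrableOn (gaussianPDFReal b 1) E volume :=
    (integrable_gaussianPDFReal b 1).integrableOn
  have hnn : ∀ t ∈ E, 0 ≤ φ t := by
    intro t ht
    have ht' : t ≤ r := hEr ht
    rw [hφ]
    simp only
    rw [gaussianPDFReal_shift a b t, ← sub_mul]
    have : Real.exp ((b-a)*t + (a^2-b^2)/2) ≤ Real.exp ((b-a)*r + (a^2-b^2)/2) := by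
      apply Real.exp_le_exp.2
      nlinarith
    nlinarith [gaussianPDFReal_nonneg a 1 t]
  have hpos : 0 < ∫ t in E, φ t := by
    rw [setIntegral_pos_iff_support_of_nonneg_ae
      ((ae_restrict_iff' hE).2 (.of_forall hnn)) (hint1.sub hint2)]
    refine lt_of_lt_of_le ?_ (measure_mono (?_ : Set.Ioo u r ⊆ Function.support φ ∩ E))
    · rw [Real.volume_Ioo]; exact ENNReal.ofReal_pos.2 (by linarith)
    · intro t ht
      refine ⟨?_, hsub ht⟩
      have ht' : t < r := ht.2
      have : φ t > 0 := by
        rw [hφ]; simp only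
        rw [gaussianPDFReal_shift a b t, ← sub_mul]
        have hlt : Real.exp ((b-a)*t + (a^2-b^2)/2) < Real.exp ((b-a)*r + (a^2-b^2)/2) := by
          apply Real.exp_lt_exp.2
          nlinarith
        nlinarith [gaussianPDFReal_pos a 1 t one_ne_zero]
      exact ne_of_gt this
  have := integral_sub hint1 hint2
  rw [hφ] at hpos
  rw [← sub_pos]
  calc (0:ℝ) < ∫ t in E, (Real.exp ((b-a)*r + (a^2-b^2)/2) * gaussianPDFReal a 1 t
        - gaussianPDFReal b 1 t) := hpos
    _ = _ := integral_sub hint1 hint2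

lemma gauss_pos (a u v : ℝ) (huv : u < v) {E : Set ℝ} (hE : MeasurableSet E)
    (hsub : Set.Ioo u v ⊆ E) : 0 < (gaussianReal a 1 E).toReal := by
  have h1 : 0 < (gaussianReal a 1 (Set.Ioo u v)).toReal := by
    rw [gaussianReal_toReal_eq]
    rw [setIntegral_pos_iff_support_of_nonneg_ae
      (.of_forall fun t => gaussianPDFReal_nonneg a 1 t)
      (integrable_gaussianPDFReal a 1).integrableOn]
    refine lt_of_lt_of_le ?_ (measure_mono (?_ : Set.Ioo u v ⊆ _))
    · rw [Real.volume_Ioo]; exact ENNReal.ofReal_pos.2 (by linarith)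
    · exact fun t ht => ⟨ne_of_gt (gaussianPDFReal_pos a 1 t one_ne_zero), ht⟩
  refine lt_of_lt_of_le h1 (ENNReal.toReal_mono (measure_ne_top _ _) (measure_mono hsub))

lemma gauss_translate (a : ℝ) {E : Set ℝ} (hE : MeasurableSet E) :
    gaussianReal 0 1 {ξ : ℝ | ξ + a ∈ E} = gaussianReal a 1 E := by
  have h := gaussianReal_map_add_const (μ := 0) (v := 1) a
  rw [zero_add] at h
  rw [← h, Measure.map_apply (measurable_add_const a) hE]
  rfl







lemma ratio_bound {n d m' n0 m0 e1 e2 : ℝ} (hn : 0 < n) (hm' : 0 < m')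
    (hm'd : m' ≤ d) (he1 : 0 < e1) (he2 : 0 < e2) (hm0 : 0 < m0)
    (h1 : n ≤ e1 * n0) (h2 : m0 ≤ e2 * m') :
    n / d ≤ (e1 * e2) * (n0 / m0) := by
  have hd : 0 < d := lt_of_lt_of_le hm' hm'd
  have hn0 : 0 < n0 := by nlinarith
  have key : n / d ≤ (e1*e2*n0)/m0 := by
    rw [div_le_div_iff₀ hd hm0]
    nlinarith [mul_le_mul h1 (le_trans h2 (by nlinarith : e2*m' ≤ e2*d)) hm0.le
      (by positivity : (0:ℝ) ≤ e1*n0)]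
  linarith [key, (by ring : (e1*e2)*(n0/m0) = (e1*e2*n0)/m0)]

lemma truncGauss_main (σ xs ε : ℝ) (hσ : 0 < σ) (hε : 0 < ε) {A : Set ℝ}
    (hA : MeasurableSet A) (hIoo : Set.Ioo (xs - ε) (xs + ε) ⊆ A) :
    StrictAnti (fun θ : ℝ => (gaussianReal (θ/σ) 1 (A ∩ Set.Iic xs)).toReal /
        ((gaussianReal (θ/σ) 1 (A ∩ Set.Iic xs)).toReal
          + (gaussianReal (θ/σ) 1 (A ∩ Set.Ioi xs)).toReal)) ∧
    Tendsto (fun θ : ℝ => (gaussianReal (θ/σ) 1 (A ∩ Set.Iic xs)).toReal /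
        ((gaussianReal (θ/σ) 1 (A ∩ Set.Iic xs)).toReal
          + (gaussianReal (θ/σ) 1 (A ∩ Set.Ioi xs)).toReal)) atTop (nhds 0) ∧
    Tendsto (fun θ : ℝ => (gaussianReal (θ/σ) 1 (A ∩ Set.Iic xs)).toReal /
        ((gaussianReal (θ/σ) 1 (A ∩ Set.Iic xs)).toReal
          + (gaussianReal (θ/σ) 1 (A ∩ Set.Ioi xs)).toReal)) atBot (nhds 1) := by
  have hBmeas : MeasurableSet (A ∩ Set.Iic xs) := hA.inter measurableSet_Iic
  have hCmeas : MeasurableSet (A ∩ Set.Ioi xs) := hA.inter measurableSet_Ioi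
  have hB'meas : MeasurableSet (A ∩ Set.Iic (xs - ε/2)) := hA.inter measurableSet_Iic
  have hC'meas : MeasurableSet (A ∩ Set.Ici (xs + ε/2)) := hA.inter measurableSet_Ici
  have hBIoo : Set.Ioo (xs - ε) xs ⊆ A ∩ Set.Iic xs := fun t ht =>
    ⟨hIoo ⟨ht.1, by linarith [ht.2]⟩, le_of_lt ht.2⟩
  have hCIoo : Set.Ioo xs (xs + ε) ⊆ A ∩ Set.Ioi xs := fun t ht =>
    ⟨hIoo ⟨by linarith [ht.1], ht.2⟩, ht.1⟩
  have hB'Ioo : Set.Ioo (xs - ε) (xs - ε/2) ⊆ A ∩ Set.Iic (xs - ε/2) := fun t ht =>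
    ⟨hIoo ⟨ht.1, by linarith [ht.2]⟩, le_of_lt ht.2⟩
  have hC'Ioo : Set.Ioo (xs + ε/2) (xs + ε) ⊆ A ∩ Set.Ici (xs + ε/2) := fun t ht =>
    ⟨hIoo ⟨by linarith [ht.1], ht.2⟩, le_of_lt ht.1⟩
  have hNpos : ∀ θ : ℝ, 0 < (gaussianReal (θ/σ) 1 (A ∩ Set.Iic xs)).toReal :=
    fun θ => gauss_pos _ (xs - ε) xs (by linarith) hBmeas hBIoo
  have hMpos : ∀ θ : ℝ, 0 < (gaussianReal (θ/σ) 1 (A ∩ Set.Ioi xs)).toReal :=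
    fun θ => gauss_pos _ xs (xs + ε) (by linarith) hCmeas hCIoo
  have hN'pos : ∀ θ : ℝ, 0 < (gaussianReal (θ/σ) 1 (A ∩ Set.Iic (xs - ε/2))).toReal :=
    fun θ => gauss_pos _ (xs - ε) (xs - ε/2) (by linarith) hB'meas hB'Ioo
  have hM'pos : ∀ θ : ℝ, 0 < (gaussianReal (θ/σ) 1 (A ∩ Set.Ici (xs + ε/2))).toReal :=
    fun θ => gauss_pos _ (xs + ε/2) (xs + ε) (by linarith) hC'meas hC'Ioo
  have hN'le : ∀ θ : ℝ, (gaussianReal (θ/σ) 1 (A ∩ Set.Iic (xs - ε/2))).toReal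
      ≤ (gaussianReal (θ/σ) 1 (A ∩ Set.Iic xs)).toReal := fun θ =>
    ENNReal.toReal_mono (measure_ne_top _ _) (measure_mono
      (Set.inter_subset_inter_right _ (Set.Iic_subset_Iic.2 (by linarith))))
  have hM'le : ∀ θ : ℝ, (gaussianReal (θ/σ) 1 (A ∩ Set.Ici (xs + ε/2))).toReal
      ≤ (gaussianReal (θ/σ) 1 (A ∩ Set.Ioi xs)).toReal := fun θ =>
    ENNReal.toReal_mono (measure_ne_top _ _) (measure_mono
      (Set.inter_subset_inter_right _ (fun t ht => lt_of_lt_of_le (by linarith : xs < xs + ε/2) ht)))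
  have hM'0pos : 0 < (gaussianReal (0/σ) 1 (A ∩ Set.Ici (xs + ε/2))).toReal := hM'pos 0
  have hN'0pos : 0 < (gaussianReal (0/σ) 1 (A ∩ Set.Iic (xs - ε/2))).toReal := hN'pos 0
  refine ⟨?_, ?_, ?_⟩
  · -- strict anti
    intro θ1 θ2 h12
    dsimp only
    have hab : θ1 / σ < θ2 / σ := by
      rw [div_lt_div_iff₀ hσ hσ]; nlinarith
    have hN2 : (gaussianReal (θ2/σ) 1 (A ∩ Set.Iic xs)).toReal
        < Real.exp ((θ2/σ - θ1/σ)*xs + ((θ1/σ)^2-(θ2/σ)^2)/2)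
          * (gaussianReal (θ1/σ) 1 (A ∩ Set.Iic xs)).toReal :=
      gauss_shift_lt (θ1/σ) (θ2/σ) (xs - ε) xs hab (by linarith) hBmeas
        (fun t ht => ht.2) hBIoo
    have hM1 : (gaussianReal (θ1/σ) 1 (A ∩ Set.Ioi xs)).toReal
        ≤ Real.exp ((θ1/σ - θ2/σ)*xs + ((θ2/σ)^2-(θ1/σ)^2)/2)
          * (gaussianReal (θ2/σ) 1 (A ∩ Set.Ioi xs)).toReal :=
      gauss_shift_le (θ2/σ) (θ1/σ) xs hCmeas (fun t ht => by
        have h' : xs < t := ht.2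
        nlinarith)
    have hκinv : Real.exp ((θ2/σ - θ1/σ)*xs + ((θ1/σ)^2-(θ2/σ)^2)/2)
        * Real.exp ((θ1/σ - θ2/σ)*xs + ((θ2/σ)^2-(θ1/σ)^2)/2) = 1 := by
      rw [← Real.exp_add, show ((θ2/σ - θ1/σ)*xs + ((θ1/σ)^2-(θ2/σ)^2)/2)
        + ((θ1/σ - θ2/σ)*xs + ((θ2/σ)^2-(θ1/σ)^2)/2) = 0 by ring, Real.exp_zero]
    have hp1 := hNpos θ1; have hp2 := hNpos θ2
    have hp3 := hMpos θ1; have hp4 := hMpos θ2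
    set n1 := (gaussianReal (θ1/σ) 1 (A ∩ Set.Iic xs)).toReal with hn1
    set n2 := (gaussianReal (θ2/σ) 1 (A ∩ Set.Iic xs)).toReal with hn2
    set m1 := (gaussianReal (θ1/σ) 1 (A ∩ Set.Ioi xs)).toReal with hm1
    set m2 := (gaussianReal (θ2/σ) 1 (A ∩ Set.Ioi xs)).toReal with hm2
    set e1 := Real.exp ((θ2/σ - θ1/σ)*xs + ((θ1/σ)^2-(θ2/σ)^2)/2) with he1
    set e2 := Real.exp ((θ1/σ - θ2/σ)*xs + ((θ2/σ)^2-(θ1/σ)^2)/2) with he2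
    have he1pos : (0:ℝ) < e1 := Real.exp_pos _
    have he2pos : (0:ℝ) < e2 := Real.exp_pos _
    have hkey : e1*n1*(e2*m2) = n1*m2 := by
      have h' : e1*n1*(e2*m2) = (e1*e2)*(n1*m2) := by ring
      rw [h', hκinv, one_mul]
    rw [div_lt_div_iff₀ (by linarith) (by linarith)]
    nlinarith [mul_lt_mul_of_pos_right hN2 hp3,
      mul_le_mul_of_nonneg_left hM1 (mul_pos he1pos hp1).le]
  · -- tendsto atTop 0
    have hbound : ∀ θ : ℝ, 0 ≤ θ →
        (gaussianReal (θ/σ) 1 (A ∩ Set.Iic xs)).toReal /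
          ((gaussianReal (θ/σ) 1 (A ∩ Set.Iic xs)).toReal
            + (gaussianReal (θ/σ) 1 (A ∩ Set.Ioi xs)).toReal)
        ≤ Real.exp (-(θ/σ)*(ε/2)) *
          ((gaussianReal (0/σ) 1 (A ∩ Set.Iic xs)).toReal
            / (gaussianReal (0/σ) 1 (A ∩ Set.Ici (xs + ε/2))).toReal) := by
      intro θ hθ
      have hb0 : 0/σ ≤ θ/σ := by
        rw [div_le_div_iff₀ hσ hσ]; nlinarith
      have h1 : (gaussianReal (θ/σ) 1 (A ∩ Set.Iic xs)).toReal
          ≤ Real.exp ((θ/σ - 0/σ)*xs + ((0/σ)^2-(θ/σ)^2)/2)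
            * (gaussianReal (0/σ) 1 (A ∩ Set.Iic xs)).toReal :=
        gauss_shift_le (0/σ) (θ/σ) xs hBmeas (fun t ht => by
          have h' : t ≤ xs := ht.2; nlinarith)
      have h2 : (gaussianReal (0/σ) 1 (A ∩ Set.Ici (xs + ε/2))).toReal
          ≤ Real.exp ((0/σ - θ/σ)*(xs + ε/2) + ((θ/σ)^2-(0/σ)^2)/2)
            * (gaussianReal (θ/σ) 1 (A ∩ Set.Ici (xs + ε/2))).toReal :=
        gauss_shift_le (θ/σ) (0/σ) (xs + ε/2) hC'meas (fun t ht => by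
          have h' : xs + ε/2 ≤ t := ht.2; nlinarith)
      have hdle : (gaussianReal (θ/σ) 1 (A ∩ Set.Ici (xs + ε/2))).toReal
          ≤ (gaussianReal (θ/σ) 1 (A ∩ Set.Iic xs)).toReal
            + (gaussianReal (θ/σ) 1 (A ∩ Set.Ioi xs)).toReal :=
        le_trans (hM'le θ) (by linarith [hNpos θ])
      have hb := ratio_bound (hNpos θ) (hM'pos θ) hdle
        (Real.exp_pos _) (Real.exp_pos _) hM'0pos h1 h2
      refine le_trans hb (le_of_eq ?_)
      rw [← Real.exp_add, show ((θ/σ - 0/σ)*xs + ((0/σ)^2-(θ/σ)^2)/2)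
        + ((0/σ - θ/σ)*(xs + ε/2) + ((θ/σ)^2-(0/σ)^2)/2) = -(θ/σ)*(ε/2) by ring]
    have hg : Tendsto (fun θ : ℝ => Real.exp (-(θ/σ)*(ε/2)) *
        ((gaussianReal (0/σ) 1 (A ∩ Set.Iic xs)).toReal
          / (gaussianReal (0/σ) 1 (A ∩ Set.Ici (xs + ε/2))).toReal)) atTop (nhds 0) := by
      have h1 : Tendsto (fun θ : ℝ => -(θ/σ)*(ε/2)) atTop atBot := by
        apply Tendsto.atBot_mul_const (by linarith : (0:ℝ) < ε/2)
        exact tendsto_neg_atTop_atBot.comp (tendsto_id.atTop_div_const hσ)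
      have h2 := (Real.tendsto_exp_atBot.comp h1).mul_const
        ((gaussianReal (0/σ) 1 (A ∩ Set.Iic xs)).toReal
          / (gaussianReal (0/σ) 1 (A ∩ Set.Ici (xs + ε/2))).toReal)
      rw [zero_mul] at h2
      exact h2
    refine squeeze_zero' ?_ ((eventually_ge_atTop 0).mono hbound) hg
    exact Eventually.of_forall fun θ => div_nonneg ENNReal.toReal_nonneg
      (add_nonneg ENNReal.toReal_nonneg ENNReal.toReal_nonneg)
  · -- tendsto atBot 1
    have hG : Tendsto (fun θ : ℝ => (gaussianReal (θ/σ) 1 (A ∩ Set.Ioi xs)).toReal /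
        ((gaussianReal (θ/σ) 1 (A ∩ Set.Iic xs)).toReal
          + (gaussianReal (θ/σ) 1 (A ∩ Set.Ioi xs)).toReal)) atBot (nhds 0) := by
      have hbound : ∀ θ : ℝ, θ ≤ 0 →
          (gaussianReal (θ/σ) 1 (A ∩ Set.Ioi xs)).toReal /
            ((gaussianReal (θ/σ) 1 (A ∩ Set.Iic xs)).toReal
              + (gaussianReal (θ/σ) 1 (A ∩ Set.Ioi xs)).toReal)
          ≤ Real.exp ((θ/σ)*(ε/2)) *
            ((gaussianReal (0/σ) 1 (A ∩ Set.Ioi xs)).toReal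
              / (gaussianReal (0/σ) 1 (A ∩ Set.Iic (xs - ε/2))).toReal) := by
        intro θ hθ
        have hb0 : θ/σ ≤ 0/σ := by
          rw [div_le_div_iff₀ hσ hσ]; nlinarith
        have h1 : (gaussianReal (θ/σ) 1 (A ∩ Set.Ioi xs)).toReal
            ≤ Real.exp ((θ/σ - 0/σ)*xs + ((0/σ)^2-(θ/σ)^2)/2)
              * (gaussianReal (0/σ) 1 (A ∩ Set.Ioi xs)).toReal :=
          gauss_shift_le (0/σ) (θ/σ) xs hCmeas (fun t ht => by
            have h' : xs < t := ht.2; nlinarith)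
        have h2 : (gaussianReal (0/σ) 1 (A ∩ Set.Iic (xs - ε/2))).toReal
            ≤ Real.exp ((0/σ - θ/σ)*(xs - ε/2) + ((θ/σ)^2-(0/σ)^2)/2)
              * (gaussianReal (θ/σ) 1 (A ∩ Set.Iic (xs - ε/2))).toReal :=
          gauss_shift_le (θ/σ) (0/σ) (xs - ε/2) hB'meas (fun t ht => by
            have h' : t ≤ xs - ε/2 := ht.2; nlinarith)
        have hdle : (gaussianReal (θ/σ) 1 (A ∩ Set.Iic (xs - ε/2))).toReal
            ≤ (gaussianReal (θ/σ) 1 (A ∩ Set.Ioi xs)).toReal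
              + (gaussianReal (θ/σ) 1 (A ∩ Set.Iic xs)).toReal :=
          le_trans (hN'le θ) (by linarith [hMpos θ])
        have hb := ratio_bound (hMpos θ) (hN'pos θ) hdle
          (Real.exp_pos _) (Real.exp_pos _) hN'0pos h1 h2
        rw [add_comm ((gaussianReal (θ/σ) 1 (A ∩ Set.Iic xs)).toReal)
          ((gaussianReal (θ/σ) 1 (A ∩ Set.Ioi xs)).toReal)]
        refine le_trans hb (le_of_eq ?_)
        rw [← Real.exp_add, show ((θ/σ - 0/σ)*xs + ((0/σ)^2-(θ/σ)^2)/2)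
          + ((0/σ - θ/σ)*(xs - ε/2) + ((θ/σ)^2-(0/σ)^2)/2) = (θ/σ)*(ε/2) by ring]
      have hg : Tendsto (fun θ : ℝ => Real.exp ((θ/σ)*(ε/2)) *
          ((gaussianReal (0/σ) 1 (A ∩ Set.Ioi xs)).toReal
            / (gaussianReal (0/σ) 1 (A ∩ Set.Iic (xs - ε/2))).toReal)) atBot (nhds 0) := by
        have h1 : Tendsto (fun θ : ℝ => (θ/σ)*(ε/2)) atBot atBot := by
          apply Tendsto.atBot_mul_const (by linarith : (0:ℝ) < ε/2)
          exact tendsto_id.atBot_div_const hσ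
        have h2 := (Real.tendsto_exp_atBot.comp h1).mul_const
          ((gaussianReal (0/σ) 1 (A ∩ Set.Ioi xs)).toReal
            / (gaussianReal (0/σ) 1 (A ∩ Set.Iic (xs - ε/2))).toReal)
        rw [zero_mul] at h2
        exact h2
      refine squeeze_zero' ?_ ((eventually_le_atBot 0).mono hbound) hg
      exact Eventually.of_forall fun θ => div_nonneg ENNReal.toReal_nonneg
        (add_nonneg ENNReal.toReal_nonneg ENNReal.toReal_nonneg)
    have heq : (fun θ : ℝ => (gaussianReal (θ/σ) 1 (A ∩ Set.Iic xs)).toReal /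
        ((gaussianReal (θ/σ) 1 (A ∩ Set.Iic xs)).toReal
          + (gaussianReal (θ/σ) 1 (A ∩ Set.Ioi xs)).toReal))
        = (fun θ : ℝ => 1 - (gaussianReal (θ/σ) 1 (A ∩ Set.Ioi xs)).toReal /
        ((gaussianReal (θ/σ) 1 (A ∩ Set.Iic xs)).toReal
          + (gaussianReal (θ/σ) 1 (A ∩ Set.Ioi xs)).toReal)) := by
      funext θ
      have h1 := hNpos θ; have h2 := hMpos θ
      set nn := (gaussianReal (θ/σ) 1 (A ∩ Set.Iic xs)).toReal with hnn
      set mm := (gaussianReal (θ/σ) 1 (A ∩ Set.Ioi xs)).toReal with hmm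
      have h3 : nn + mm ≠ 0 := by linarith
      field_simp
      ring
    rw [heq]
    have h4 := (tendsto_const_nhds (x := (1:ℝ)) (f := atBot)).sub hG
    rwa [sub_zero] at h4

end TruncGaussAux

/-- **Invertibility of the conditional distribution function (Lemma A.1).**
Suppose the conditional support `𝒳ₛ(z, S)` (with `z = x - Ω_{·,s} x_s`) is a
nonempty finite union of pairwise disjoint intervals and that `x_s` lies in the
union of their interiors. Then `θ ↦ F_s(x_s ∣ z, θ, S)` is strictly decreasing
on `ℝ`, tends to `0` as `θ → +∞` and tends to `1` as `θ → -∞`. -/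
theorem Fcond_strictAnti_and_limits
    (hm : 0 < m)
    (V : Matrix (Fin m) (Fin m) ℝ) (hV : V.PosDef)
    (xbar : Finset (Fin m) → ℝ) (hxpos : ∀ B, 0 < xbar B)
    (hxmono : ∀ B C : Finset (Fin m), B ⊆ C → xbar B ≤ xbar C)
    (S : Finset (Fin m)) (s : Fin m) (hs : s ∈ S)
    (x : Fin m → ℝ) (z : Fin m → ℝ)
    (hz : ∀ h, z h = x h - corrMat V h s * x s)
    (hne : (condSupport xbar V z S s).Nonempty)
    -- the finitely many pairwise disjoint intervals comprising `𝒳ₛ(z, S)`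
    (n : ℕ) (I : Fin n → Set ℝ)
    (hI : ∀ k, (I k).OrdConnected)
    (hdisj : Pairwise fun k k' => Disjoint (I k) (I k'))
    (hcover : condSupport xbar V z S s = ⋃ k, I k)
    -- `x_s` lies in the union of the interiors of these intervals
    (hx : x s ∈ ⋃ k, interior (I k)) :
    StrictAnti (fun θs => Fcond xbar V S s z θs (x s)) ∧
    Tendsto (fun θs => Fcond xbar V S s z θs (x s)) atTop (nhds 0) ∧
    Tendsto (fun θs => Fcond xbar V S s z θs (x s)) atBot (nhds 1) := by
  have hVss : 0 < V s s := by
    have h1 : (Pi.single s 1 : Fin m → ℝ) ≠ 0 := fun h => by simpa using congrFun h s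
    exact hV.diag_pos
  have hσ : 0 < Real.sqrt (V s s) := Real.sqrt_pos.2 hVss
  have hAmeas : MeasurableSet (condSupport xbar V z S s) := by
    rw [hcover]; exact MeasurableSet.iUnion fun k => (hI k).measurableSet
  obtain ⟨k₀, hk₀⟩ := Set.mem_iUnion.1 hx
  obtain ⟨ε, hε, hball⟩ := Metric.isOpen_iff.1 isOpen_interior (x s) hk₀
  have hIoo2 : Set.Ioo (x s - ε) (x s + ε) ⊆ condSupport xbar V z S s := by
    rw [hcover]
    intro t ht
    refine Set.mem_iUnion.2 ⟨k₀, interior_subset (hball ?_)⟩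
    rwa [Real.ball_eq_Ioo]
  have hFeq : ∀ θ : ℝ, Fcond xbar V S s z θ (x s)
      = (gaussianReal (θ / Real.sqrt (V s s)) 1
          (condSupport xbar V z S s ∩ Set.Iic (x s))).toReal /
        ((gaussianReal (θ / Real.sqrt (V s s)) 1
          (condSupport xbar V z S s ∩ Set.Iic (x s))).toReal
          + (gaussianReal (θ / Real.sqrt (V s s)) 1
              (condSupport xbar V z S s ∩ Set.Ioi (x s))).toReal) := by
    intro θ
    have hset1 : {ξ : ℝ | ξ + θ / Real.sqrt (V s s) ≤ x s ∧
        (ξ + θ / Real.sqrt (V s s)) ∈ condSupport xbar V z S s}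
        = {ξ : ℝ | ξ + θ / Real.sqrt (V s s)
            ∈ condSupport xbar V z S s ∩ Set.Iic (x s)} := by
      ext ξ; exact ⟨fun h => ⟨h.2, h.1⟩, fun h => ⟨h.2, h.1⟩⟩
    have hsplit : gaussianReal (θ / Real.sqrt (V s s)) 1 (condSupport xbar V z S s)
        = gaussianReal (θ / Real.sqrt (V s s)) 1
            (condSupport xbar V z S s ∩ Set.Iic (x s))
          + gaussianReal (θ / Real.sqrt (V s s)) 1
            (condSupport xbar V z S s ∩ Set.Ioi (x s)) := by
      rw [← measure_union (Set.disjoint_left.2 fun t htB htC =>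
        absurd htC.2 (not_lt.2 (show t ≤ x s from htB.2))) (hAmeas.inter measurableSet_Ioi)]
      congr 1
      rw [← Set.inter_union_distrib_left, Set.Iic_union_Ioi, Set.inter_univ]
    simp only [Fcond]
    rw [hset1, gauss_translate _ (hAmeas.inter measurableSet_Iic),
      gauss_translate _ hAmeas, hsplit,
      ENNReal.toReal_add (measure_ne_top _ _) (measure_ne_top _ _)]
  have hmain := truncGauss_main (Real.sqrt (V s s)) (x s) ε hσ hε hAmeas hIoo2
  have hFun : (fun θs => Fcond xbar V S s z θs (x s))
      = (fun θ : ℝ => (gaussianReal (θ / Real.sqrt (V s s)) 1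
          (condSupport xbar V z S s ∩ Set.Iic (x s))).toReal /
        ((gaussianReal (θ / Real.sqrt (V s s)) 1
          (condSupport xbar V z S s ∩ Set.Iic (x s))).toReal
          + (gaussianReal (θ / Real.sqrt (V s s)) 1
              (condSupport xbar V z S s ∩ Set.Ioi (x s))).toReal)) := funext hFeq
  rw [hFun]
  exact hmain
end

section
/- Let σ > 0 and let −∞ ≤ l_1 < u_1 < l_2 < u_2 < … < l_K < u_K ≤ ∞ be boundaries of K ≥ 1 disjoint intervals, and let T = ∪_{k=1}^K [l_k, u_k]. For μ ∈ ℝ, let F(x; μ, σ) denote the cumulative distribution function of a random variable X ~ N(μ, σ²) conditioned on the event X ∈ T. Then for every fixed x ∈ ∪_{k=1}^K (l_k, u_k): (1) the map μ ↦ F(x; μ, σ) is strictly decreasing on ℝ; and (2) F(x; μ, σ) → 0 as μ → +∞ and F(x; μ, σ) → 1 as μ → −∞. -/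
open MeasureTheory ProbabilityTheory Filter
open Real Set
open scoped NNReal ENNReal

namespace TruncGauss


lemma gauss_shift (μ μ' : ℝ) (v : ℝ≥0) (hv : 0 < (v : ℝ)) (t : ℝ) :
    gaussianPDFReal μ' v t =
      gaussianPDFReal μ v t * Real.exp ((2 * t - μ - μ') * (μ' - μ) / (2 * v)) := by
  unfold gaussianPDFReal
  rw [mul_assoc ((√(2 * π * (v:ℝ)))⁻¹), ← Real.exp_add]
  congr 1
  field_simp
  ring

lemma gauss_le (μ x : ℝ) (v : ℝ≥0) (hv : 0 < (v : ℝ)) (t : ℝ) :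
    gaussianPDFReal μ v t ≤ gaussianPDFReal μ v x * Real.exp ((t - x) * (μ - x) / v) := by
  unfold gaussianPDFReal
  rw [mul_assoc ((√(2 * π * (v:ℝ)))⁻¹), ← Real.exp_add]
  apply mul_le_mul_of_nonneg_left _ (by positivity)
  apply Real.exp_le_exp.mpr
  rw [div_add_div _ _ (by positivity) hv.ne', div_le_div_iff₀ (by positivity) (by positivity)]
  nlinarith [sq_nonneg (t - x), sq_nonneg ((v:ℝ))]

lemma gauss_mono (μ s t : ℝ) (v : ℝ≥0) (hv : 0 < (v : ℝ)) (h : (t - μ)^2 ≤ (s - μ)^2) :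
    gaussianPDFReal μ v s ≤ gaussianPDFReal μ v t := by
  unfold gaussianPDFReal
  apply mul_le_mul_of_nonneg_left _ (by positivity)
  apply Real.exp_le_exp.mpr
  exact (div_le_div_iff_of_pos_right (by positivity)).mpr (by linarith)

lemma meas_toReal (μ : ℝ) {v : ℝ≥0} (hv : v ≠ 0) (s : Set ℝ) :
    ((gaussianReal μ v) s).toReal = ∫ t in s, gaussianPDFReal μ v t := by
  rw [gaussianReal_apply_eq_integral μ hv s,
    ENNReal.toReal_ofReal (integral_nonneg fun t => gaussianPDFReal_nonneg μ v t)]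

lemma setint_pos (μ : ℝ) {v : ℝ≥0} (hv : v ≠ 0) {s : Set ℝ} (hs : MeasurableSet s)
    (h : 0 < volume s) : 0 < ∫ t in s, gaussianPDFReal μ v t := by
  rw [setIntegral_pos_iff_support_of_nonneg_ae
    (ae_of_all _ fun t => gaussianPDFReal_nonneg μ v t)
    (integrable_gaussianPDFReal μ v).integrableOn]
  have : Function.support (gaussianPDFReal μ v) = Set.univ :=
    Set.eq_univ_of_forall fun t => (gaussianPDFReal_pos μ v t hv).ne'
  rwa [this, Set.univ_inter]

lemma int_exp_Iic {β : ℝ} (hβ : 1 ≤ β) (x : ℝ) :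
    IntegrableOn (fun t => Real.exp (β * (t - x))) (Set.Iic x) ∧
      ∫ t in Set.Iic x, Real.exp (β * (t - x)) = 1 / β := by
  have hβ0 : 0 < β := lt_of_lt_of_le one_pos hβ
  have h1 : IntegrableOn (fun t => Real.exp (t - x)) (Set.Iic x) := by
    have := (integrableOn_exp_Iic x).mul_const (Real.exp (-x))
    apply IntegrableOn.congr_fun this ?_ measurableSet_Iic
    intro t _
    show Real.exp t * Real.exp (-x) = Real.exp (t - x)
    rw [← Real.exp_add]
    ring_nf
  have hint : IntegrableOn (fun t => Real.exp (β * (t - x))) (Set.Iic x) := by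
    apply h1.mono' (Continuous.aestronglyMeasurable (by continuity))
    filter_upwards [ae_restrict_mem measurableSet_Iic] with t ht
    rw [Real.norm_eq_abs, Real.abs_exp]
    apply Real.exp_le_exp.mpr
    nlinarith [mem_Iic.mp ht]
  refine ⟨hint, ?_⟩
  have hderiv : ∀ t ∈ Set.Iic x,
      HasDerivAt (fun t => Real.exp (β * (t - x)) / β) (Real.exp (β * (t - x))) t := by
    intro t _
    have h := (((hasDerivAt_id t).sub_const x).const_mul β).exp.div_const β
    exact h.congr_deriv (by simp only [id]; field_simp)
  have htend : Tendsto (fun t => Real.exp (β * (t - x)) / β) atBot (nhds 0) := by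
    have h2 : Tendsto (fun t : ℝ => β * (t - x)) atBot atBot := by
      apply Tendsto.const_mul_atBot hβ0
      exact tendsto_atBot_add_const_right _ (-x) tendsto_id
    have := (Real.tendsto_exp_atBot.comp h2).div_const β
    simpa using this
  have := integral_Iic_of_hasDerivAt_of_tendsto' hderiv hint htend
  rw [this]
  simp

lemma int_exp_Ioi {γ : ℝ} (hγ : 0 < γ) (x : ℝ) :
    IntegrableOn (fun t => Real.exp (-γ * (t - x))) (Set.Ioi x) ∧
      ∫ t in Set.Ioi x, Real.exp (-γ * (t - x)) = 1 / γ := by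
  have hint : IntegrableOn (fun t => Real.exp (-γ * (t - x))) (Set.Ioi x) := by
    have := (exp_neg_integrableOn_Ioi x hγ).const_mul (Real.exp (γ * x))
    apply IntegrableOn.congr_fun this ?_ measurableSet_Ioi
    intro t _
    show Real.exp (γ * x) * Real.exp (-γ * t) = Real.exp (-γ * (t - x))
    rw [← Real.exp_add]
    ring_nf
  refine ⟨hint, ?_⟩
  have hderiv : ∀ t ∈ Set.Ici x,
      HasDerivAt (fun t => -Real.exp (-γ * (t - x)) / γ) (Real.exp (-γ * (t - x))) t := by
    intro t _
    have h := ((((hasDerivAt_id t).sub_const x).const_mul (-γ)).exp.neg.div_const γ)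
    exact h.congr_deriv (by simp only [id]; field_simp)
  have htend : Tendsto (fun t => -Real.exp (-γ * (t - x)) / γ) atTop (nhds 0) := by
    have h2 : Tendsto (fun t : ℝ => -γ * (t - x)) atTop atBot := by
      apply Tendsto.const_mul_atTop_of_neg (by linarith)
      exact tendsto_atTop_add_const_right _ (-x) tendsto_id
    have := ((Real.tendsto_exp_atBot.comp h2).neg).div_const γ
    simpa using this
  have := integral_Ioi_of_hasDerivAt_of_tendsto' hderiv hint htend
  rw [this]
  rw [sub_self, mul_zero, Real.exp_zero, zero_sub, neg_div, neg_neg, one_div]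

end TruncGauss

set_option maxHeartbeats 1600000 in
/-- **Truncated Gaussian CDF (Lemma A.2 of Kivaranovic–Leeb).** Let `σ > 0` and
let `-∞ ≤ l₁ < u₁ < l₂ < u₂ < … < l_K < u_K ≤ ∞` (in the extended reals) bound
`K ≥ 1` disjoint intervals with union `T`, and let `F(x; μ, σ)` be the CDF of a
`N(μ, σ²)` random variable conditioned on lying in `T`. Then, for every fixed
`x` in the union of the corresponding open intervals, `μ ↦ F(x; μ, σ)` is
strictly decreasing on `ℝ`, tends to `0` as `μ → +∞`, and tends to `1` as
`μ → -∞`. -/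
theorem truncated_gaussian_cdf_strictAnti_and_limits
    (σ : ℝ) (hσ : 0 < σ)
    (K : ℕ) (hK : 1 ≤ K)
    (l u : Fin K → EReal)
    (hlu : ∀ k, l k < u k)
    (hsep : ∀ k k' : Fin K, (k : ℕ) + 1 = (k' : ℕ) → u k < l k')
    (T : Set ℝ)
    (hT : T = ⋃ k, {y : ℝ | l k ≤ (y : EReal) ∧ (y : EReal) ≤ u k})
    (F : ℝ → ℝ → ℝ)
    (hF : ∀ μ x, F μ x =
      ((gaussianReal μ (Real.toNNReal (σ ^ 2))) (T ∩ Set.Iic x)).toReal /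
        ((gaussianReal μ (Real.toNNReal (σ ^ 2))) T).toReal)
    (x : ℝ) (hx : x ∈ ⋃ k, {y : ℝ | l k < (y : EReal) ∧ (y : EReal) < u k}) :
    StrictAnti (fun μ => F μ x) ∧
    Tendsto (fun μ => F μ x) atTop (nhds 0) ∧
    Tendsto (fun μ => F μ x) atBot (nhds 1) := by
  classical
  set v : ℝ≥0 := Real.toNNReal (σ ^ 2) with hvdef
  have hvr : (v : ℝ) = σ ^ 2 := Real.coe_toNNReal _ (by positivity)
  have hvpos : 0 < (v : ℝ) := by rw [hvr]; positivity
  have hv0 : v ≠ 0 := by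
    intro h
    rw [h] at hvpos
    simp at hvpos
  obtain ⟨k, hk1, hk2⟩ : ∃ k, l k < (x : EReal) ∧ (x : EReal) < u k := by
    simpa using hx
  obtain ⟨c, hc1, hc2⟩ := EReal.lt_iff_exists_real_btwn.mp hk1
  obtain ⟨d, hd1, hd2⟩ := EReal.lt_iff_exists_real_btwn.mp hk2
  have hcx : c < x := by exact_mod_cast hc2
  have hxd : x < d := by exact_mod_cast hd1
  have hTmeas : MeasurableSet T := by
    rw [hT]
    refine MeasurableSet.iUnion fun j => ?_
    exact measurable_coe_real_ereal (measurableSet_Icc (a := l j) (b := u j))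
  set A : Set ℝ := T ∩ Set.Iic x with hAdef
  set B : Set ℝ := T \ Set.Iic x with hBdef
  have hAmeas : MeasurableSet A := hTmeas.inter measurableSet_Iic
  have hBmeas : MeasurableSet B := hTmeas.diff measurableSet_Iic
  have hIccA : Set.Icc c x ⊆ A := by
    rintro y ⟨h1, h2⟩
    refine ⟨?_, h2⟩
    rw [hT]
    refine Set.mem_iUnion.mpr ⟨k, ?_, ?_⟩
    · exact le_of_lt (lt_of_lt_of_le hc1 (by exact_mod_cast h1))
    · exact le_of_lt (lt_of_le_of_lt (by exact_mod_cast h2) hk2)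
  have hIocB : Set.Ioc x d ⊆ B := by
    rintro y ⟨h1, h2⟩
    refine ⟨?_, by simpa using h1⟩
    rw [hT]
    refine Set.mem_iUnion.mpr ⟨k, ?_, ?_⟩
    · exact le_of_lt (lt_trans hk1 (by exact_mod_cast h1))
    · exact le_of_lt (lt_of_le_of_lt (by exact_mod_cast h2) hd2)
  set g : ℝ → ℝ → ℝ := fun μ t => gaussianPDFReal μ v t with hgdef
  set a : ℝ → ℝ := fun μ => ∫ t in A, g μ t with hadef
  set b : ℝ → ℝ := fun μ => ∫ t in B, g μ t with hbdef
  have hgint : ∀ (μ : ℝ) (s : Set ℝ), IntegrableOn (g μ) s :=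
    fun μ s => (integrable_gaussianPDFReal μ v).integrableOn
  have hgnonneg : ∀ μ t, 0 ≤ g μ t := fun μ t => gaussianPDFReal_nonneg μ v t
  have hgpos : ∀ μ t, 0 < g μ t := fun μ t => gaussianPDFReal_pos μ v t hv0
  have ha_pos : ∀ μ, 0 < a μ := by
    intro μ
    have h1 : 0 < ∫ t in Set.Icc c x, g μ t :=
      TruncGauss.setint_pos μ hv0 measurableSet_Icc
        (by rw [Real.volume_Icc]; exact ENNReal.ofReal_pos.mpr (by linarith))
    exact lt_of_lt_of_le h1 (setIntegral_mono_set (hgint μ A)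
      (ae_of_all _ fun t => hgnonneg μ t) (HasSubset.Subset.eventuallyLE hIccA))
  have hb_pos : ∀ μ, 0 < b μ := by
    intro μ
    have h1 : 0 < ∫ t in Set.Ioc x d, g μ t :=
      TruncGauss.setint_pos μ hv0 measurableSet_Ioc
        (by rw [Real.volume_Ioc]; exact ENNReal.ofReal_pos.mpr (by linarith))
    exact lt_of_lt_of_le h1 (setIntegral_mono_set (hgint μ B)
      (ae_of_all _ fun t => hgnonneg μ t) (HasSubset.Subset.eventuallyLE hIocB))
  have hab : ∀ μ, F μ x = a μ / (a μ + b μ) := by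
    intro μ
    rw [hF]
    congr 1
    · exact TruncGauss.meas_toReal μ hv0 A
    · have hsum := measure_inter_add_diff (μ := gaussianReal μ v) T
        (measurableSet_Iic (a := x))
      rw [← hsum, ENNReal.toReal_add (measure_ne_top _ _) (measure_ne_top _ _),
        TruncGauss.meas_toReal μ hv0 A, TruncGauss.meas_toReal μ hv0 B]
  -- Strict antitonicity
  have hanti : StrictAnti (fun μ => F μ x) := by
    intro μ μ' hlt
    show F μ' x < F μ x
    rw [hab, hab]
    set φ : ℝ → ℝ := fun t => Real.exp ((2 * t - μ - μ') * (μ' - μ) / (2 * v)) with hφdef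
    have hgg : ∀ t, g μ' t = g μ t * φ t := fun t => TruncGauss.gauss_shift μ μ' v hvpos t
    have hφpos : ∀ t, 0 < φ t := fun t => Real.exp_pos _
    have hφmono : ∀ s t : ℝ, s ≤ t → φ s ≤ φ t := by
      intro s t hst
      apply Real.exp_le_exp.mpr
      apply (div_le_div_iff_of_pos_right (by positivity)).mpr
      nlinarith
    have hφlt : ∀ s t : ℝ, s < t → φ s < φ t := by
      intro s t hst
      apply Real.exp_lt_exp.mpr
      apply (div_lt_div_iff_of_pos_right (by positivity)).mpr
      nlinarith
    have hfun : (fun t => g μ t * φ t) = g μ' := by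
      funext t; rw [hgg]
    have hA1 : a μ' ≤ φ x * a μ := by
      have e1 : a μ' = ∫ t in A, g μ t * φ t := by
        simp only [hadef]
        congr 1
        exact hfun.symm
      have e2 : ∫ t in A, g μ t * φ x = φ x * a μ := by
        rw [integral_mul_const]
        simp only [hadef]
        ring
      rw [e1, ← e2]
      refine setIntegral_mono_on (by rw [hfun]; exact hgint μ' A)
        ((hgint μ A).mul_const (φ x)) hAmeas fun t ht => ?_
      exact mul_le_mul_of_nonneg_left (hφmono t x ht.2) (hgnonneg μ t)
    have hB1 : φ x * b μ < b μ' := by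
      have hfun2 : (fun t => g μ t * (φ t - φ x)) = fun t => g μ' t - g μ t * φ x := by
        funext t; rw [hgg]; ring
      have hdiffint : IntegrableOn (fun t => g μ t * (φ t - φ x)) B := by
        rw [hfun2]
        exact (hgint μ' B).sub ((hgint μ B).mul_const (φ x))
      have e3 : b μ' - φ x * b μ = ∫ t in B, g μ t * (φ t - φ x) := by
        rw [hfun2, integral_sub (hgint μ' B) ((hgint μ B).mul_const (φ x)),
          integral_mul_const]
        simp only [hbdef]
        ring
      have e4 : 0 < ∫ t in B, g μ t * (φ t - φ x) := by
        rw [setIntegral_pos_iff_support_of_nonneg_ae ?_ hdiffint]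
        · have hsub : Set.Ioc x d ⊆
              (Function.support fun t => g μ t * (φ t - φ x)) ∩ B := fun t ht =>
            ⟨(mul_pos (hgpos μ t) (sub_pos.mpr (hφlt x t ht.1))).ne', hIocB ht⟩
          calc (0 : ℝ≥0∞) < volume (Set.Ioc x d) := by
                rw [Real.volume_Ioc]; exact ENNReal.ofReal_pos.mpr (by linarith)
            _ ≤ _ := measure_mono hsub
        · filter_upwards [ae_restrict_mem hBmeas] with t ht
          have hxt : x < t := lt_of_not_ge ht.2
          exact mul_nonneg (hgnonneg μ t) (sub_nonneg.mpr (hφmono x t hxt.le))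
      linarith [e3 ▸ e4]
    have h1 : a μ' * b μ < a μ * b μ' := by
      calc a μ' * b μ ≤ (φ x * a μ) * b μ := mul_le_mul_of_nonneg_right hA1 (hb_pos μ).le
        _ = a μ * (φ x * b μ) := by ring
        _ < a μ * b μ' := mul_lt_mul_of_pos_left hB1 (ha_pos μ)
    rw [div_lt_div_iff₀ (add_pos (ha_pos μ') (hb_pos μ')) (add_pos (ha_pos μ) (hb_pos μ))]
    nlinarith
  refine ⟨hanti, ?_, ?_⟩
  -- Limit at +∞
  · have hbound : ∀ μ : ℝ, max d (x + (v : ℝ)) ≤ μ →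
        F μ x ≤ ((v : ℝ) / (d - x)) * (μ - x)⁻¹ := by
      intro μ hμ
      have hdμ : d ≤ μ := le_trans (le_max_left _ _) hμ
      have hxμ : x + (v : ℝ) ≤ μ := le_trans (le_max_right _ _) hμ
      have hxμ' : x < μ := by linarith
      set β : ℝ := (μ - x) / v with hβdef
      have hβ1 : 1 ≤ β := (le_div_iff₀ hvpos).mpr (by linarith)
      have hβpos : 0 < β := by linarith
      obtain ⟨hint, hval⟩ := TruncGauss.int_exp_Iic hβ1 x
      have hgx : 0 < g μ x := hgpos μ x
      have hba : a μ ≤ g μ x * (1 / β) := by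
        calc a μ ≤ ∫ t in Set.Iic x, g μ t :=
              setIntegral_mono_set (hgint μ _) (ae_of_all _ fun t => hgnonneg μ t)
                (HasSubset.Subset.eventuallyLE Set.inter_subset_right)
          _ ≤ ∫ t in Set.Iic x, g μ x * Real.exp (β * (t - x)) := by
              refine setIntegral_mono_on (hgint μ _) (hint.const_mul (g μ x))
                measurableSet_Iic fun t ht => ?_
              have heq : (t - x) * (μ - x) / v = β * (t - x) := by
                rw [hβdef]; ring
              calc g μ t ≤ g μ x * Real.exp ((t - x) * (μ - x) / v) :=
                    TruncGauss.gauss_le μ x v hvpos t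
                _ = g μ x * Real.exp (β * (t - x)) := by rw [heq]
          _ = g μ x * (1 / β) := by rw [integral_const_mul, hval]
      have hbb : (d - x) * g μ x ≤ b μ := by
        calc (d - x) * g μ x = ∫ t in Set.Ioc x d, g μ x := by
              rw [setIntegral_const, Real.volume_real_Ioc_of_le (by linarith), smul_eq_mul]
          _ ≤ ∫ t in Set.Ioc x d, g μ t := by
              refine setIntegral_mono_on
                (integrableOn_const (by rw [Real.volume_Ioc]; exact ENNReal.ofReal_ne_top))
                (hgint μ _) measurableSet_Ioc fun t ht => ?_
              exact TruncGauss.gauss_mono μ x t v hvpos (by nlinarith [ht.1, ht.2])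
          _ ≤ b μ := setIntegral_mono_set (hgint μ B)
                (ae_of_all _ fun t => hgnonneg μ t) (HasSubset.Subset.eventuallyLE hIocB)
      rw [hab]
      have hstep1 : a μ / (a μ + b μ) ≤ a μ / b μ := by
        rw [div_le_div_iff₀ (add_pos (ha_pos μ) (hb_pos μ)) (hb_pos μ)]
        nlinarith [ha_pos μ, hb_pos μ]
      have hstep2 : a μ / b μ ≤ (g μ x * (1 / β)) / ((d - x) * g μ x) :=
        div_le_div₀ (mul_nonneg hgx.le (one_div_nonneg.mpr hβpos.le)) hba
          (mul_pos (by linarith) hgx) hbb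
      have hstep3 : (g μ x * (1 / β)) / ((d - x) * g μ x) = ((v : ℝ) / (d - x)) * (μ - x)⁻¹ := by
        have h1 : g μ x ≠ 0 := hgx.ne'
        have h2 : d - x ≠ 0 := by intro h; rw [sub_eq_zero] at h; linarith
        have h3 : μ - x ≠ 0 := by intro h; rw [sub_eq_zero] at h; linarith
        have h4 : (v : ℝ) ≠ 0 := hvpos.ne'
        rw [hβdef]
        field_simp
      linarith [hstep1, hstep2, hstep3 ▸ hstep2]
    have hlim : Tendsto (fun μ : ℝ => ((v : ℝ) / (d - x)) * (μ - x)⁻¹) atTop (nhds 0) := by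
      have h1 : Tendsto (fun μ : ℝ => (μ - x)⁻¹) atTop (nhds 0) := by
        have := tendsto_inv_atTop_zero.comp
          (tendsto_atTop_add_const_right atTop (-x) (tendsto_id (α := ℝ)))
        simpa [Function.comp_def, sub_eq_add_neg] using this
      have := h1.const_mul ((v : ℝ) / (d - x))
      simpa using this
    refine tendsto_of_tendsto_of_tendsto_of_le_of_le' tendsto_const_nhds hlim ?_ ?_
    · filter_upwards with μ
      rw [hab]
      exact div_nonneg (ha_pos μ).le (by linarith [ha_pos μ, hb_pos μ])
    · filter_upwards [eventually_ge_atTop (max d (x + (v : ℝ)))] with μ hμ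
      exact hbound μ hμ
  -- Limit at -∞
  · have hbound : ∀ μ : ℝ, μ ≤ c →
        b μ / (a μ + b μ) ≤ ((v : ℝ) / (x - c)) * (x - μ)⁻¹ := by
      intro μ hμ
      have hμx : μ < x := lt_of_le_of_lt hμ hcx
      set γ : ℝ := (x - μ) / v with hγdef
      have hγpos : 0 < γ := div_pos (by linarith) hvpos
      obtain ⟨hint, hval⟩ := TruncGauss.int_exp_Ioi hγpos x
      have hgx : 0 < g μ x := hgpos μ x
      have hbb : b μ ≤ g μ x * (1 / γ) := by
        have hBIoi : B ⊆ Set.Ioi x := fun t ht => (lt_of_not_ge ht.2 : x < t)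
        calc b μ ≤ ∫ t in Set.Ioi x, g μ t :=
              setIntegral_mono_set (hgint μ _) (ae_of_all _ fun t => hgnonneg μ t)
                (HasSubset.Subset.eventuallyLE hBIoi)
          _ ≤ ∫ t in Set.Ioi x, g μ x * Real.exp (-γ * (t - x)) := by
              refine setIntegral_mono_on (hgint μ _) (hint.const_mul (g μ x))
                measurableSet_Ioi fun t ht => ?_
              have heq : (t - x) * (μ - x) / v = -γ * (t - x) := by
                rw [hγdef]; ring
              calc g μ t ≤ g μ x * Real.exp ((t - x) * (μ - x) / v) :=
                    TruncGauss.gauss_le μ x v hvpos t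
                _ = g μ x * Real.exp (-γ * (t - x)) := by rw [heq]
          _ = g μ x * (1 / γ) := by rw [integral_const_mul, hval]
      have hba : (x - c) * g μ x ≤ a μ := by
        calc (x - c) * g μ x = ∫ t in Set.Icc c x, g μ x := by
              rw [setIntegral_const, Real.volume_real_Icc_of_le (by linarith), smul_eq_mul]
          _ ≤ ∫ t in Set.Icc c x, g μ t := by
              refine setIntegral_mono_on
                (integrableOn_const (by rw [Real.volume_Icc]; exact ENNReal.ofReal_ne_top))
                (hgint μ _) measurableSet_Icc fun t ht => ?_
              exact TruncGauss.gauss_mono μ x t v hvpos (by nlinarith [ht.1, ht.2])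
          _ ≤ a μ := setIntegral_mono_set (hgint μ A)
                (ae_of_all _ fun t => hgnonneg μ t) (HasSubset.Subset.eventuallyLE hIccA)
      have hstep1 : b μ / (a μ + b μ) ≤ b μ / a μ := by
        rw [div_le_div_iff₀ (add_pos (ha_pos μ) (hb_pos μ)) (ha_pos μ)]
        nlinarith [ha_pos μ, hb_pos μ]
      have hstep2 : b μ / a μ ≤ (g μ x * (1 / γ)) / ((x - c) * g μ x) :=
        div_le_div₀ (mul_nonneg hgx.le (one_div_nonneg.mpr hγpos.le)) hbb
          (mul_pos (by linarith) hgx) hba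
      have hstep3 : (g μ x * (1 / γ)) / ((x - c) * g μ x) = ((v : ℝ) / (x - c)) * (x - μ)⁻¹ := by
        have h1 : g μ x ≠ 0 := hgx.ne'
        have h2 : x - c ≠ 0 := by intro h; rw [sub_eq_zero] at h; linarith
        have h3 : x - μ ≠ 0 := by intro h; rw [sub_eq_zero] at h; linarith
        have h4 : (v : ℝ) ≠ 0 := hvpos.ne'
        rw [hγdef]
        field_simp
      linarith [hstep1, hstep2, hstep3 ▸ hstep2]
    have hlim : Tendsto (fun μ : ℝ => ((v : ℝ) / (x - c)) * (x - μ)⁻¹) atBot (nhds 0) := by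
      have h0 : Tendsto (fun μ : ℝ => x - μ) atBot atTop := by
        have := tendsto_atTop_add_const_right atBot x (tendsto_neg_atBot_atTop)
        simpa [sub_eq_neg_add] using this
      have h1 : Tendsto (fun μ : ℝ => (x - μ)⁻¹) atBot (nhds 0) :=
        tendsto_inv_atTop_zero.comp h0
      have := h1.const_mul ((v : ℝ) / (x - c))
      simpa using this
    have hQ : Tendsto (fun μ => b μ / (a μ + b μ)) atBot (nhds 0) := by
      refine tendsto_of_tendsto_of_tendsto_of_le_of_le' tendsto_const_nhds hlim ?_ ?_
      · filter_upwards with μ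
        exact div_nonneg (hb_pos μ).le (by linarith [ha_pos μ, hb_pos μ])
      · filter_upwards [eventually_le_atBot c] with μ hμ
        exact hbound μ hμ
    have h1 : Tendsto (fun μ => 1 - b μ / (a μ + b μ)) atBot (nhds 1) := by
      have := tendsto_const_nhds (α := ℝ) (x := (1:ℝ)) (f := atBot (α := ℝ)) |>.sub hQ
      simpa using this
    refine h1.congr fun μ => ?_
    rw [hab]
    have hne : a μ + b μ ≠ 0 := (add_pos (ha_pos μ) (hb_pos μ)).ne'
    field_simp
    ring
end
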